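/- arXiv:2512.05285 — 9 statements merged into one kernel-verified Lean document; each statement's English description precedes it below -/
import Mathlib

section
/- Let F be a nonempty closed subset of ℝⁿ. The squared distance function x ↦ dist(x, F)² is differentiable with locally Lipschitz gradient (i.e. C^{1,1}_loc) if and only if F is convex. -/
set_option linter.unusedSectionVars false
set_option maxHeartbeats 1000000

open Metric InnerProductSpace Set Filter
open scoped RealInnerProductSpace Topology

section SqDistAux

variable {E : Type*} [NormedAddCommGroup E] [InnerProductSpace ℝ E] {F : Set E}

lemma sqd_le_of_mem {q : E} (hq : q ∈ F) (x : E) :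
    Metric.infDist x F ^ 2 ≤ ‖x - q‖ ^ 2 := by
  have h := Metric.infDist_le_dist_of_mem (x := x) hq
  rw [dist_eq_norm] at h
  exact pow_le_pow_left₀ Metric.infDist_nonneg h 2

lemma proj_inner_le (hF : Convex ℝ F) {x p : E} (hp : p ∈ F)
    (hd : Metric.infDist x F = dist x p) {y : E} (hy : y ∈ F) :
    ⟪x - p, y - p⟫_ℝ ≤ 0 := by
  by_contra hpos
  push_neg at hpos
  have hb : (0:ℝ) < ‖y - p‖ ^ 2 := by
    rcases eq_or_ne y p with rfl | hne
    · simp at hpos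
    · have h0 : y - p ≠ 0 := sub_ne_zero.2 hne
      have := norm_pos_iff.2 h0
      positivity
  set c : ℝ := ⟪x - p, y - p⟫_ℝ with hc
  set t : ℝ := min 1 (c / ‖y - p‖ ^ 2) with ht
  have ht0 : 0 < t := lt_min one_pos (div_pos hpos hb)
  have ht1 : t ≤ 1 := min_le_left _ _
  have hyt : p + t • (y - p) ∈ F := by
    have := hF hp hy (by linarith : (0:ℝ) ≤ 1 - t) ht0.le (by ring)
    convert this using 1
    module
  have hle : Metric.infDist x F ^ 2 ≤ ‖x - (p + t • (y - p))‖ ^ 2 := sqd_le_of_mem hyt x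
  have hexp : ‖x - (p + t • (y - p))‖ ^ 2
      = ‖x - p‖ ^ 2 - 2 * t * c + t ^ 2 * ‖y - p‖ ^ 2 := by
    have h' : x - (p + t • (y - p)) = (x - p) - t • (y - p) := by module
    rw [h', norm_sub_sq_real, real_inner_smul_right, norm_smul]
    simp [abs_of_nonneg ht0.le]
    ring
  have hdx : Metric.infDist x F ^ 2 = ‖x - p‖ ^ 2 := by rw [hd, dist_eq_norm]
  have hkey : 2 * c ≤ t * ‖y - p‖ ^ 2 := by nlinarith
  have htc : t * ‖y - p‖ ^ 2 ≤ c := by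
    have h' : t ≤ c / ‖y - p‖ ^ 2 := min_le_right _ _
    calc t * ‖y - p‖ ^ 2 ≤ (c / ‖y - p‖ ^ 2) * ‖y - p‖ ^ 2 := by nlinarith
    _ = c := div_mul_cancel₀ c hb.ne'
  nlinarith

lemma convex_forward [CompleteSpace E] [ProperSpace E]
    (hF : Convex ℝ F) (hne : F.Nonempty) (hcl : IsClosed F) :
    Differentiable ℝ (fun x : E => Metric.infDist x F ^ 2) ∧
      ∀ K : Set E, IsCompact K →
        ∃ L : NNReal, LipschitzOnWith L (gradient (fun x => Metric.infDist x F ^ 2)) K := by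
  choose P hPF hPd using fun x : E => hcl.exists_infDist_eq_dist hne x
  have hfx : ∀ x : E, Metric.infDist x F ^ 2 = ‖x - P x‖ ^ 2 := by
    intro x; rw [hPd x, dist_eq_norm]
  have hvar : ∀ x : E, ∀ y ∈ F, ⟪x - P x, y - P x⟫_ℝ ≤ 0 :=
    fun x y hy => proj_inner_le hF (hPF x) (hPd x) hy
  -- firm nonexpansiveness
  have hfirm : ∀ a b : E, ‖P a - P b‖ ^ 2 ≤ ⟪P a - P b, a - b⟫_ℝ := by
    intro a b
    have h1 := hvar a (P b) (hPF b)
    have h2 := hvar b (P a) (hPF a)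
    have c1 : ⟪P a - P b, a - b⟫_ℝ
        = ⟪P a - P b, a - P a⟫_ℝ - ⟪P a - P b, b - P b⟫_ℝ + ‖P a - P b‖ ^ 2 := by
      rw [show a - b = ((a - P a) - (b - P b)) + (P a - P b) from by module,
        inner_add_right, inner_sub_right, real_inner_self_eq_norm_sq]
    have c2 : ⟪P a - P b, a - P a⟫_ℝ = - ⟪a - P a, P b - P a⟫_ℝ := by
      rw [real_inner_comm]
      rw [show P b - P a = -(P a - P b) from by module, inner_neg_right, neg_neg]
    have c3 : ⟪P a - P b, b - P b⟫_ℝ = ⟪b - P b, P a - P b⟫_ℝ := real_inner_comm _ _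
    linarith
  have hexp : ∀ a b : E, ⟪P a - P b, a - b⟫_ℝ ≤ ‖a - b‖ ^ 2 := by
    intro a b
    have h1 := hfirm a b
    have hcs := real_inner_le_norm (P a - P b) (a - b)
    have hn : ‖P a - P b‖ ≤ ‖a - b‖ := by nlinarith [norm_nonneg (P a - P b), norm_nonneg (a - b)]
    nlinarith [norm_nonneg (P a - P b)]
  -- two-sided quadratic bound
  have htwo : ∀ x y : E, |Metric.infDist y F ^ 2 - Metric.infDist x F ^ 2
      - ⟪(2:ℝ) • (x - P x), y - x⟫_ℝ| ≤ ‖y - x‖ ^ 2 := by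
    intro x y
    have h1 : Metric.infDist y F ^ 2
        ≤ Metric.infDist x F ^ 2 + 2 * ⟪x - P x, y - x⟫_ℝ + ‖y - x‖ ^ 2 := by
      have hu := sqd_le_of_mem (hPF x) y
      have he : ‖y - P x‖ ^ 2 = ‖x - P x‖ ^ 2 + 2 * ⟪x - P x, y - x⟫_ℝ + ‖y - x‖ ^ 2 := by
        rw [show y - P x = (x - P x) + (y - x) from by module, norm_add_sq_real]
      rw [hfx x]; nlinarith
    have h2 : Metric.infDist x F ^ 2
        ≤ Metric.infDist y F ^ 2 + 2 * ⟪y - P y, x - y⟫_ℝ + ‖x - y‖ ^ 2 := by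
      have hu := sqd_le_of_mem (hPF y) x
      have he : ‖x - P y‖ ^ 2 = ‖y - P y‖ ^ 2 + 2 * ⟪y - P y, x - y⟫_ℝ + ‖x - y‖ ^ 2 := by
        rw [show x - P y = (y - P y) + (x - y) from by module, norm_add_sq_real]
      rw [hfx y]; nlinarith
    have h4 : ⟪y - P y, x - y⟫_ℝ
        = - (⟪x - P x, y - x⟫_ℝ + ‖y - x‖ ^ 2 - ⟪P y - P x, y - x⟫_ℝ) := by
      rw [show x - y = -(y - x) from by module, inner_neg_right]
      rw [show y - P y = ((x - P x) + (y - x)) - (P y - P x) from by module,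
        inner_sub_left, inner_add_left, real_inner_self_eq_norm_sq]
    have h3 : ⟪P y - P x, y - x⟫_ℝ ≤ ‖y - x‖ ^ 2 := hexp y x
    have hsm : ⟪(2:ℝ) • (x - P x), y - x⟫_ℝ = 2 * ⟪x - P x, y - x⟫_ℝ :=
      real_inner_smul_left _ _ _
    have hnrev : ‖x - y‖ = ‖y - x‖ := norm_sub_rev _ _
    rw [hnrev] at h2
    rw [hsm, abs_le]
    constructor <;> nlinarith
  have hgrad : ∀ x : E, HasGradientAt (fun x => Metric.infDist x F ^ 2)
      ((2:ℝ) • (x - P x)) x := by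
    intro x
    rw [hasGradientAt_iff_isLittleO, Asymptotics.isLittleO_iff]
    intro c hc
    filter_upwards [Metric.ball_mem_nhds x hc] with y hy
    rw [mem_ball, dist_eq_norm] at hy
    have := htwo x y
    rw [Real.norm_eq_abs]
    calc |Metric.infDist y F ^ 2 - Metric.infDist x F ^ 2
        - ⟪(2:ℝ) • (x - P x), y - x⟫_ℝ| ≤ ‖y - x‖ ^ 2 := this
      _ = ‖y - x‖ * ‖y - x‖ := by ring
      _ ≤ c * ‖y - x‖ := by nlinarith [norm_nonneg (y - x)]
  refine ⟨fun x => (hgrad x).differentiableAt, fun K _ => ⟨2, ?_⟩⟩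
  have hg : ∀ x : E, gradient (fun x => Metric.infDist x F ^ 2) x = (2:ℝ) • (x - P x) :=
    fun x => (hgrad x).gradient
  have hl : LipschitzWith 2 (gradient (fun x : E => Metric.infDist x F ^ 2)) := by
    apply LipschitzWith.of_dist_le_mul
    intro a b
    rw [hg a, hg b, dist_eq_norm, dist_eq_norm]
    have hd : (2:ℝ) • (a - P a) - (2:ℝ) • (b - P b) = (2:ℝ) • ((a - b) - (P a - P b)) := by
      module
    rw [hd, norm_smul]
    have he : ‖(a - b) - (P a - P b)‖ ^ 2
        = ‖a - b‖ ^ 2 - 2 * ⟪a - b, P a - P b⟫_ℝ + ‖P a - P b‖ ^ 2 :=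
      norm_sub_sq_real _ _
    have h1 := hfirm a b
    have hcomm : ⟪a - b, P a - P b⟫_ℝ = ⟪P a - P b, a - b⟫_ℝ := real_inner_comm _ _
    have hip : (0:ℝ) ≤ ⟪P a - P b, a - b⟫_ℝ := le_trans (by positivity) h1
    have hn : ‖(a - b) - (P a - P b)‖ ≤ ‖a - b‖ := by
      nlinarith [norm_nonneg ((a - b) - (P a - P b)), norm_nonneg (a - b),
        norm_nonneg (P a - P b)]
    have : ‖(2:ℝ)‖ = 2 := by simp
    rw [this]
    have : ((2:NNReal):ℝ) = 2 := by simp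
    rw [this]
    linarith
  exact hl.lipschitzOnWith


/-- At a point of differentiability, any nearest point equals `x - (1/2) ∇f x`. -/
lemma nearest_eq [CompleteSpace E] {x : E}
    (hdiff : DifferentiableAt ℝ (fun x : E => Metric.infDist x F ^ 2) x) {q : E}
    (hq : q ∈ F) (hd : Metric.infDist x F = dist x q) :
    q = x - (2⁻¹:ℝ) • gradient (fun x : E => Metric.infDist x F ^ 2) x := by
  set g := gradient (fun x : E => Metric.infDist x F ^ 2) x with hgdef
  have hg : HasGradientAt (fun x : E => Metric.infDist x F ^ 2) g x := hdiff.hasGradientAt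
  have hlo := hasGradientAt_iff_isLittleO.1 hg
  have hkey : ∀ e : E, ⟪g - (2:ℝ) • (x - q), e⟫_ℝ ≤ 0 := by
    intro e
    by_contra hpos
    push_neg at hpos
    set c : ℝ := ⟪g - (2:ℝ) • (x - q), e⟫_ℝ with hc
    have hc' : (0:ℝ) < c / (4 * (‖e‖ + 1)) := by positivity
    have hev := Asymptotics.isLittleO_iff.1 hlo hc'
    obtain ⟨δ, hδ, hprop⟩ := Metric.eventually_nhds_iff.1 hev
    set t : ℝ := min (δ / (2 * (‖e‖ + 1))) (c / (4 * (‖e‖ ^ 2 + 1))) with htdef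
    have ht0 : 0 < t := lt_min (by positivity) (by positivity)
    set y := x + t • e with hydef
    have hyx : y - x = t • e := by rw [hydef]; module
    have hdy : dist y x < δ := by
      rw [dist_eq_norm, hyx, norm_smul, Real.norm_eq_abs, abs_of_nonneg ht0.le]
      have h1 : t ≤ δ / (2 * (‖e‖ + 1)) := min_le_left _ _
      have h2 : ‖e‖ ≥ 0 := norm_nonneg _
      calc t * ‖e‖ ≤ (δ / (2 * (‖e‖ + 1))) * ‖e‖ := by nlinarith
        _ < δ := by rw [div_mul_eq_mul_div, div_lt_iff₀ (by positivity)]; nlinarith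
    have hsmall := hprop hdy
    rw [hyx, norm_smul, Real.norm_eq_abs t, abs_of_nonneg ht0.le] at hsmall
    -- upper bound for f y
    have hup : Metric.infDist y F ^ 2 ≤ ‖x - q‖ ^ 2 + 2 * t * ⟪x - q, e⟫_ℝ + t ^ 2 * ‖e‖ ^ 2 := by
      have h := sqd_le_of_mem hq y
      have he : ‖y - q‖ ^ 2 = ‖x - q‖ ^ 2 + 2 * t * ⟪x - q, e⟫_ℝ + t ^ 2 * ‖e‖ ^ 2 := by
        rw [show y - q = (x - q) + t • e from by rw [hydef]; module, norm_add_sq_real,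
          real_inner_smul_right, norm_smul, Real.norm_eq_abs, abs_of_nonneg ht0.le]
        ring
      linarith
    have hfx : Metric.infDist x F ^ 2 = ‖x - q‖ ^ 2 := by rw [hd, dist_eq_norm]
    have hig : ⟪g, t • e⟫_ℝ = t * ⟪g, e⟫_ℝ := real_inner_smul_right _ _ _
    have hexpand : c = ⟪g, e⟫_ℝ - 2 * ⟪x - q, e⟫_ℝ := by
      rw [hc, inner_sub_left, real_inner_smul_left]
    have habs : Metric.infDist y F ^ 2 - Metric.infDist x F ^ 2 - ⟪g, t • e⟫_ℝ
        ≥ -(c / (4 * (‖e‖ + 1)) * (t * ‖e‖)) := by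
      rw [Real.norm_eq_abs] at hsmall
      have h := abs_le.1 hsmall
      linarith [h.1]
    -- combine
    have hcomb : t * ⟪g, e⟫_ℝ ≤ c / (4 * (‖e‖ + 1)) * (t * ‖e‖)
        + 2 * t * ⟪x - q, e⟫_ℝ + t ^ 2 * ‖e‖ ^ 2 := by
      linarith [habs, hup, hfx, hig]
    have hfinal : ⟪g, e⟫_ℝ - 2 * ⟪x - q, e⟫_ℝ - (c / (4 * (‖e‖ + 1))) * ‖e‖ - t * ‖e‖ ^ 2 ≤ 0 := by
      by_contra hcon
      push_neg at hcon
      have hmul := mul_pos ht0 hcon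
      nlinarith [hcomb]
    have hb1 : c / (4 * (‖e‖ + 1)) * ‖e‖ ≤ c / 4 := by
      rw [div_mul_eq_mul_div, div_le_div_iff₀ (by positivity) (by norm_num)]
      nlinarith [norm_nonneg e, hpos]
    have hb2 : t * ‖e‖ ^ 2 ≤ c / 4 := by
      have h1 : t ≤ c / (4 * (‖e‖ ^ 2 + 1)) := min_le_right _ _
      have h2 : (0:ℝ) ≤ ‖e‖ ^ 2 := by positivity
      calc t * ‖e‖ ^ 2 ≤ (c / (4 * (‖e‖ ^ 2 + 1))) * ‖e‖ ^ 2 := by nlinarith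
        _ ≤ c / 4 := by
            rw [div_mul_eq_mul_div, div_le_div_iff₀ (by positivity) (by norm_num)]
            nlinarith
    have : c ≤ c / 4 + c / 4 := by linarith [hfinal, hb1, hb2, hexpand]
    linarith
  have hv := hkey (g - (2:ℝ) • (x - q))
  rw [real_inner_self_eq_norm_sq] at hv
  have hzero : g - (2:ℝ) • (x - q) = 0 := by
    have := sq_nonneg ‖g - (2:ℝ) • (x - q)‖
    have hn : ‖g - (2:ℝ) • (x - q)‖ = 0 := by nlinarith [norm_nonneg (g - (2:ℝ) • (x - q))]
    exact norm_eq_zero.1 hn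
  have hgq : g = (2:ℝ) • (x - q) := sub_eq_zero.1 hzero
  rw [hgq]
  module


/-- Descent lemma: lower quadratic bound from a Lipschitz gradient on a ball. -/
lemma descent [CompleteSpace E] {z : E} {L : NNReal}
    (hdiff : Differentiable ℝ (fun x : E => Metric.infDist x F ^ 2))
    (hL : LipschitzOnWith L (gradient (fun x : E => Metric.infDist x F ^ 2))
      (Metric.closedBall z 1)) :
    ∀ m ∈ Metric.closedBall z 1,
      Metric.infDist z F ^ 2 + ⟪gradient (fun x : E => Metric.infDist x F ^ 2) z, m - z⟫_ℝ
        - (L:ℝ) * ‖m - z‖ ^ 2 ≤ Metric.infDist m F ^ 2 := by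
  intro m hm
  set f : E → ℝ := fun x : E => Metric.infDist x F ^ 2 with hfdef
  set g := gradient f with hgdef
  set s : ℝ := ‖m - z‖ with hsdef
  have hs0 : 0 ≤ s := norm_nonneg _
  have hs1 : s ≤ 1 := by rw [hsdef, ← dist_eq_norm]; exact mem_closedBall.1 hm
  set B : Set E := Metric.closedBall z s with hBdef
  have hBsub : B ⊆ Metric.closedBall z 1 := closedBall_subset_closedBall hs1
  set e : E → ℝ := fun y => f y - (InnerProductSpace.toDual ℝ E (g z)) y with hedef
  have hder : ∀ y ∈ B, HasFDerivWithinAt e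
      ((InnerProductSpace.toDual ℝ E (g y)) - (InnerProductSpace.toDual ℝ E (g z))) B y := by
    intro y _
    have h1 : HasFDerivAt f (InnerProductSpace.toDual ℝ E (g y)) y :=
      ((hdiff y).hasGradientAt).hasFDerivAt
    have h2 : HasFDerivAt (fun w : E => (InnerProductSpace.toDual ℝ E (g z)) w)
        (InnerProductSpace.toDual ℝ E (g z)) y :=
      (InnerProductSpace.toDual ℝ E (g z)).hasFDerivAt
    exact (h1.sub h2).hasFDerivWithinAt
  have hbound : ∀ y ∈ B,
      ‖(InnerProductSpace.toDual ℝ E (g y)) - (InnerProductSpace.toDual ℝ E (g z))‖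
        ≤ (L:ℝ) * s := by
    intro y hy
    rw [← map_sub, (InnerProductSpace.toDual ℝ E).norm_map]
    have hdist := hL.dist_le_mul y (hBsub hy) z (Metric.mem_closedBall_self zero_le_one)
    rw [dist_eq_norm] at hdist
    have : dist y z ≤ s := mem_closedBall.1 hy
    calc ‖g y - g z‖ ≤ (L:ℝ) * dist y z := hdist
      _ ≤ (L:ℝ) * s := by nlinarith [NNReal.coe_nonneg L]
  have hzB : z ∈ B := Metric.mem_closedBall_self hs0
  have hmB : m ∈ B := by rw [hBdef, Metric.mem_closedBall, dist_eq_norm]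
  have hmain := (convex_closedBall z s).norm_image_sub_le_of_norm_hasFDerivWithin_le
    hder hbound hzB hmB
  have he : e m - e z = f m - f z - ⟪g z, m - z⟫_ℝ := by
    simp only [hedef, InnerProductSpace.toDual_apply_apply, inner_sub_right]
    ring
  rw [Real.norm_eq_abs] at hmain
  have h1 := (abs_le.1 hmain).1
  rw [he] at h1
  have : (L:ℝ) * s * ‖m - z‖ = (L:ℝ) * ‖m - z‖ ^ 2 := by rw [hsdef]; ring
  rw [this] at h1
  simp only [hfdef] at h1 ⊢
  linarith


/-- The sun extension step. -/
lemma ext_step [CompleteSpace E] (hcl : IsClosed F) (hFne : F.Nonempty)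
    (hdiff : Differentiable ℝ (fun x : E => Metric.infDist x F ^ 2))
    {P : E → E}
    (hgd : ∀ x : E, gradient (fun x : E => Metric.infDist x F ^ 2) x = (2:ℝ) • (x - P x))
    (hPF : ∀ x, P x ∈ F) (hPd : ∀ x, Metric.infDist x F = dist x (P x))
    {z : E} {L : NNReal}
    (hL : LipschitzOnWith L (gradient (fun x : E => Metric.infDist x F ^ 2))
      (Metric.closedBall z 1))
    (hz : z ∉ F) :
    ∃ ε > 0, ∀ h : ℝ, 0 < h → h ≤ ε → P (z + h • (z - P z)) = P z := by
  set G : E → E := gradient (fun x : E => Metric.infDist x F ^ 2) with hGdef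
  set p := P z with hpdef
  set w : E := z - p with hwdef
  have hd0 : 0 < Metric.infDist z F := (hcl.notMem_iff_infDist_pos hFne).1 hz
  set d : ℝ := Metric.infDist z F with hddef
  have hwd : ‖w‖ = d := by rw [hwdef, hddef, hPd z, dist_eq_norm]
  set Lr : ℝ := (L:ℝ) + 1 with hLrdef
  have hLr1 : 1 ≤ Lr := by rw [hLrdef]; have := NNReal.coe_nonneg L; linarith
  have hLr0 : 0 < Lr := by linarith
  have hLco : (L:ℝ) ≤ Lr := by simp [hLrdef]
  refine ⟨min (1/(2*Lr)) (1/((‖w‖+1)*(2*Lr))), lt_min (by positivity) (by positivity), ?_⟩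
  intro h h0 hε
  have hε1 : h ≤ 1/(2*Lr) := le_trans hε (min_le_left _ _)
  have hε2 : h ≤ 1/((‖w‖+1)*(2*Lr)) := le_trans hε (min_le_right _ _)
  set zh := z + h • w with hzhdef
  set q := P zh with hqdef
  set v : E := q - p with hvdef
  -- a priori bound on ‖v‖
  have hzhz : ‖zh - z‖ = h * ‖w‖ := by
    rw [hzhdef, show z + h • w - z = h • w from by module, norm_smul, Real.norm_eq_abs,
      abs_of_nonneg h0.le]
  have hwn : (0:ℝ) ≤ ‖w‖ := norm_nonneg _
  have hhw : h * ‖w‖ ≤ 1/(2*Lr) := by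
    calc h * ‖w‖ ≤ (1/((‖w‖+1)*(2*Lr))) * ‖w‖ := by nlinarith
      _ ≤ 1/(2*Lr) := by
          rw [div_mul_eq_mul_div, div_le_div_iff₀ (by positivity) (by positivity)]
          nlinarith
  have hhw1 : h * ‖w‖ ≤ 1 := by
    have : 1/(2*Lr) ≤ 1 := by rw [div_le_one (by positivity)]; linarith
    linarith
  have hzhB : zh ∈ Metric.closedBall z 1 := by
    rw [Metric.mem_closedBall, dist_eq_norm, hzhz]; exact hhw1
  have hglip : ‖G zh - G z‖ ≤ (L:ℝ) * (h * ‖w‖) := by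
    have hdist := hL.dist_le_mul zh hzhB z (Metric.mem_closedBall_self zero_le_one)
    rw [dist_eq_norm, dist_eq_norm, hzhz] at hdist
    exact hdist
  have hPform : ∀ a : E, P a = a - (2⁻¹:ℝ) • G a := by
    intro a
    rw [hgd a]
    module
  have hvsplit : v = (zh - z) - (2⁻¹:ℝ) • (G zh - G z) := by
    rw [hvdef, hqdef, hpdef, hPform zh, hPform z]
    module
  have hvbound : ‖v‖ ≤ Lr * (h * ‖w‖) := by
    rw [hvsplit]
    calc ‖(zh - z) - (2⁻¹:ℝ) • (G zh - G z)‖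
        ≤ ‖zh - z‖ + ‖(2⁻¹:ℝ) • (G zh - G z)‖ := norm_sub_le _ _
      _ = h * ‖w‖ + 2⁻¹ * ‖G zh - G z‖ := by
          rw [hzhz, norm_smul, Real.norm_eq_abs]; norm_num
      _ ≤ h * ‖w‖ + 2⁻¹ * ((L:ℝ) * (h * ‖w‖)) := by linarith
      _ ≤ Lr * (h * ‖w‖) := by nlinarith [NNReal.coe_nonneg L, mul_nonneg h0.le hwn]
  have hv1 : ‖v‖ ≤ 2⁻¹ := by
    have : Lr * (h * ‖w‖) ≤ Lr * (1/(2*Lr)) := by nlinarith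
    have h2 : Lr * (1/(2*Lr)) = 2⁻¹ := by field_simp
    exact le_trans hvbound (le_trans this (le_of_eq h2))
  -- suppose q ≠ p
  by_contra hne
  have hvne : v ≠ 0 := by
    rw [hvdef, sub_ne_zero]
    exact fun hc => hne (by rw [hqdef, hpdef] at hc ⊢; exact hc)
  have hv0 : 0 < ‖v‖ := norm_pos_iff.2 hvne
  -- step (i)
  have hi : 2 * (1+h) * ⟪w, v⟫_ℝ ≥ ‖v‖^2 := by
    have hle : ‖zh - q‖ ≤ ‖zh - p‖ := by
      rw [← dist_eq_norm, ← dist_eq_norm, ← hPd zh]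
      exact Metric.infDist_le_dist_of_mem (hPF z)
    have hq1 : zh - q = (1+h) • w - v := by rw [hzhdef, hvdef, hwdef]; module
    have hq2 : zh - p = (1+h) • w := by rw [hzhdef, hwdef]; module
    have e1 : ‖(1+h) • w - v‖^2 = (1+h)^2 * ‖w‖^2 - 2*(1+h)*⟪w, v⟫_ℝ + ‖v‖^2 := by
      rw [norm_sub_sq_real, real_inner_smul_left, norm_smul, Real.norm_eq_abs,
        abs_of_nonneg (by linarith : (0:ℝ) ≤ 1+h)]
      ring
    have e2 : ‖(1+h) • w‖^2 = (1+h)^2 * ‖w‖^2 := by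
      rw [norm_smul, Real.norm_eq_abs, abs_of_nonneg (by linarith : (0:ℝ) ≤ 1+h)]
      ring
    have hsq : ‖zh - q‖^2 ≤ ‖zh - p‖^2 :=
      pow_le_pow_left₀ (norm_nonneg _) hle 2
    rw [hq1, hq2, e1, e2] at hsq
    linarith
  -- step (ii)
  have hii : ‖z - q‖^2 ≤ d^2 + h * ‖v‖^2 := by
    have hzq : z - q = w - v := by rw [hwdef, hvdef]; module
    have e2 : ‖w - v‖^2 = ‖w‖^2 - 2*⟪w, v⟫_ℝ + ‖v‖^2 := norm_sub_sq_real _ _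
    have hwd2 : ‖w‖^2 = d^2 := by rw [hwd]
    rw [hzq, e2]
    nlinarith [hi, hv0, h0, hwd2, sq_nonneg ‖v‖, mul_pos h0 h0]
  -- the test point m
  set m : E := z + Lr⁻¹ • v with hmdef
  have hmz : m - z = Lr⁻¹ • v := by rw [hmdef]; module
  have hmnorm : ‖m - z‖ = Lr⁻¹ * ‖v‖ := by
    rw [hmz, norm_smul, Real.norm_eq_abs, abs_of_nonneg (by positivity)]
  have hmB : m ∈ Metric.closedBall z 1 := by
    rw [Metric.mem_closedBall, dist_eq_norm, hmnorm]
    have hinv : Lr⁻¹ ≤ 1 := by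
      rw [inv_le_one_iff₀]; right; linarith
    nlinarith [hv1, hv0]
  -- descent lower bound
  have hlow := descent hdiff hL m hmB
  rw [← hGdef] at hlow
  have hgz : G z = (2:ℝ) • w := by
    rw [hgd z, hwdef, hpdef]
  have hinner1 : ⟪G z, m - z⟫_ℝ = 2 * Lr⁻¹ * ⟪w, v⟫_ℝ := by
    rw [hgz, hmz, real_inner_smul_left, real_inner_smul_right]
    ring
  -- upper bound
  have hup : Metric.infDist m F ^ 2
      ≤ ‖z - q‖^2 + 2 * Lr⁻¹ * (⟪w, v⟫_ℝ - ‖v‖^2) + Lr⁻¹^2 * ‖v‖^2 := by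
    have h1 := sqd_le_of_mem (hPF zh) m
    have hmq : m - q = (z - q) + Lr⁻¹ • v := by rw [hmdef]; module
    have e4 : ‖(z - q) + Lr⁻¹ • v‖^2
        = ‖z - q‖^2 + 2 * Lr⁻¹ * ⟪z - q, v⟫_ℝ + Lr⁻¹^2 * ‖v‖^2 := by
      rw [norm_add_sq_real, real_inner_smul_right, norm_smul, Real.norm_eq_abs,
        abs_of_nonneg (by positivity : (0:ℝ) ≤ Lr⁻¹)]
      ring
    have e5 : ⟪z - q, v⟫_ℝ = ⟪w, v⟫_ℝ - ‖v‖^2 := by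
      rw [show z - q = w - v from by rw [hwdef, hvdef]; module, inner_sub_left,
        real_inner_self_eq_norm_sq]
    rw [hmq, e4, e5] at h1
    exact h1
  -- combine
  have hfz : Metric.infDist z F ^ 2 = d^2 := by rw [hddef]
  rw [hinner1, hmnorm] at hlow
  have hLr2 : (L:ℝ) * (Lr⁻¹ * ‖v‖)^2 + Lr⁻¹^2 * ‖v‖^2 ≤ Lr⁻¹ * ‖v‖^2 := by
    have : (L:ℝ) * (Lr⁻¹ * ‖v‖)^2 + Lr⁻¹^2 * ‖v‖^2 = ((L:ℝ) + 1) * Lr⁻¹^2 * ‖v‖^2 := by ring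
    rw [this, ← hLrdef]
    have hLinv : Lr * Lr⁻¹ = 1 := mul_inv_cancel₀ (ne_of_gt hLr0)
    nlinarith [sq_nonneg ‖v‖]
  -- 2 Lr⁻¹ ‖v‖² ≤ h ‖v‖² + Lr⁻¹ ‖v‖²
  have hkey : Lr⁻¹ * ‖v‖^2 ≤ h * ‖v‖^2 := by linarith [hlow, hup, hii, hfz, hLr2]
  have hfin : Lr⁻¹ ≤ h := by
    have hv2 : 0 < ‖v‖^2 := by positivity
    nlinarith [hkey]
  have hcontra : Lr * Lr⁻¹ ≤ Lr * (1/(2*Lr)) :=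
    mul_le_mul_of_nonneg_left (le_trans hfin hε1) hLr0.le
  rw [mul_inv_cancel₀ (ne_of_gt hLr0)] at hcontra
  have h2' : Lr * (1/(2*Lr)) = 2⁻¹ := by field_simp
  rw [h2'] at hcontra
  norm_num at hcontra


lemma convex_of_smooth [CompleteSpace E] [ProperSpace E] (hne : F.Nonempty) (hcl : IsClosed F)
    (hdiff : Differentiable ℝ (fun x : E => Metric.infDist x F ^ 2))
    (hlip : ∀ K : Set E, IsCompact K →
      ∃ L : NNReal, LipschitzOnWith L (gradient (fun x : E => Metric.infDist x F ^ 2)) K) :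
    Convex ℝ F := by
  set P : E → E := fun x => x - (2⁻¹:ℝ) • gradient (fun x : E => Metric.infDist x F ^ 2) x
    with hPdef
  have hPx : ∀ x : E, P x ∈ F ∧ Metric.infDist x F = dist x (P x) := by
    intro x
    obtain ⟨p, hpF, hpd⟩ := hcl.exists_infDist_eq_dist hne x
    have heq := nearest_eq (hdiff x) hpF hpd
    have hPeq : P x = p := heq.symm
    rw [hPeq]
    exact ⟨hpF, hpd⟩
  have hPF : ∀ x, P x ∈ F := fun x => (hPx x).1
  have hPd : ∀ x, Metric.infDist x F = dist x (P x) := fun x => (hPx x).2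
  have hU : ∀ x q : E, q ∈ F → Metric.infDist x F = dist x q → q = P x :=
    fun x q hq hd => nearest_eq (hdiff x) hq hd
  have hgd : ∀ x : E, gradient (fun x : E => Metric.infDist x F ^ 2) x = (2:ℝ) • (x - P x) := by
    intro x
    have : P x = x - (2⁻¹:ℝ) • gradient (fun x : E => Metric.infDist x F ^ 2) x := rfl
    rw [this]
    module
  -- continuity of the projection
  have hcontg : Continuous (gradient (fun x : E => Metric.infDist x F ^ 2)) := by
    rw [continuous_iff_continuousAt]
    intro x
    obtain ⟨L, hL⟩ := hlip (Metric.closedBall x 1) (isCompact_closedBall x 1)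
    exact hL.continuousOn.continuousAt (Metric.closedBall_mem_nhds x one_pos)
  have hcontP : Continuous P := continuous_id.sub (hcontg.const_smul _)
  -- segment property
  have hseg : ∀ x : E, ∀ t : ℝ, t ∈ Icc (0:ℝ) 1 → P (P x + t • (x - P x)) = P x := by
    intro x t ⟨ht0, ht1⟩
    have hyPx : (P x + t • (x - P x)) - P x = t • (x - P x) := by module
    have e1 : dist (P x + t • (x - P x)) (P x) = t * ‖x - P x‖ := by
      rw [dist_eq_norm, hyPx, norm_smul, Real.norm_eq_abs, abs_of_nonneg ht0]
    have hxy : dist x (P x + t • (x - P x)) = (1 - t) * ‖x - P x‖ := by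
      rw [dist_eq_norm, show x - (P x + t • (x - P x)) = (1-t) • (x - P x) from by module,
        norm_smul, Real.norm_eq_abs, abs_of_nonneg (by linarith : (0:ℝ) ≤ 1 - t)]
    have hdx : Metric.infDist x F = ‖x - P x‖ := by rw [hPd x, dist_eq_norm]
    have hge : t * ‖x - P x‖ ≤ Metric.infDist (P x + t • (x - P x)) F := by
      have htri := Metric.infDist_le_infDist_add_dist
        (x := x) (y := P x + t • (x - P x)) (s := F)
      rw [hxy, hdx] at htri
      linarith
    have hle : Metric.infDist (P x + t • (x - P x)) F ≤ dist (P x + t • (x - P x)) (P x) :=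
      Metric.infDist_le_dist_of_mem (hPF x)
    have heq : Metric.infDist (P x + t • (x - P x)) F = dist (P x + t • (x - P x)) (P x) :=
      le_antisymm hle (by rw [e1]; exact hge)
    exact (hU _ (P x) (hPF x) heq).symm
  -- sun property
  have hsun : ∀ x : E, ∀ t : ℝ, 0 ≤ t → P (P x + t • (x - P x)) = P x := by
    intro x t ht0
    rcases le_or_gt t 1 with h1 | h1
    · exact hseg x t ⟨ht0, h1⟩
    by_cases hxF : x ∈ F
    · have hPxx : P x = x :=
        (hU x x hxF (by rw [Metric.infDist_zero_of_mem hxF, dist_self])).symm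
      rw [hPxx, show x + t • (x - x) = x from by module, hPxx]
    · have hw0 : 0 < ‖x - P x‖ := by
        have hpos := (hcl.notMem_iff_infDist_pos hne).1 hxF
        rw [hPd x, dist_eq_norm] at hpos
        exact hpos
      set r : ℝ → E := fun s => P x + s • (x - P x) with hr
      set A : Set ℝ := {s | s ∈ Icc (1:ℝ) t ∧ P (r s) = P x} with hA
      have hr1 : r 1 = x := by rw [hr]; show P x + (1:ℝ) • (x - P x) = x; module
      have h1A : (1:ℝ) ∈ A := by
        refine ⟨⟨le_refl 1, h1.le⟩, ?_⟩
        rw [hr1]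
      have hAclosed : IsClosed A := by
        have : A = Icc (1:ℝ) t ∩ (fun s => P (r s)) ⁻¹' {P x} := by
          ext s
          simp [hA, Set.mem_setOf_eq]
        rw [this]
        refine isClosed_Icc.inter (IsClosed.preimage ?_ isClosed_singleton)
        exact hcontP.comp (continuous_const.add (continuous_id.smul continuous_const))
      have hbdd : BddAbove A := BddAbove.mono (fun s hs => hs.1) bddAbove_Icc
      have hmem := hAclosed.csSup_mem ⟨1, h1A⟩ hbdd
      set s₀ : ℝ := sSup A with hs₀def
      obtain ⟨⟨hs₀1, hs₀t⟩, hs₀P⟩ := hmem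
      rcases eq_or_lt_of_le hs₀t with heq | hlt
      · rw [← heq]
        exact hs₀P
      · exfalso
        set z : E := r s₀ with hzdef
        have hzP : P z = P x := hs₀P
        have hzF : z ∉ F := by
          rw [hcl.notMem_iff_infDist_pos hne, hPd z, hzP, dist_eq_norm]
          rw [hzdef, hr, show P x + s₀ • (x - P x) - P x = s₀ • (x - P x) from by module,
            norm_smul, Real.norm_eq_abs, abs_of_nonneg (by linarith : (0:ℝ) ≤ s₀)]
          positivity
        obtain ⟨L, hL⟩ := hlip (Metric.closedBall z 1) (isCompact_closedBall z 1)
        obtain ⟨ε, hε0, hext⟩ := ext_step hcl hne hdiff hgd hPF hPd hL hzF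
        have hs₀pos : (0:ℝ) < s₀ := by linarith
        set h : ℝ := min ε ((t - s₀)/s₀) with hhdef
        have hh0 : 0 < h := lt_min hε0 (div_pos (by linarith) hs₀pos)
        have hkey := hext h hh0 (min_le_left _ _)
        have hray : z + h • (z - P z) = r (s₀ + h * s₀) := by
          rw [hzP, hzdef, hr]
          simp only
          module
        rw [hray, hzP] at hkey
        have hs₁A : s₀ + h * s₀ ∈ A := by
          refine ⟨⟨by nlinarith, ?_⟩, hkey⟩
          have : h ≤ (t - s₀)/s₀ := min_le_right _ _
          have h2 : h * s₀ ≤ t - s₀ := by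
            have := (le_div_iff₀ hs₀pos).1 this
            linarith
          linarith
        have : s₀ + h * s₀ ≤ s₀ := le_csSup hbdd hs₁A
        nlinarith
  -- convexity from the sun property
  intro a ha b hb α β hα hβ hαβ
  by_contra hc
  set c : E := α • a + β • b with hcdef
  have hhalf : ∀ y ∈ F, ⟪c - P c, y - P c⟫_ℝ ≤ 0 := by
    intro y hy
    by_contra hpos
    push_neg at hpos
    set lam : ℝ := (‖y - P c‖^2 + 1)/(2 * ⟪c - P c, y - P c⟫_ℝ) with hlamdef
    have hlam0 : 0 < lam := div_pos (by positivity) (by linarith)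
    have hP1 := hsun c lam hlam0.le
    have hinf : Metric.infDist (P c + lam • (c - P c)) F
        = dist (P c + lam • (c - P c)) (P c) := by
      rw [hPd (P c + lam • (c - P c)), hP1]
    have hdist : dist (P c + lam • (c - P c)) (P c) = lam * ‖c - P c‖ := by
      rw [dist_eq_norm, show P c + lam • (c - P c) - P c = lam • (c - P c) from by module,
        norm_smul, Real.norm_eq_abs, abs_of_nonneg hlam0.le]
    have hup := sqd_le_of_mem hy (P c + lam • (c - P c))
    have hexp : ‖P c + lam • (c - P c) - y‖^2
        = lam^2 * ‖c - P c‖^2 - 2 * lam * ⟪c - P c, y - P c⟫_ℝ + ‖y - P c‖^2 := by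
      rw [show P c + lam • (c - P c) - y = lam • (c - P c) - (y - P c) from by module,
        norm_sub_sq_real, real_inner_smul_left, norm_smul, Real.norm_eq_abs,
        abs_of_nonneg hlam0.le]
      ring
    rw [hinf, hdist] at hup
    rw [hexp] at hup
    have hmul : 2 * lam * ⟪c - P c, y - P c⟫_ℝ = ‖y - P c‖^2 + 1 := by
      have hne0 : ⟪c - P c, y - P c⟫_ℝ ≠ 0 := ne_of_gt hpos
      rw [hlamdef]
      field_simp
    nlinarith [hup, hmul]
  have h1 := hhalf a ha
  have h2 := hhalf b hb
  have hc1 : α • (a - P c) + β • (b - P c) = c - (α + β) • (P c) := by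
    rw [hcdef]; module
  rw [hαβ, one_smul] at hc1
  have hinner : ⟪c - P c, c - P c⟫_ℝ ≤ 0 := by
    rw [show c - P c = α • (a - P c) + β • (b - P c) from hc1.symm]
    nth_rewrite 2 [hc1]
    rw [inner_add_left, real_inner_smul_left, real_inner_smul_left]
    nlinarith [mul_nonneg hα (neg_nonneg.mpr h1), mul_nonneg hβ (neg_nonneg.mpr h2),
      real_inner_comm (a - P c) (c - P c), real_inner_comm (b - P c) (c - P c)]
  rw [real_inner_self_eq_norm_sq] at hinner
  have hw : c - P c = 0 := by
    have := sq_nonneg ‖c - P c‖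
    have hn : ‖c - P c‖ = 0 := by nlinarith [norm_nonneg (c - P c)]
    exact norm_eq_zero.1 hn
  have : c = P c := by
    have := sub_eq_zero.1 hw
    exact this
  exact hc (this ▸ hPF c)


end SqDistAux


/-- For a nonempty closed set `F ⊆ ℝⁿ`, the squared distance function
`x ↦ dist(x, F)²` is differentiable with locally Lipschitz gradient if and only if `F`
is convex. -/
theorem sqDist_C1_1_iff_convex (n : ℕ) (F : Set (EuclideanSpace ℝ (Fin n)))
    (hne : F.Nonempty) (hcl : IsClosed F) :
    (Differentiable ℝ (fun x => Metric.infDist x F ^ 2) ∧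
      ∀ K : Set (EuclideanSpace ℝ (Fin n)), IsCompact K →
        ∃ L : NNReal, LipschitzOnWith L (gradient (fun x => Metric.infDist x F ^ 2)) K) ↔
    Convex ℝ F := by
  constructor
  · rintro ⟨hdiff, hlip⟩
    exact convex_of_smooth hne hcl hdiff hlip
  · intro hconv
    exact convex_forward hconv hne hcl
end

section
/- Let f : ℝⁿ → ℝ be a nonnegative differentiable function with locally Lipschitz gradient and inf f = 0, satisfying ‖∇f(x)‖² ≥ f(x) for all x ∈ ℝⁿ. Let y : [0,∞) → ℝⁿ be a solution of y'(t) = −∇f(y(t)) with y(0) = y₀. Then the total length of the trajectory satisfies ∫₀^∞ ‖y'(t)‖ dt ≤ 2·√(f(y₀)). -/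
open MeasureTheory Set Filter

private lemma aux_ineq (u v c : ℝ) (hu : 0 ≤ u) (hv : 0 < v) (hc : 0 ≤ c)
    (hcu : c ≤ u ^ 2) : u ≤ u ^ 2 / Real.sqrt (c + v ^ 2) + v / 2 := by
  set t := Real.sqrt (u ^ 2 + v ^ 2) with ht
  have htpos : 0 < u ^ 2 + v ^ 2 := by positivity
  have ht0 : 0 < t := Real.sqrt_pos.2 htpos
  have ht2 : t ^ 2 = u ^ 2 + v ^ 2 := Real.sq_sqrt htpos.le
  have htu : u ≤ t := by
    calc u = Real.sqrt (u ^ 2) := (Real.sqrt_sq hu).symm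
    _ ≤ t := Real.sqrt_le_sqrt (by nlinarith)
  have hs0 : 0 < Real.sqrt (c + v ^ 2) := Real.sqrt_pos.2 (by positivity)
  have hst : Real.sqrt (c + v ^ 2) ≤ t := Real.sqrt_le_sqrt (by nlinarith)
  have h1 : u ^ 2 / t ≤ u ^ 2 / Real.sqrt (c + v ^ 2) :=
    div_le_div_of_nonneg_left (by positivity) hs0 hst
  have h2 : u ≤ u ^ 2 / t + v / 2 := by
    rw [← sub_le_iff_le_add, le_div_iff₀ ht0]
    nlinarith [sq_nonneg (u - v), mul_nonneg hv.le (sub_nonneg.2 htu)]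
  linarith

/-- Finite length of gradient flow trajectories for a nonnegative
`C^{1,1}_loc` function with `inf f = 0` satisfying `‖∇f‖² ≥ f`. -/
theorem pl_gradient_flow_finite_length (n : ℕ) (f : EuclideanSpace ℝ (Fin n) → ℝ)
    (hpos : ∀ x, 0 ≤ f x) (hdiff : Differentiable ℝ f)
    (hlip : ∀ K : Set (EuclideanSpace ℝ (Fin n)), IsCompact K →
      ∃ L : NNReal, LipschitzOnWith L (gradient f) K)
    (hinf : (⨅ x, f x) = 0)
    (hPL : ∀ x, ‖gradient f x‖ ^ 2 ≥ f x)
    (y : ℝ → EuclideanSpace ℝ (Fin n)) (y₀ : EuclideanSpace ℝ (Fin n))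
    (hy₀ : y 0 = y₀)
    (hflow : ∀ t : ℝ, 0 ≤ t → HasDerivAt y (-gradient f (y t)) t) :
    ∫ t in Set.Ioi (0 : ℝ), ‖deriv y t‖ ≤ 2 * Real.sqrt (f y₀) := by
  -- continuity of the gradient
  have hgc : Continuous (gradient f) := by
    rw [continuous_iff_continuousAt]
    intro x
    obtain ⟨L, hL⟩ := hlip (Metric.closedBall x 1) (isCompact_closedBall x 1)
    exact hL.continuousOn.continuousAt (Metric.closedBall_mem_nhds x one_pos)
  set G : ℝ → ℝ := fun t => ‖gradient f (y t)‖ with hGdef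
  -- derivative of f ∘ y
  have hF : ∀ t : ℝ, 0 ≤ t → HasDerivAt (fun s => f (y s)) (-(G t) ^ 2) t := by
    intro t ht
    have h1 := ((hdiff (y t)).hasGradientAt.hasFDerivAt).comp_hasDerivAt t (hflow t ht)
    rw [InnerProductSpace.toDual_apply_apply, inner_neg_right, real_inner_self_eq_norm_sq] at h1
    exact h1
  -- key interval bound
  have key : ∀ T : ℝ, 0 ≤ T → ∫ t in (0:ℝ)..T, G t ≤ 2 * Real.sqrt (f y₀) := by
    intro T hT
    have hIcc : Set.uIcc (0:ℝ) T = Set.Icc 0 T := Set.uIcc_of_le hT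
    have hycont : ContinuousOn y (Set.Icc 0 T) := fun t ht =>
      ((hflow t ht.1).continuousAt).continuousWithinAt
    have hGcont : ContinuousOn G (Set.Icc 0 T) :=
      (hgc.comp_continuousOn hycont).norm
    have hGint : IntervalIntegrable G volume 0 T := by
      rw [intervalIntegrable_iff_integrableOn_Icc_of_le hT]
      exact hGcont.integrableOn_Icc
    have hfycont : ContinuousOn (fun s => f (y s)) (Set.Icc 0 T) :=
      hdiff.continuous.comp_continuousOn hycont
    -- epsilon bound
    have eps : ∀ v : ℝ, 0 < v →
        ∫ t in (0:ℝ)..T, G t ≤ 2 * Real.sqrt (f y₀ + v ^ 2) + T * (v / 2) := by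
      intro v hv
      set h : ℝ → ℝ := fun s => 2 * Real.sqrt (f (y s) + v ^ 2) with hhdef
      set h' : ℝ → ℝ := fun s => 2 * ((-(G s) ^ 2) / (2 * Real.sqrt (f (y s) + v ^ 2)))
        with hh'def
      have hpos' : ∀ s, (0:ℝ) < f (y s) + v ^ 2 := fun s => by
        have := hpos (y s); positivity
      have hder : ∀ s ∈ Set.uIcc (0:ℝ) T, HasDerivAt h (h' s) s := by
        intro s hs
        rw [hIcc] at hs
        exact (((hF s hs.1).add_const (v ^ 2)).sqrt (hpos' s).ne').const_mul 2
      have hh'cont : ContinuousOn h' (Set.Icc 0 T) := by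
        apply ContinuousOn.mul continuousOn_const
        apply ContinuousOn.div (hGcont.pow 2).neg
        · exact continuousOn_const.mul
            ((hfycont.add continuousOn_const).sqrt)
        · intro s hs
          have := hpos' s
          have : 0 < Real.sqrt (f (y s) + v ^ 2) := Real.sqrt_pos.2 this
          positivity
      have hh'int : IntervalIntegrable h' volume 0 T := by
        rw [intervalIntegrable_iff_integrableOn_Icc_of_le hT]
        exact hh'cont.integrableOn_Icc
      have hni : IntervalIntegrable (fun t => -(h' t)) volume 0 T := hh'int.neg
      have hFTC : ∫ s in (0:ℝ)..T, h' s = h T - h 0 :=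
        intervalIntegral.integral_eq_sub_of_hasDerivAt hder hh'int
      have hmono : ∫ t in (0:ℝ)..T, G t ≤ ∫ t in (0:ℝ)..T, (-(h' t) + v / 2) := by
        apply intervalIntegral.integral_mono_on hT hGint (hni.add intervalIntegrable_const)
        intro s hs
        have hGs : 0 ≤ G s := norm_nonneg _
        have h1 : -(h' s) = (G s) ^ 2 / Real.sqrt (f (y s) + v ^ 2) := by
          rw [hh'def]
          have : Real.sqrt (f (y s) + v ^ 2) ≠ 0 := (Real.sqrt_pos.2 (hpos' s)).ne'
          field_simp
        rw [h1]
        exact aux_ineq (G s) v (f (y s)) hGs hv (hpos (y s)) (hPL (y s))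
      have hA : ∫ t in (0:ℝ)..T, (-(h' t) + v / 2)
          = (∫ t in (0:ℝ)..T, -(h' t)) + ∫ t in (0:ℝ)..T, (v / 2 : ℝ) :=
        intervalIntegral.integral_add hni intervalIntegrable_const
      have hB : ∫ t in (0:ℝ)..T, -(h' t) = -(h T - h 0) := by
        rw [intervalIntegral.integral_neg, hFTC]
      have hC : ∫ t in (0:ℝ)..T, (v / 2 : ℝ) = (T - 0) * (v / 2) := by
        rw [intervalIntegral.integral_const, smul_eq_mul]
      have hcalc : ∫ t in (0:ℝ)..T, (-(h' t) + v / 2)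
          = -(h T - h 0) + (T - 0) * (v / 2) := by rw [hA, hB, hC]
      have hhT : 0 ≤ h T := by
        have := Real.sqrt_nonneg (f (y T) + v ^ 2); rw [hhdef]; positivity
      have hh0 : h 0 = 2 * Real.sqrt (f y₀ + v ^ 2) := by simp only [hhdef, hy₀]
      rw [hcalc] at hmono
      rw [hh0] at hmono
      linarith [hmono]
    -- limit v → 0⁺
    have hlim : Tendsto (fun v : ℝ => 2 * Real.sqrt (f y₀ + v ^ 2) + T * (v / 2))
        (nhdsWithin 0 (Set.Ioi 0)) (nhds (2 * Real.sqrt (f y₀))) := by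
      have hc : Continuous (fun v : ℝ => 2 * Real.sqrt (f y₀ + v ^ 2) + T * (v / 2)) := by
        continuity
      have h2 : Tendsto (fun v : ℝ => 2 * Real.sqrt (f y₀ + v ^ 2) + T * (v / 2))
          (nhds 0) (nhds (2 * Real.sqrt (f y₀))) := by
        have := hc.tendsto 0
        norm_num at this
        exact this
      exact h2.mono_left nhdsWithin_le_nhds
    refine ge_of_tendsto hlim ?_
    filter_upwards [self_mem_nhdsWithin] with v hv
    exact eps v hv
  -- conclude
  by_cases hInt : IntegrableOn (fun t => ‖deriv y t‖) (Set.Ioi (0:ℝ)) volume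
  · have htend := intervalIntegral_tendsto_integral_Ioi 0 hInt tendsto_id
    refine le_of_tendsto htend ?_
    filter_upwards [eventually_ge_atTop (0:ℝ)] with T hT
    have hcongr : ∫ t in (0:ℝ)..T, ‖deriv y t‖ = ∫ t in (0:ℝ)..T, G t := by
      apply intervalIntegral.integral_congr
      intro s hs
      rw [Set.uIcc_of_le hT] at hs
      rw [hGdef]
      simp only [(hflow s hs.1).deriv, norm_neg]
    simp only [id_eq]
    rw [hcongr]
    exact key T hT
  · rw [MeasureTheory.integral_undef hInt]
    positivity
end

section
/- Let f : ℝⁿ → ℝ be a C^{1,1}_loc function (differentiable with locally Lipschitz gradient) satisfying the Polyak-Łojasiewicz inequality with some constant C > 0 and such that inf f > −∞. Then f attains its infimum: argmin(f) is nonempty. -/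
open Filter Topology

/-- A weak form of Ekeland's variational principle for nonnegative continuous
functions on a complete normed space: there is a point around which the function
cannot drop faster than at rate `ε`. -/
lemma ekeland_weak {E : Type*} [NormedAddCommGroup E] [CompleteSpace E]
    (g : E → ℝ) (hg : Continuous g) (hpos : ∀ x, 0 ≤ g x) {ε : ℝ} (hε : 0 < ε) :
    ∃ x : E, ∀ y : E, g x - ε * dist x y ≤ g y := by
  classical
  set S : E → Set E := fun x => {y | g y + ε * dist x y ≤ g x} with hS
  have hmem : ∀ x, x ∈ S x := by intro x; simp [hS]
  have hsub : ∀ x x', x' ∈ S x → S x' ⊆ S x := by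
    intro x x' hx' y hy
    simp only [hS, Set.mem_setOf_eq] at *
    have htri : dist x y ≤ dist x x' + dist x' y := dist_triangle x x' y
    nlinarith [dist_nonneg (x := x) (y := x')]
  have hbddS : ∀ x, BddBelow (g '' S x) := by
    intro x
    exact ⟨0, by rintro a ⟨y, -, rfl⟩; exact hpos y⟩
  have step : ∀ (n : ℕ) (x : E), ∃ x', x' ∈ S x ∧ g x' ≤ sInf (g '' S x) + (1/2) ^ n := by
    intro n x
    have hne : (g '' S x).Nonempty := ⟨g x, x, hmem x, rfl⟩
    obtain ⟨a, ⟨y, hy, rfl⟩, ha⟩ := (csInf_lt_iff (hbddS x) hne).1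
      (lt_add_of_pos_right _ (by positivity : (0:ℝ) < (1/2)^n))
    exact ⟨y, hy, ha.le⟩
  -- the iterated sequence
  let u : ℕ → E := fun n => Nat.rec 0 (fun n xn => (step n xn).choose) n
  have hu0 : ∀ n, u (n + 1) ∈ S (u n) := fun n => (step n (u n)).choose_spec.1
  have hu1 : ∀ n, g (u (n + 1)) ≤ sInf (g '' S (u n)) + (1/2) ^ n :=
    fun n => (step n (u n)).choose_spec.2
  have hmono : ∀ m n, n ≤ m → u m ∈ S (u n) := by
    intro m n h
    induction m with
    | zero => simpa [Nat.le_zero.mp h] using hmem (u 0)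
    | succ m ih =>
      rcases Nat.lt_or_ge n (m+1) with h' | h'
      · exact hsub _ _ (ih (Nat.lt_succ_iff.mp h')) (hu0 m)
      · have : n = m + 1 := le_antisymm h h'
        subst this; exact hmem _
  -- Cauchy
  have hdist : ∀ n, dist (u n) (u (n+1)) ≤ (g (u n) - g (u (n+1))) / ε := by
    intro n
    have := hu0 n
    simp only [hS, Set.mem_setOf_eq] at this
    rw [le_div_iff₀ hε]
    linarith
  have hsum : Summable fun n => dist (u n) (u (n+1)) := by
    apply summable_of_sum_range_le (fun n => dist_nonneg) (c := g (u 0) / ε)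
    intro n
    calc ∑ k ∈ Finset.range n, dist (u k) (u (k+1))
        ≤ ∑ k ∈ Finset.range n, (g (u k) - g (u (k+1))) / ε :=
          Finset.sum_le_sum fun k _ => hdist k
      _ = (g (u 0) - g (u n)) / ε := by
          rw [← Finset.sum_div, Finset.sum_range_sub' (fun k => g (u k))]
      _ ≤ g (u 0) / ε := by
          gcongr
          linarith [hpos (u n)]
  have hcauchy : CauchySeq u := cauchySeq_of_summable_dist hsum
  obtain ⟨xbar, hlim⟩ := cauchySeq_tendsto_of_complete hcauchy
  have hclosed : ∀ n, IsClosed (S (u n)) := by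
    intro n
    exact isClosed_le (by fun_prop) continuous_const
  have hxbar : ∀ n, xbar ∈ S (u n) := by
    intro n
    refine (hclosed n).mem_of_tendsto hlim ?_
    filter_upwards [eventually_ge_atTop n] with m hm using hmono m n hm
  refine ⟨xbar, fun y => ?_⟩
  by_contra hy
  push_neg at hy
  have hyS : ∀ n, y ∈ S (u n) := by
    intro n
    have h1 := hxbar n
    simp only [hS, Set.mem_setOf_eq] at h1 ⊢
    have htri : dist (u n) y ≤ dist (u n) xbar + dist xbar y := dist_triangle _ _ _
    nlinarith
  have hkey : ∀ n, g (u (n+1)) ≤ g y + (1/2) ^ n := by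
    intro n
    exact (hu1 n).trans (add_le_add_left (csInf_le (hbddS _) ⟨y, hyS n, rfl⟩) _)
  have hglim : Tendsto (fun n => g (u (n+1))) atTop (𝓝 (g xbar)) :=
    (hg.continuousAt.tendsto.comp (hlim.comp (tendsto_add_atTop_nat 1)))
  have hglim2 : Tendsto (fun n : ℕ => g y + (1/2:ℝ) ^ n) atTop (𝓝 (g y + 0)) :=
    tendsto_const_nhds.add (tendsto_pow_atTop_nhds_zero_of_lt_one (by norm_num) (by norm_num))
  have : g xbar ≤ g y + 0 := le_of_tendsto_of_tendsto' hglim hglim2 hkey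
  have hd : 0 ≤ dist xbar y := dist_nonneg
  nlinarith

/-- A `C^{1,1}_loc` PŁ function that is bounded below attains its
infimum. -/
theorem pl_C11_attains_infimum (n : ℕ) (f : EuclideanSpace ℝ (Fin n) → ℝ)
    (hdiff : Differentiable ℝ f)
    (hlip : ∀ K : Set (EuclideanSpace ℝ (Fin n)), IsCompact K →
      ∃ L : NNReal, LipschitzOnWith L (gradient f) K)
    (hbdd : BddBelow (Set.range f))
    (C : ℝ) (hC : 0 < C)
    (hPL : ∀ x, ‖gradient f x‖ ^ 2 ≥ C * (f x - ⨅ y, f y)) :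
    {x | f x = ⨅ y, f y}.Nonempty := by
  by_contra hempty
  rw [Set.not_nonempty_iff_eq_empty] at hempty
  set m : ℝ := ⨅ y, f y with hm
  have hge : ∀ x, m ≤ f x := fun x => ciInf_le hbdd x
  have hgt : ∀ x, 0 < f x - m := by
    intro x
    rcases lt_or_eq_of_le (hge x) with h | h
    · linarith
    · exact absurd (Set.eq_empty_iff_forall_notMem.mp hempty x) (by simp [h.symm])
  -- the auxiliary function g = sqrt (f - m)
  set g : EuclideanSpace ℝ (Fin n) → ℝ := fun x => Real.sqrt (f x - m) with hgdef
  have hgderiv : ∀ x, HasFDerivAt g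
      ((1 / (2 * Real.sqrt (f x - m))) • fderiv ℝ f x) x := by
    intro x
    exact (Real.hasDerivAt_sqrt (ne_of_gt (hgt x))).comp_hasFDerivAt x
      (((hdiff x).hasFDerivAt).sub_const m)
  have hnormf : ∀ x, ‖fderiv ℝ f x‖ = ‖gradient f x‖ := by
    intro x
    rw [gradient, LinearIsometryEquiv.norm_map]
  -- lower bound on the derivative of g
  have hglb : ∀ x, Real.sqrt C / 2 ≤ ‖fderiv ℝ g x‖ := by
    intro x
    have hx := hgt x
    have hsq : 0 < Real.sqrt (f x - m) := Real.sqrt_pos.mpr hx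
    rw [(hgderiv x).fderiv, norm_smul]
    have h1 : ‖(1 / (2 * Real.sqrt (f x - m)) : ℝ)‖ = 1 / (2 * Real.sqrt (f x - m)) := by
      rw [Real.norm_eq_abs, abs_of_pos (by positivity)]
    rw [h1, hnormf]
    have h2 : Real.sqrt C * Real.sqrt (f x - m) ≤ ‖gradient f x‖ := by
      rw [← Real.sqrt_mul hC.le]
      have := hPL x
      have h3 : Real.sqrt (C * (f x - m)) ≤ Real.sqrt (‖gradient f x‖ ^ 2) :=
        Real.sqrt_le_sqrt (by linarith [this])
      rwa [Real.sqrt_sq (norm_nonneg _)] at h3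
    have heq : Real.sqrt C / 2
        = (1 / (2 * Real.sqrt (f x - m))) * (Real.sqrt C * Real.sqrt (f x - m)) := by
      field_simp
    rw [heq]
    exact mul_le_mul_of_nonneg_left h2 (by positivity)
  -- Ekeland's variational principle applied to g
  have hsqC : 0 < Real.sqrt C := Real.sqrt_pos.mpr hC
  have hgcont : Continuous g := by
    apply Continuous.comp Real.continuous_sqrt
    exact (hdiff.continuous.sub continuous_const)
  obtain ⟨xb, hxb⟩ := ekeland_weak g hgcont (fun x => Real.sqrt_nonneg _)
    (show (0:ℝ) < Real.sqrt C / 4 by positivity)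
  -- the derivative of g at xb has small norm
  set D := fderiv ℝ g xb with hD
  have hsmall : ∀ v, -(Real.sqrt C / 4 * ‖v‖) ≤ D v := by
    intro v
    have hline : HasDerivAt (fun t : ℝ => xb + t • v) v 0 := by
      simpa using ((hasDerivAt_id (0:ℝ)).smul_const v).const_add xb
    have hφ : HasDerivAt (fun t : ℝ => g (xb + t • v)) (D v) 0 := by
      have hg0 : HasFDerivAt g ((1 / (2 * Real.sqrt (f xb - m))) • fderiv ℝ f xb)
          (xb + (0:ℝ) • v) := by simpa using hgderiv xb
      have h := hg0.comp_hasDerivAt (x := (0:ℝ)) hline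
      rw [hD, (hgderiv xb).fderiv]
      exact h
    have hslope : Tendsto (slope (fun t : ℝ => g (xb + t • v)) 0) (𝓝[>] 0) (𝓝 (D v)) :=
      (hasDerivAt_iff_tendsto_slope.mp hφ).mono_left
        (nhdsWithin_mono 0 fun t ht => ne_of_gt ht)
    refine ge_of_tendsto hslope ?_
    filter_upwards [self_mem_nhdsWithin] with t (ht : 0 < t)
    have hb := hxb (xb + t • v)
    have hdist : dist xb (xb + t • v) = t * ‖v‖ := by
      rw [dist_eq_norm]
      simp [norm_smul, abs_of_pos ht]
    have h0 : g (xb + (0:ℝ) • v) = g xb := by simp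
    rw [hdist] at hb
    rw [slope_def_field, h0, sub_zero, le_div_iff₀ ht]
    nlinarith
  have hnorm : ‖D‖ ≤ Real.sqrt C / 4 := by
    apply ContinuousLinearMap.opNorm_le_bound _ (by positivity)
    intro v
    rw [Real.norm_eq_abs, abs_le]
    constructor
    · linarith [hsmall v]
    · have := hsmall (-v)
      simp only [map_neg, norm_neg] at this
      linarith
  have := hglb xb
  rw [← hD] at this
  nlinarith [norm_nonneg D]
end

section
/- Let f : ℝⁿ → ℝ be a C² function with min f = 0 satisfying ‖∇f(x)‖² ≥ f(x) for all x ∈ ℝⁿ, and let H = ∇²f denote its Hessian. Then for every minimizer x ∈ argmin(f) and every vector u ∈ ℝⁿ, (1/2)·⟨H(x)u, u⟩ ≤ ‖H(x)u‖². In particular every nonzero eigenvalue of the positive semidefinite matrix H(x) lies in the interval [1/2, ∞). -/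
open scoped RealInnerProductSpace
open Filter Topology

/-- At any minimizer of a `C²` function with `min f = 0` satisfying
`‖∇f‖² ≥ f`, the Hessian `H(x) = ∇²f(x)` satisfies `(1/2)⟨H(x)u, u⟩ ≤ ‖H(x)u‖²` for all
`u`; in particular every nonzero eigenvalue of `H(x)` lies in `[1/2, ∞)`. -/
theorem pl_hessian_spectral_gap (n : ℕ) (f : EuclideanSpace ℝ (Fin n) → ℝ)
    (hf : ContDiff ℝ 2 f) (hpos : ∀ x, 0 ≤ f x) (hmin : ∃ x, f x = 0)
    (hPL : ∀ x, ‖gradient f x‖ ^ 2 ≥ f x) :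
    ∀ x, f x = 0 →
      (∀ u, (1 / 2 : ℝ) * ⟪fderiv ℝ (gradient f) x u, u⟫ ≤ ‖fderiv ℝ (gradient f) x u‖ ^ 2) ∧
      ∀ μ : ℝ, μ ≠ 0 →
        Module.End.HasEigenvalue ((fderiv ℝ (gradient f) x :
          EuclideanSpace ℝ (Fin n) →ₗ[ℝ] EuclideanSpace ℝ (Fin n))) μ →
        1 / 2 ≤ μ := by
  intro x hx0
  have hdf : Differentiable ℝ f := hf.differentiable (by norm_num)
  have hgradC : ContDiff ℝ 1 (gradient f) := by
    have h1 : ContDiff ℝ 1 (fderiv ℝ f) := hf.fderiv_right (by norm_num)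
    exact ((InnerProductSpace.toDual ℝ (EuclideanSpace ℝ (Fin n))).symm.contDiff).comp h1
  have hgrad0 : gradient f x = 0 := by
    have hmin' : IsLocalMin f x := Filter.Eventually.of_forall fun y => hx0 ▸ hpos y
    have : fderiv ℝ f x = 0 := hmin'.fderiv_eq_zero
    rw [gradient, this, map_zero]
  set H := fderiv ℝ (gradient f) x with hH
  have key : ∀ u : EuclideanSpace ℝ (Fin n),
      (1 / 2 : ℝ) * ⟪H u, u⟫ ≤ ‖H u‖ ^ 2 ∧ 0 ≤ ⟪H u, u⟫ := by
    intro u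
    set c : ℝ → EuclideanSpace ℝ (Fin n) := fun t => x + t • u with hc
    have hcd : ∀ t, HasDerivAt c u t := fun t => by
      rw [hc]; simpa using ((hasDerivAt_id t).smul_const u).const_add x
    have hc0 : c 0 = x := by simp [hc]
    set φ : ℝ → EuclideanSpace ℝ (Fin n) := fun t => gradient f (c t) with hφ
    have hφ0 : φ 0 = 0 := by simp [hφ, hc0, hgrad0]
    have hφd : HasDerivAt φ (H u) 0 := by
      have hdg : DifferentiableAt ℝ (gradient f) x :=
        (hgradC.differentiable one_ne_zero).differentiableAt
      have hdg' : HasFDerivAt (gradient f) H (c 0) := by rw [hc0]; exact hdg.hasFDerivAt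
      exact hdg'.comp_hasDerivAt 0 (hcd 0)
    set S : ℝ → EuclideanSpace ℝ (Fin n) := fun t => t⁻¹ • φ t with hSdef
    have hS : Tendsto S (𝓝[>] (0 : ℝ)) (𝓝 (H u)) := by
      have := hasDerivAt_iff_tendsto_slope.1 hφd
      have heq : slope φ 0 = S := by
        funext t; simp [slope_def_module, hφ0, hSdef]
      rw [heq] at this
      exact this.mono_left (nhdsWithin_mono _ fun t ht => ne_of_gt ht)
    -- limit of the squared norm of the rescaled gradient
    have hA : Tendsto (fun t => ‖S t‖ ^ 2) (𝓝[>] (0 : ℝ)) (𝓝 (‖H u‖ ^ 2)) :=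
      (hS.norm).pow 2
    -- L'Hôpital for f along the line
    set g : ℝ → ℝ := fun t => f (c t) with hg
    have hgd : ∀ t, HasDerivAt g (⟪φ t, u⟫) t := by
      intro t
      have := (hdf (c t)).hasFDerivAt.comp_hasDerivAt t (hcd t)
      have heq : fderiv ℝ f (c t) u = ⟪φ t, u⟫ := by
        simp [hφ, gradient, InnerProductSpace.toDual_symm_apply]
      rw [heq] at this; exact this
    have hB : Tendsto (fun t => g t / t ^ 2) (𝓝[>] (0 : ℝ)) (𝓝 (⟪H u, u⟫ / 2)) := by
      apply HasDerivAt.lhopital_zero_nhdsGT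
        (f' := fun t => ⟪φ t, u⟫) (g' := fun t => 2 * t)
      · exact Filter.Eventually.of_forall fun t => hgd t
      · exact Filter.Eventually.of_forall fun t => by
          simpa using hasDerivAt_pow 2 t
      · filter_upwards [self_mem_nhdsWithin] with t ht
        exact mul_ne_zero two_ne_zero (ne_of_gt ht)
      · have hct : ContinuousAt g 0 := (hf.continuous.comp (by fun_prop)).continuousAt
        have h0 : g 0 = 0 := by simp [hg, hc0, hx0]
        simpa [h0] using (hct.continuousWithinAt (s := Set.Ioi 0)).tendsto
      · have : Tendsto (fun t : ℝ => t ^ 2) (𝓝 0) (𝓝 (0 ^ 2)) :=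
          (continuous_pow 2).tendsto 0
        simpa using this.mono_left nhdsWithin_le_nhds
      · have h1 : Tendsto (fun t => ⟪S t, u⟫ / 2) (𝓝[>] (0 : ℝ)) (𝓝 (⟪H u, u⟫ / 2)) :=
          (hS.inner tendsto_const_nhds).div_const 2
        apply h1.congr'
        filter_upwards [self_mem_nhdsWithin] with t ht
        have ht0 : (0 : ℝ) < t := ht
        show ⟪t⁻¹ • φ t, u⟫ / 2 = ⟪φ t, u⟫ / (2 * t)
        rw [real_inner_smul_left, inv_mul_eq_div, div_div, mul_comm t 2]
    -- pointwise comparison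
    have hle : ∀ᶠ t in 𝓝[>] (0 : ℝ), g t / t ^ 2 ≤ ‖S t‖ ^ 2 := by
      filter_upwards [self_mem_nhdsWithin] with t ht
      have ht0 : (0 : ℝ) < t := ht
      have ht2 : (0 : ℝ) < t ^ 2 := by positivity
      have hnorm : ‖S t‖ ^ 2 = ‖φ t‖ ^ 2 / t ^ 2 := by
        rw [hSdef]
        simp only [norm_smul, norm_inv, Real.norm_eq_abs, abs_of_pos ht0]
        rw [mul_pow, inv_pow, inv_mul_eq_div]
      rw [hnorm]
      gcongr
      exact hPL (c t)
    have hnonneg : ∀ᶠ t in 𝓝[>] (0 : ℝ), 0 ≤ g t / t ^ 2 := by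
      filter_upwards [self_mem_nhdsWithin] with t ht
      have ht0 : (0 : ℝ) < t := ht
      have ht2 : (0 : ℝ) < t ^ 2 := by positivity
      exact div_nonneg (hpos (c t)) ht2.le
    have hmain : ⟪H u, u⟫ / 2 ≤ ‖H u‖ ^ 2 := le_of_tendsto_of_tendsto hB hA hle
    have hpsd : 0 ≤ ⟪H u, u⟫ / 2 := ge_of_tendsto hB hnonneg
    constructor
    · linarith
    · linarith
  refine ⟨fun u => (key u).1, ?_⟩
  intro μ hμ hev
  obtain ⟨v, hv⟩ := hev.exists_hasEigenvector
  have hHv : H v = μ • v := hv.apply_eq_smul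
  have h1 := (key v).1
  have h2 := (key v).2
  rw [hHv] at h1 h2
  have hv2 : (0 : ℝ) < ‖v‖ ^ 2 := pow_pos (norm_pos_iff.mpr hv.right) 2
  rw [real_inner_smul_left, real_inner_self_eq_norm_sq] at h1 h2
  rw [norm_smul, Real.norm_eq_abs] at h1
  have hμ0 : 0 < μ := by
    rcases lt_trichotomy μ 0 with h | h | h
    · nlinarith
    · exact absurd h hμ
    · exact h
  rw [abs_of_pos hμ0] at h1
  nlinarith [mul_pos hμ0 hv2]
end

section
/- Let f : ℝⁿ → ℝ be a C² function with min f = 0 satisfying ‖∇f(x)‖² ≥ f(x) for all x ∈ ℝⁿ, and assume K = argmin(f) is compact. Then the Hessian H = ∇²f has constant rank on K: for all x, y ∈ K, rank(H(x)) = rank(H(y)). -/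
open Metric Set Module InnerProductSpace Filter Asymptotics
open scoped RealInnerProductSpace Topology

set_option maxHeartbeats 2000000

section PLAux

variable {n : ℕ}

local notation "E" => EuclideanSpace ℝ (Fin n)


lemma rank_le_of_close {T S : E →ₗ[ℝ] E}
    (hT : T.IsSymmetric)
    (hpsd : ∀ v, 0 ≤ ⟪T v, v⟫)
    (hgap : ∀ v, ⟪T v, v⟫ ≤ 2 * ‖T v‖ ^ 2)
    (hclose : ∀ v, ‖T v - S v‖ ≤ (1/8) * ‖v‖) :
    Module.finrank ℝ (LinearMap.range T) ≤ Module.finrank ℝ (LinearMap.range S) := by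
  have hn : Module.finrank ℝ (EuclideanSpace ℝ (Fin n)) = n := finrank_euclideanSpace_fin
  set b := hT.eigenvectorBasis hn with hb
  set μ := hT.eigenvalues hn with hmu
  have hTb : ∀ i, T (b i) = μ i • b i := fun i => hT.apply_eigenvectorBasis hn i
  have hnb : ∀ i, ‖b i‖ = 1 := fun i => b.orthonormal.1 i
  have hμ0 : ∀ i, 0 ≤ μ i := by
    intro i
    have h := hpsd (b i)
    rw [hTb i, real_inner_smul_left, real_inner_self_eq_norm_sq, hnb i] at h
    simpa using h
  have hgapi : ∀ i, μ i = 0 ∨ 1/2 ≤ μ i := by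
    intro i
    have h := hgap (b i)
    rw [hTb i, real_inner_smul_left, real_inner_self_eq_norm_sq, norm_smul, hnb i] at h
    simp only [mul_one, one_pow, Real.norm_eq_abs, sq_abs] at h
    rcases eq_or_lt_of_le (hμ0 i) with h0 | h0
    · exact Or.inl h0.symm
    · right; nlinarith
  have coord : ∀ v i, b.repr (T v) i = μ i * b.repr v i := fun v i =>
    hT.eigenvectorBasis_apply_self_apply hn v i
  -- inner products via coordinates
  have hinner : ∀ v w : E, ⟪v, w⟫ = ∑ i, b.repr v i * b.repr w i := by
    intro v w
    have h1 : ⟪v, w⟫ = ⟪b.repr v, b.repr w⟫ := (b.repr.inner_map_map v w).symm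
    rw [h1, PiLp.inner_apply]
    simp [RCLike.inner_apply, conj_trivial]
    exact Finset.sum_congr rfl fun i _ => mul_comm _ _
  -- claim 1: coordinates of elements of range T vanish where μ i = 0
  have claim1 : ∀ v ∈ LinearMap.range T, ∀ i, μ i = 0 → b.repr v i = 0 := by
    rintro v ⟨w, rfl⟩ i hi
    rw [coord w i, hi, zero_mul]
  -- claim 2: on such vectors the quadratic form is ≥ ½‖v‖²
  have claim2 : ∀ v : E, (∀ i, μ i = 0 → b.repr v i = 0) →
      (1/2) * ‖v‖ ^ 2 ≤ ⟪T v, v⟫ := by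
    intro v hv
    have h1 : ⟪T v, v⟫ = ∑ i, μ i * (b.repr v i) ^ 2 := by
      rw [hinner (T v) v]
      refine Finset.sum_congr rfl fun i _ => ?_
      rw [coord v i]; ring
    have h2 : ‖v‖ ^ 2 = ∑ i, (b.repr v i) ^ 2 := by
      rw [← real_inner_self_eq_norm_sq, hinner v v]
      refine Finset.sum_congr rfl fun i _ => ?_; ring
    rw [h1, h2, Finset.mul_sum]
    refine Finset.sum_le_sum fun i _ => ?_
    rcases hgapi i with h0 | h0
    · rw [hv i h0, h0]; simp
    · have := sq_nonneg (b.repr v i); nlinarith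
  -- S is injective on range T
  set φ : LinearMap.range T →ₗ[ℝ] E := S.comp (LinearMap.range T).subtype with hφ
  have hinj : Function.Injective φ := by
    rw [← LinearMap.ker_eq_bot]
    rw [LinearMap.ker_eq_bot']
    rintro ⟨v, hv⟩ h0
    have hSv : S v = 0 := by simpa [hφ] using h0
    have hq : (1/2) * ‖v‖ ^ 2 ≤ ⟪T v, v⟫ := claim2 v (claim1 v hv)
    have hTv : ⟪T v, v⟫ = ⟪T v - S v, v⟫ := by rw [hSv]; simp
    have hcs : ⟪T v - S v, v⟫ ≤ (1/8) * ‖v‖ ^ 2 := by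
      calc ⟪T v - S v, v⟫ ≤ ‖T v - S v‖ * ‖v‖ := real_inner_le_norm _ _
        _ ≤ (1/8) * ‖v‖ * ‖v‖ := by
            have := hclose v
            have h0 : (0:ℝ) ≤ ‖v‖ := norm_nonneg v
            nlinarith
        _ = (1/8) * ‖v‖ ^ 2 := by ring
    have key : ⟪T v, v⟫ ≤ (1/8) * ‖v‖ ^ 2 := by rw [hTv]; exact hcs
    have hv0 : ‖v‖ ^ 2 = 0 := le_antisymm (by nlinarith) (sq_nonneg _)
    have : v = 0 := by
      have h := pow_eq_zero_iff (n := 2) (by norm_num) |>.mp hv0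
      exact norm_eq_zero.mp h
    exact Subtype.ext this
  have h1 : Module.finrank ℝ (LinearMap.range T) = Module.finrank ℝ (LinearMap.range φ) :=
    (LinearMap.finrank_range_of_inj hinj).symm
  have h2 : LinearMap.range φ ≤ LinearMap.range S := by
    rintro x ⟨⟨v, hv⟩, rfl⟩
    exact ⟨v, rfl⟩
  rw [h1]
  exact Submodule.finrank_mono h2

lemma inner_gradient_eq (f : E → ℝ) (x v : E) : ⟪gradient f x, v⟫ = fderiv ℝ f x v :=
  InnerProductSpace.toDual_symm_apply

lemma gradient_eq_sum (f : E → ℝ) (y : E) :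
    gradient f y = ∑ i, (fderiv ℝ f y (EuclideanSpace.basisFun (Fin n) ℝ i)) •
      (EuclideanSpace.basisFun (Fin n) ℝ i : E) := by
  set b := EuclideanSpace.basisFun (Fin n) ℝ
  have h := b.sum_repr' (gradient f y)
  rw [← h]
  refine Finset.sum_congr rfl fun i _ => ?_
  rw [real_inner_comm, inner_gradient_eq]

lemma contDiff_grad {f : E → ℝ} (hf : ContDiff ℝ 2 f) : ContDiff ℝ 1 (gradient f) := by
  have h1 : ContDiff ℝ 1 (fderiv ℝ f) := hf.fderiv_right (by norm_num)
  have h2 : gradient f = fun y => ∑ i, (fderiv ℝ f y (EuclideanSpace.basisFun (Fin n) ℝ i)) •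
      (EuclideanSpace.basisFun (Fin n) ℝ i : E) := funext fun y => gradient_eq_sum f y
  rw [h2]
  refine ContDiff.sum fun i _ => ?_
  exact (h1.clm_apply contDiff_const).smul contDiff_const

lemma grad_zero_at_min {f : E → ℝ} (hpos : ∀ y, 0 ≤ f y) {x : E} (hx : f x = 0) :
    gradient f x = 0 := by
  have hloc : IsLocalMin f x := Filter.Eventually.of_forall (fun y => by rw [hx]; exact hpos y)
  have h0 : fderiv ℝ f x = 0 := hloc.fderiv_eq_zero
  show (InnerProductSpace.toDual ℝ (EuclideanSpace ℝ (Fin n))).symm (fderiv ℝ f x) = 0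
  rw [h0, map_zero]

lemma hess_symm {f : E → ℝ} (hf : ContDiff ℝ 2 f) (x u v : E) :
    ⟪fderiv ℝ (gradient f) x u, v⟫ = ⟪u, fderiv ℝ (gradient f) x v⟫ := by
  have hdf : Differentiable ℝ f := hf.differentiable (by norm_num)
  have hD : ContDiff ℝ 1 (fderiv ℝ f) := hf.fderiv_right (by norm_num)
  have hb : HasFDerivAt (fderiv ℝ f) (fderiv ℝ (fderiv ℝ f) x) x :=
    (hD.differentiable one_ne_zero x).hasFDerivAt
  have sym := second_derivative_symmetric (f' := fderiv ℝ f)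
    (fun y => (hdf y).hasFDerivAt) hb
  have hG : HasFDerivAt (gradient f) (fderiv ℝ (gradient f) x) x :=
    ((contDiff_grad hf).differentiable one_ne_zero x).hasFDerivAt
  -- key : ∀ w, ⟪w, fderiv (gradient f) x u⟫ = f'' u w ... compute via two fderiv computations
  have key : ∀ w z : E, ⟪z, fderiv ℝ (gradient f) x w⟫ = fderiv ℝ (fderiv ℝ f) x w z := by
    intro w z
    have hA : HasFDerivAt (fun y => (innerSL ℝ z) (gradient f y))
        ((innerSL ℝ z).comp (fderiv ℝ (gradient f) x)) x := (innerSL ℝ z).hasFDerivAt.comp x hG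
    have hB : HasFDerivAt (fun y => (ContinuousLinearMap.apply ℝ ℝ z) (fderiv ℝ f y))
        ((ContinuousLinearMap.apply ℝ ℝ z).comp (fderiv ℝ (fderiv ℝ f) x)) x :=
      (ContinuousLinearMap.apply ℝ ℝ z).hasFDerivAt.comp x hb
    have hfun : (fun y => (innerSL ℝ z) (gradient f y))
        = (fun y => (ContinuousLinearMap.apply ℝ ℝ z) (fderiv ℝ f y)) := by
      funext y
      simp only [innerSL_apply_apply, ContinuousLinearMap.apply_apply]
      rw [real_inner_comm, inner_gradient_eq]
    rw [hfun] at hA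
    have := hA.unique hB
    calc ⟪z, fderiv ℝ (gradient f) x w⟫
        = ((innerSL ℝ z).comp (fderiv ℝ (gradient f) x)) w := rfl
      _ = ((ContinuousLinearMap.apply ℝ ℝ z).comp (fderiv ℝ (fderiv ℝ f) x)) w := by rw [this]
      _ = fderiv ℝ (fderiv ℝ f) x w z := rfl
  calc ⟪fderiv ℝ (gradient f) x u, v⟫ = ⟪v, fderiv ℝ (gradient f) x u⟫ := real_inner_comm _ _
    _ = fderiv ℝ (fderiv ℝ f) x u v := key u v
    _ = fderiv ℝ (fderiv ℝ f) x v u := sym u v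
    _ = ⟪u, fderiv ℝ (gradient f) x v⟫ := (key v u).symm

lemma hasDerivAt_line {f : E → ℝ} (hf : ContDiff ℝ 2 f) (x v : E) (t₀ : ℝ) :
    HasDerivAt (fun t : ℝ => f (x + t • v)) ⟪gradient f (x + t₀ • v), v⟫ t₀ := by
  have hline : HasDerivAt (fun t : ℝ => x + t • v) v t₀ := by
    simpa using ((hasDerivAt_id t₀).smul_const v).const_add x
  have hF := (hf.differentiable (by norm_num) (x + t₀ • v)).hasFDerivAt
  have h := hF.comp_hasDerivAt t₀ hline
  rw [inner_gradient_eq]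
  exact h

lemma grad_expansion {f : E → ℝ} (hgrad : ContDiff ℝ 1 (gradient f)) {x : E}
    (hx0 : gradient f x = 0) (v : E) {ε : ℝ} (hε : 0 < ε) :
    ∃ δ > 0, ∀ t : ℝ, |t| < δ →
      ‖gradient f (x + t • v) - t • (fderiv ℝ (gradient f) x v)‖ ≤ ε * |t| := by
  have hG : HasFDerivAt (gradient f) (fderiv ℝ (gradient f) x) x :=
    ((hgrad.differentiable one_ne_zero) x).hasFDerivAt
  have h1 : (fun h : E => gradient f (x + h) - gradient f x - fderiv ℝ (gradient f) x h)
      =o[𝓝 0] fun h => h := hasFDerivAt_iff_isLittleO_nhds_zero.mp hG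
  have h2 : Filter.Tendsto (fun t : ℝ => t • v) (𝓝 0) (𝓝 (0 : E)) := by
    have := (continuous_id.smul continuous_const :
      Continuous fun t : ℝ => t • v).tendsto 0
    exact this.mono_right (le_of_eq (by simp))
  have h3 : (fun t : ℝ => gradient f (x + t • v) - gradient f x
      - fderiv ℝ (gradient f) x (t • v)) =o[𝓝 0] fun t : ℝ => t • v := h1.comp_tendsto h2
  have h4 : (fun t : ℝ => t • v) =O[𝓝 (0:ℝ)] fun t : ℝ => t := by
    refine isBigO_iff.mpr ⟨‖v‖, Filter.Eventually.of_forall fun t => ?_⟩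
    rw [norm_smul]
    simp [Real.norm_eq_abs, mul_comm]
  have h5 := (h3.trans_isBigO h4).def (show (0:ℝ) < ε / (1:ℝ) by linarith)
  rw [Metric.eventually_nhds_iff] at h5
  obtain ⟨δ, hδ, hδ'⟩ := h5
  refine ⟨δ, hδ, fun t ht => ?_⟩
  have := hδ' (show dist t 0 < δ by simpa [Real.dist_eq] using ht)
  simp only [hx0, sub_zero, map_smul] at this
  simpa [Real.norm_eq_abs, div_one] using this

-- second-order expansion of f at a critical point
lemma f_expansion {f : E → ℝ} (hf : ContDiff ℝ 2 f) (hgrad : ContDiff ℝ 1 (gradient f))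
    {x : E} (hfx : f x = 0) (hx0 : gradient f x = 0) (v : E) {ε : ℝ} (hε : 0 < ε) :
    ∃ δ > 0, ∀ t : ℝ, 0 ≤ t → t < δ →
      |f (x + t • v) - ⟪fderiv ℝ (gradient f) x v, v⟫ * t ^ 2 / 2| ≤ ε * t ^ 2 := by
  set c := ⟪fderiv ℝ (gradient f) x v, v⟫ with hc
  have hε' : 0 < ε / (‖v‖ + 1) := by positivity
  obtain ⟨δ, hδ, hδ'⟩ := grad_expansion hgrad hx0 v hε'
  refine ⟨δ, hδ, fun t ht0 htδ => ?_⟩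
  set ψ : ℝ → ℝ := fun s => f (x + s • v) - c * s ^ 2 / 2 with hψ
  have hψ' : ∀ s : ℝ, HasDerivAt ψ (⟪gradient f (x + s • v), v⟫ - c * s) s := by
    intro s
    have h1 : HasDerivAt (fun u : ℝ => f (x + u • v)) ⟪gradient f (x + s • v), v⟫ s := by
      have hline : HasDerivAt (fun u : ℝ => x + u • v) v s := by
        simpa using ((hasDerivAt_id s).smul_const v).const_add x
      have hF := ((hf.differentiable (by norm_num)) (x + s • v)).hasFDerivAt
      have h := hF.comp_hasDerivAt s hline
      rw [inner_gradient_eq]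
      exact h
    have h2 : HasDerivAt (fun u : ℝ => c * u ^ 2 / 2) (c * s) s := by
      have := ((hasDerivAt_pow 2 s).const_mul c).div_const 2
      refine this.congr_deriv ?_
      ring
    exact h1.sub h2
  have hbound : ∀ s ∈ Set.Icc (0:ℝ) t, ‖⟪gradient f (x + s • v), v⟫ - c * s‖ ≤ ε * t := by
    intro s hs
    have hsδ : |s| < δ := by
      rw [abs_of_nonneg hs.1]
      exact lt_of_le_of_lt hs.2 htδ
    have h1 := hδ' s hsδ
    have h2 : ⟪gradient f (x + s • v), v⟫ - c * s
        = ⟪gradient f (x + s • v) - s • (fderiv ℝ (gradient f) x v), v⟫ := by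
      rw [inner_sub_left, real_inner_smul_left, hc]; ring
    rw [h2]
    calc ‖⟪gradient f (x + s • v) - s • (fderiv ℝ (gradient f) x v), v⟫‖
        ≤ ‖gradient f (x + s • v) - s • (fderiv ℝ (gradient f) x v)‖ * ‖v‖ := by
          rw [Real.norm_eq_abs]; exact abs_real_inner_le_norm _ _
      _ ≤ (ε / (‖v‖ + 1) * |s|) * ‖v‖ := by
          apply mul_le_mul_of_nonneg_right h1 (norm_nonneg v)
      _ ≤ ε * t := by
          have h3 : |s| ≤ t := by rw [abs_of_nonneg hs.1]; exact hs.2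
          have h5 : 0 ≤ ‖v‖ := norm_nonneg v
          have hd : 0 ≤ ε / (‖v‖ + 1) := le_of_lt hε'
          have h6 : ε / (‖v‖ + 1) * (‖v‖ + 1) = ε := by field_simp
          calc ε / (‖v‖ + 1) * |s| * ‖v‖
              ≤ ε / (‖v‖ + 1) * t * (‖v‖ + 1) := by nlinarith [abs_nonneg s]
            _ = ε * t := by rw [mul_right_comm, h6]
  have hmv := Convex.norm_image_sub_le_of_norm_hasDerivWithin_le
    (fun s hs => (hψ' s).hasDerivWithinAt) hbound (convex_Icc 0 t)
    (Set.left_mem_Icc.mpr ht0) (Set.right_mem_Icc.mpr ht0)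
  have hψ0 : ψ 0 = 0 := by simp [hψ, hfx]
  rw [hψ0, sub_zero] at hmv
  have : ‖ψ t‖ ≤ ε * t * t := by
    calc ‖ψ t‖ ≤ ε * t * ‖t - 0‖ := hmv
      _ = ε * t * t := by rw [sub_zero, Real.norm_eq_abs, abs_of_nonneg ht0]
  calc |f (x + t • v) - c * t ^ 2 / 2| = ‖ψ t‖ := rfl
    _ ≤ ε * t * t := this
    _ = ε * t ^ 2 := by ring

-- positive semidefiniteness of the Hessian at a minimizer
lemma hess_psd {f : E → ℝ} (hf : ContDiff ℝ 2 f) (hgrad : ContDiff ℝ 1 (gradient f))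
    (hpos : ∀ y, 0 ≤ f y) {x : E} (hfx : f x = 0) (hx0 : gradient f x = 0) (v : E) :
    0 ≤ ⟪fderiv ℝ (gradient f) x v, v⟫ := by
  by_contra hcon
  push_neg at hcon
  set c := ⟪fderiv ℝ (gradient f) x v, v⟫ with hc
  have hε : (0:ℝ) < -c / 8 := by linarith
  obtain ⟨δ, hδ, hδ'⟩ := f_expansion hf hgrad hfx hx0 v hε
  set t := δ / 2 with ht
  have ht0 : 0 < t := by linarith
  have h1 := hδ' t (le_of_lt ht0) (by rw [ht]; linarith)
  have h2 : 0 ≤ f (x + t • v) := hpos _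
  have h3 : f (x + t • v) - c * t ^ 2 / 2 ≤ -c / 8 * t ^ 2 := (abs_le.mp h1).2
  nlinarith [sq_nonneg t, mul_pos ht0 ht0]

-- the spectral gap inequality from the PL condition
lemma hess_gap {f : E → ℝ} (hf : ContDiff ℝ 2 f) (hgrad : ContDiff ℝ 1 (gradient f))
    (hPL : ∀ y, ‖gradient f y‖ ^ 2 ≥ f y) {x : E} (hfx : f x = 0)
    (hx0 : gradient f x = 0) (v : E) :
    ⟪fderiv ℝ (gradient f) x v, v⟫ ≤ 2 * ‖fderiv ℝ (gradient f) x v‖ ^ 2 := by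
  set c := ⟪fderiv ℝ (gradient f) x v, v⟫ with hc
  set a := ‖fderiv ℝ (gradient f) x v‖ with ha
  have ha0 : 0 ≤ a := norm_nonneg _
  by_contra hcon
  push_neg at hcon
  -- c / 2 > a ^ 2
  have hkey : c / 2 - a ^ 2 > 0 := by nlinarith
  set ε := min 1 ((c / 2 - a ^ 2) / (2 * a + 3)) with hε
  have hεpos : 0 < ε := by
    apply lt_min one_pos
    apply div_pos hkey
    linarith
  have hε1 : ε ≤ 1 := min_le_left _ _
  have hε2 : ε ≤ (c / 2 - a ^ 2) / (2 * a + 3) := min_le_right _ _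
  obtain ⟨δ₁, hδ₁, hδ₁'⟩ := grad_expansion hgrad hx0 v hεpos
  obtain ⟨δ₂, hδ₂, hδ₂'⟩ := f_expansion hf hgrad hfx hx0 v hεpos
  set t := min δ₁ δ₂ / 2 with htdef
  have ht0 : 0 < t := by
    have := lt_min hδ₁ hδ₂
    positivity
  have ht1 : |t| < δ₁ := by
    rw [abs_of_pos ht0]
    calc t < min δ₁ δ₂ := by rw [htdef]; linarith [lt_min hδ₁ hδ₂]
      _ ≤ δ₁ := min_le_left _ _
  have ht2 : t < δ₂ := by
    calc t < min δ₁ δ₂ := by rw [htdef]; linarith [lt_min hδ₁ hδ₂]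
      _ ≤ δ₂ := min_le_right _ _
  have h1 := hδ₁' t ht1
  have h2 := hδ₂' t (le_of_lt ht0) ht2
  have hPLt := hPL (x + t • v)
  -- ‖grad‖ ≤ t * a + ε * t
  have h3 : ‖gradient f (x + t • v)‖ ≤ t * (a + ε) := by
    have := norm_sub_norm_le (gradient f (x + t • v)) (t • (fderiv ℝ (gradient f) x v))
    rw [norm_smul, Real.norm_eq_abs, abs_of_pos ht0] at this
    have habs : |t| = t := abs_of_pos ht0
    rw [habs] at h1
    nlinarith
  -- f ≥ c t²/2 − ε t²
  have h4 : c * t ^ 2 / 2 - ε * t ^ 2 ≤ f (x + t • v) := by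
    have := (abs_le.mp h2).1
    linarith
  -- combine
  have h5 : ‖gradient f (x + t • v)‖ ^ 2 ≤ t ^ 2 * (a + ε) ^ 2 := by
    have hnn : 0 ≤ ‖gradient f (x + t • v)‖ := norm_nonneg _
    nlinarith
  have h6 : c / 2 - ε ≤ (a + ε) ^ 2 := by
    have := le_trans h4 (le_trans hPLt h5)
    have ht2 : 0 < t ^ 2 := by positivity
    nlinarith
  -- but ε was chosen small enough to contradict this
  have h7 : (a + ε) ^ 2 + ε ≤ a ^ 2 + ε * (2 * a + 3) := by nlinarith
  have h8 : ε * (2 * a + 3) ≤ c / 2 - a ^ 2 :=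
    (le_div_iff₀ (by linarith : (0:ℝ) < 2 * a + 3)).mp hε2
  nlinarith

lemma descent_basic {f : E → ℝ} (hf : ContDiff ℝ 2 f) {R L : ℝ}
    (hLip : ∀ p q : E, p ∈ closedBall 0 R → q ∈ closedBall 0 R →
      ‖gradient f p - gradient f q‖ ≤ L * ‖p - q‖)
    {p : E} {t : ℝ} (ht0 : 0 ≤ t) (hp : p ∈ closedBall (0:E) R)
    (hq : p - t • gradient f p ∈ closedBall (0:E) R) :
    f (p - t • gradient f p) ≤ f p - (t - L * t ^ 2 / 2) * ‖gradient f p‖ ^ 2 := by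
  set w : E := -(t • gradient f p) with hw
  have hqw : p - t • gradient f p = p + w := by rw [hw]; abel
  rw [hqw] at hq ⊢
  -- membership of the segment
  have hmem : ∀ s : ℝ, s ∈ Icc (0:ℝ) 1 → p + s • w ∈ closedBall (0:E) R := by
    intro s hs
    have h1 : p + s • w ∈ segment ℝ p (p + w) := by
      rw [segment_eq_image']
      exact ⟨s, hs, by simp⟩
    exact (convex_closedBall (0:E) R).segment_subset hp hq h1
  set ψ : ℝ → ℝ := fun s =>
    f (p + s • w) - s * ⟪gradient f p, w⟫ - s ^ 2 * (L * ‖w‖ ^ 2 / 2) with hψ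
  have hψd : ∀ s : ℝ, HasDerivAt ψ
      (⟪gradient f (p + s • w), w⟫ - ⟪gradient f p, w⟫ - s * (L * ‖w‖ ^ 2)) s := by
    intro s
    have h1 : HasDerivAt (fun u : ℝ => f (p + u • w)) ⟪gradient f (p + s • w), w⟫ s := by
      have hline : HasDerivAt (fun u : ℝ => p + u • w) w s := by
        simpa using ((hasDerivAt_id s).smul_const w).const_add p
      have hF := ((hf.differentiable (by norm_num)) (p + s • w)).hasFDerivAt
      have h := hF.comp_hasDerivAt s hline
      rw [inner_gradient_eq]
      exact h
    have h2 : HasDerivAt (fun u : ℝ => u * ⟪gradient f p, w⟫) ⟪gradient f p, w⟫ s := by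
      simpa using (hasDerivAt_id s).mul_const ⟪gradient f p, w⟫
    have h3 : HasDerivAt (fun u : ℝ => u ^ 2 * (L * ‖w‖ ^ 2 / 2)) (s * (L * ‖w‖ ^ 2)) s := by
      have := (hasDerivAt_pow 2 s).mul_const (L * ‖w‖ ^ 2 / 2)
      refine this.congr_deriv ?_
      ring
    exact (h1.sub h2).sub h3
  have hanti : AntitoneOn ψ (Icc (0:ℝ) 1) := by
    apply antitoneOn_of_deriv_nonpos (convex_Icc 0 1)
    · have hc1 : Continuous fun s : ℝ => f (p + s • w) :=
        hf.continuous.comp (continuous_const.add (continuous_id.smul continuous_const))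
      have hc : Continuous ψ := by
        rw [hψ]
        exact (hc1.sub ((continuous_id.mul continuous_const))).sub
          ((continuous_pow 2).mul continuous_const)
      exact hc.continuousOn
    · intro s hs
      exact (hψd s).differentiableAt.differentiableWithinAt
    · intro s hs
      rw [interior_Icc] at hs
      rw [(hψd s).deriv]
      have hs0 : (0:ℝ) ≤ s := le_of_lt hs.1
      have hs1 : s ≤ 1 := le_of_lt hs.2
      have hmem' := hmem s ⟨hs0, hs1⟩
      have hlip' := hLip (p + s • w) p hmem' hp
      have h1 : ⟪gradient f (p + s • w) - gradient f p, w⟫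
          ≤ ‖gradient f (p + s • w) - gradient f p‖ * ‖w‖ := real_inner_le_norm _ _
      have h2 : ‖(p + s • w) - p‖ = s * ‖w‖ := by
        simp [norm_smul, abs_of_nonneg hs0]
      rw [h2] at hlip'
      have h3 : ⟪gradient f (p + s • w), w⟫ - ⟪gradient f p, w⟫
          = ⟪gradient f (p + s • w) - gradient f p, w⟫ := by rw [inner_sub_left]
      rw [h3]
      have h4 : ‖gradient f (p + s • w) - gradient f p‖ * ‖w‖ ≤ L * (s * ‖w‖) * ‖w‖ :=
        mul_le_mul_of_nonneg_right hlip' (norm_nonneg w)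
      nlinarith [norm_nonneg w]
  have hfinal := hanti (Set.left_mem_Icc.mpr zero_le_one) (Set.right_mem_Icc.mpr zero_le_one)
    zero_le_one
  have hψ0 : ψ 0 = f p := by simp [hψ]
  have hψ1 : ψ 1 = f (p + w) - ⟪gradient f p, w⟫ - L * ‖w‖ ^ 2 / 2 := by
    simp [hψ]
  rw [hψ0, hψ1] at hfinal
  have hiw : ⟪gradient f p, w⟫ = -t * ‖gradient f p‖ ^ 2 := by
    rw [hw, inner_neg_right, real_inner_smul_right, real_inner_self_eq_norm_sq]
    ring
  have hnw : ‖w‖ ^ 2 = t ^ 2 * ‖gradient f p‖ ^ 2 := by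
    rw [hw, norm_neg, norm_smul, Real.norm_eq_abs, mul_pow, sq_abs]
  rw [hiw, hnw] at hfinal
  nlinarith [hfinal]

-- copies of earlier lemmas (assume available): inner_gradient_eq, grad_zero_at_min, descent_basic
lemma descent_step {f : E → ℝ} (hf : ContDiff ℝ 2 f) (hpos : ∀ y, 0 ≤ f y)
    (hPL : ∀ y, ‖gradient f y‖ ^ 2 ≥ f y) {R L G t₀ : ℝ} (hR0 : 0 ≤ R)
    (hLip : ∀ p q : E, p ∈ closedBall 0 (R + 1) → q ∈ closedBall 0 (R + 1) →
      ‖gradient f p - gradient f q‖ ≤ L * ‖p - q‖)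
    (hGb : ∀ q : E, q ∈ closedBall (0:E) (R + 1) → ‖gradient f q‖ ≤ G)
    (hL1 : 1 ≤ L) (hG1 : 1 ≤ G)
    (ht1 : 0 < t₀) (ht2 : t₀ ≤ 1/L) (ht3 : t₀ ≤ 1/G)
    {p : E} (hp : ‖p‖ ≤ R) :
    f (p - t₀ • gradient f p) ≤ (1 - t₀/2) * f p ∧
    ‖(p - t₀ • gradient f p) - p‖ ≤
      4 * (Real.sqrt (f p) - Real.sqrt (f (p - t₀ • gradient f p))) := by
  have hL0 : (0:ℝ) < L := by linarith
  have hG0 : (0:ℝ) < G := by linarith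
  have hpmem : p ∈ closedBall (0:E) (R + 1) := by
    rw [mem_closedBall_zero_iff]; linarith
  have hgb := hGb p hpmem
  have hstep : ‖t₀ • gradient f p‖ ≤ 1 := by
    rw [norm_smul, Real.norm_eq_abs, abs_of_pos ht1]
    calc t₀ * ‖gradient f p‖ ≤ (1/G) * G := by
          apply mul_le_mul ht3 hgb (norm_nonneg _) (by positivity)
      _ = 1 := by field_simp
  have hqmem : p - t₀ • gradient f p ∈ closedBall (0:E) (R + 1) := by
    rw [mem_closedBall_zero_iff]
    calc ‖p - t₀ • gradient f p‖ ≤ ‖p‖ + ‖t₀ • gradient f p‖ := norm_sub_le _ _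
      _ ≤ R + 1 := by linarith
  have hdb := descent_basic hf hLip (le_of_lt ht1) hpmem hqmem
  have hcoef : t₀ / 2 ≤ t₀ - L * t₀ ^ 2 / 2 := by
    have h1 : L * t₀ ≤ 1 := by
      calc L * t₀ ≤ L * (1/L) := by apply mul_le_mul_of_nonneg_left ht2 (le_of_lt hL0)
        _ = 1 := by field_simp
    nlinarith
  have hkey : f (p - t₀ • gradient f p) ≤ f p - (t₀/2) * ‖gradient f p‖ ^ 2 := by
    have hsq : 0 ≤ ‖gradient f p‖ ^ 2 := sq_nonneg _
    nlinarith [hdb]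
  constructor
  · have := hPL p
    nlinarith [hkey]
  · -- distance estimate
    rw [sub_sub_cancel_left, norm_neg]
    by_cases hfp : f p = 0
    · have hg0 : gradient f p = 0 := grad_zero_at_min hpos hfp
      rw [hg0]
      have : f (p - t₀ • (0:E)) = f p := by simp
      simp [hfp, this]
    · have hfp0 : 0 < f p := lt_of_le_of_ne (hpos p) (Ne.symm hfp)
      set F := f p with hF
      set F' := f (p - t₀ • gradient f p) with hF'
      set u := ‖gradient f p‖ with hu
      set s := Real.sqrt F with hs
      set s' := Real.sqrt F' with hs'
      have hF'0 : 0 ≤ F' := hpos _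
      have hu0 : 0 ≤ u := norm_nonneg _
      have hu2 : F ≤ u ^ 2 := hPL p
      have hup : 0 < u := by nlinarith
      have hs2 : s ^ 2 = F := Real.sq_sqrt (le_of_lt hfp0)
      have hs'2 : s' ^ 2 = F' := Real.sq_sqrt hF'0
      have hs0 : 0 < s := Real.sqrt_pos.mpr hfp0
      have hs'0 : 0 ≤ s' := Real.sqrt_nonneg _
      have hsu : s ≤ u := by
        rw [hs]
        calc Real.sqrt F ≤ Real.sqrt (u ^ 2) := Real.sqrt_le_sqrt hu2
          _ = u := by rw [Real.sqrt_sq hu0]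
      have hss' : s' ≤ s := by
        apply Real.sqrt_le_sqrt
        nlinarith [hkey]
      have hnorm : ‖t₀ • gradient f p‖ = t₀ * u := by
        rw [norm_smul, Real.norm_eq_abs, abs_of_pos ht1]
      rw [hnorm]
      -- main arithmetic
      have key : (s - s') * (s + s') = F - F' := by nlinarith [hs2, hs'2]
      have h1 : (t₀/2) * u ^ 2 ≤ F - F' := by nlinarith [hkey]
      have h2 : s + s' ≤ 2 * u := by linarith
      have h3 : 0 < s + s' := by linarith
      have h4 : t₀ * u * (s + s') ≤ 4 * (F - F') := by
        nlinarith [mul_le_mul_of_nonneg_left h2 (le_of_lt (mul_pos ht1 hup)), h1]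
      have h5 : t₀ * u * (s + s') ≤ 4 * (s - s') * (s + s') := by nlinarith [key, h4]
      exact le_of_mul_le_mul_right (by linarith [h5]) h3

lemma descent_iterate {f : E → ℝ} (hf : ContDiff ℝ 2 f) (hpos : ∀ y, 0 ≤ f y)
    (hPL : ∀ y, ‖gradient f y‖ ^ 2 ≥ f y) {R₀ M L G t₀ : ℝ} (hR0 : 0 ≤ R₀) (hM0 : 0 ≤ M)
    (hLip : ∀ p q : E, p ∈ closedBall 0 (R₀ + 4 * Real.sqrt M + 1) →
      q ∈ closedBall 0 (R₀ + 4 * Real.sqrt M + 1) →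
      ‖gradient f p - gradient f q‖ ≤ L * ‖p - q‖)
    (hGb : ∀ q : E, q ∈ closedBall (0:E) (R₀ + 4 * Real.sqrt M + 1) → ‖gradient f q‖ ≤ G)
    (hL1 : 1 ≤ L) (hG1 : 1 ≤ G)
    (ht1 : 0 < t₀) (ht2 : t₀ ≤ 1/L) (ht3 : t₀ ≤ 1/G)
    {p : E} (hp0 : ‖p‖ ≤ R₀) (hfp : f p ≤ M) :
    ∀ k : ℕ, ‖(fun q => q - t₀ • gradient f q)^[k] p - p‖
        + 4 * Real.sqrt (f ((fun q => q - t₀ • gradient f q)^[k] p)) ≤ 4 * Real.sqrt (f p) ∧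
      f ((fun q => q - t₀ • gradient f q)^[k] p) ≤ (1 - t₀/2) ^ k * f p := by
  set T : E → E := fun q => q - t₀ • gradient f q with hT
  set R := R₀ + 4 * Real.sqrt M with hRdef
  have hR : 0 ≤ R := by
    have := Real.sqrt_nonneg M
    rw [hRdef]; linarith
  have hsqrtM : Real.sqrt (f p) ≤ Real.sqrt M := Real.sqrt_le_sqrt hfp
  intro k
  induction k with
  | zero => simp [Real.sqrt_nonneg]
  | succ k ih =>
    obtain ⟨ih1, ih2⟩ := ih
    set pk := T^[k] p with hpk
    have hfk0 : 0 ≤ f pk := hpos _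
    have hsqrtk : 0 ≤ Real.sqrt (f pk) := Real.sqrt_nonneg _
    have hpkR : ‖pk‖ ≤ R := by
      have h1 : ‖pk - p‖ ≤ 4 * Real.sqrt (f p) := by linarith
      have hid : pk = (pk - p) + p := by abel
      calc ‖pk‖ = ‖(pk - p) + p‖ := by rw [← hid]
        _ ≤ ‖pk - p‖ + ‖p‖ := norm_add_le _ _
        _ ≤ 4 * Real.sqrt (f p) + R₀ := by linarith
        _ ≤ R := by rw [hRdef]; linarith
    have hstep := descent_step hf hpos hPL hR hLip hGb hL1 hG1 ht1 ht2 ht3 hpkR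
    have hTpk : T^[k+1] p = T pk := by rw [hpk, Function.iterate_succ_apply']
    constructor
    · rw [hTpk]
      have htri : ‖T pk - p‖ ≤ ‖T pk - pk‖ + ‖pk - p‖ := by
        have hid2 : T pk - p = (T pk - pk) + (pk - p) := by abel
        rw [hid2]
        exact norm_add_le _ _
      have h2 := hstep.2
      linarith
    · rw [hTpk]
      have h1 := hstep.1
      have hL0 : (0:ℝ) < L := lt_of_lt_of_le one_pos hL1
      have hcoef : (0:ℝ) ≤ 1 - t₀/2 := by
        have ht01 : t₀ ≤ 1 := le_trans ht2 (by rw [div_le_one hL0]; exact hL1)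
        linarith
      calc f (T pk) ≤ (1 - t₀/2) * f pk := h1
        _ ≤ (1 - t₀/2) * ((1 - t₀/2) ^ k * f p) := by
            apply mul_le_mul_of_nonneg_left ih2 hcoef
        _ = (1 - t₀/2) ^ (k+1) * f p := by ring

theorem K_preconnected {f : E → ℝ} (hf : ContDiff ℝ 2 f) (hpos : ∀ y, 0 ≤ f y)
    (hPL : ∀ y, ‖gradient f y‖ ^ 2 ≥ f y) (hcpt : IsCompact {x : E | f x = 0}) :
    IsPreconnected {x : E | f x = 0} := by
  set K := {x : E | f x = 0} with hKdef
  by_contra hcon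
  rw [IsPreconnected] at hcon
  push_neg at hcon
  obtain ⟨u, v, hu, hv, hcov, hKu, hKv, hdisj⟩ := hcon
  set A := K ∩ u with hAdef
  set B := K ∩ v with hBdef
  obtain ⟨a, haA⟩ : A.Nonempty := hKu
  obtain ⟨b, hbB⟩ : B.Nonempty := hKv
  have hKcl : IsClosed K := hcpt.isClosed
  have hAeq : A = K \ v := by
    ext z
    constructor
    · rintro ⟨hzK, hzu⟩
      refine ⟨hzK, fun hzv => ?_⟩
      have : z ∈ K ∩ (u ∩ v) := ⟨hzK, hzu, hzv⟩
      rw [hdisj] at this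
      exact this
    · rintro ⟨hzK, hzv⟩
      rcases hcov hzK with hzu | hzv'
      · exact ⟨hzK, hzu⟩
      · exact absurd hzv' hzv
  have hBeq : B = K \ u := by
    ext z
    constructor
    · rintro ⟨hzK, hzv⟩
      refine ⟨hzK, fun hzu => ?_⟩
      have : z ∈ K ∩ (u ∩ v) := ⟨hzK, hzu, hzv⟩
      rw [hdisj] at this
      exact this
    · rintro ⟨hzK, hzu⟩
      rcases hcov hzK with hzu' | hzv
      · exact absurd hzu' hzu
      · exact ⟨hzK, hzv⟩
  have hAcl : IsClosed A := by rw [hAeq]; exact hKcl.sdiff hv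
  have hBcl : IsClosed B := by rw [hBeq]; exact hKcl.sdiff hu
  have hAcp : IsCompact A := hcpt.of_isClosed_subset hAcl inter_subset_left
  have hBcp : IsCompact B := hcpt.of_isClosed_subset hBcl inter_subset_left
  have hABdisj : A ∩ B = ∅ := by
    rw [hAdef, hBdef]
    ext z
    simp only [Set.mem_inter_iff, Set.mem_empty_iff_false, iff_false]
    rintro ⟨⟨hzK, hzu⟩, ⟨_, hzv⟩⟩
    have : z ∈ K ∩ (u ∩ v) := ⟨hzK, hzu, hzv⟩
    rw [hdisj] at this
    exact this
  have hABcov : A ∪ B = K := by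
    rw [hAdef, hBdef, ← Set.inter_union_distrib_left]
    exact Set.inter_eq_self_of_subset_left hcov
  -- the separation distance δ
  obtain ⟨p₀, hp₀A, hp₀min⟩ := hAcp.exists_isMinOn ⟨a, haA⟩
    (continuous_infDist_pt B).continuousOn
  set δ := infDist p₀ B with hδdef
  have hp₀B : p₀ ∉ B := by
    intro hB
    have : p₀ ∈ A ∩ B := ⟨hp₀A, hB⟩
    rw [hABdisj] at this
    exact this
  have hδpos : 0 < δ := by
    rw [hδdef]
    exact (hBcl.notMem_iff_infDist_pos ⟨b, hbB⟩).mp hp₀B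
  have hsep : ∀ p ∈ A, ∀ q ∈ B, δ ≤ dist p q := by
    intro p hp q hq
    calc δ ≤ infDist p B := hp₀min hp
      _ ≤ dist p q := infDist_le_dist_of_mem hq
  -- crossing points are δ/2-far from K
  have hcross : ∀ z : E, infDist z A = infDist z B → ∀ w ∈ K, δ/2 ≤ dist z w := by
    intro z heq w hw
    obtain ⟨pA, hpA, hdA⟩ := hAcp.exists_infDist_eq_dist ⟨a, haA⟩ z
    obtain ⟨pB, hpB, hdB⟩ := hBcp.exists_infDist_eq_dist ⟨b, hbB⟩ z
    have h1 : δ ≤ dist pA pB := hsep pA hpA pB hpB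
    have h2 : dist pA pB ≤ dist pA z + dist z pB := dist_triangle _ _ _
    have h3 : dist pA z = infDist z A := by rw [dist_comm]; exact hdA.symm
    have h4 : dist z pB = infDist z B := hdB.symm
    have h5 : δ ≤ 2 * infDist z B := by
      rw [h3, h4, heq] at h2
      linarith
    rw [← hABcov] at hw
    rcases hw with hwA | hwB
    · calc δ/2 ≤ infDist z A := by rw [heq]; linarith
        _ ≤ dist z w := infDist_le_dist_of_mem hwA
    · calc δ/2 ≤ infDist z B := by linarith
        _ ≤ dist z w := infDist_le_dist_of_mem hwB
  -- bound on the segment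
  have haK : f a = 0 := haA.1
  have hbK : f b = 0 := hbB.1
  have hsegcp : IsCompact (segment ℝ a b) := by
    rw [segment_eq_image']
    exact (isCompact_Icc).image (by continuity)
  obtain ⟨z₀, hz₀, hz₀max⟩ := hsegcp.exists_isMaxOn ⟨a, left_mem_segment ℝ a b⟩
    hf.continuous.continuousOn
  set M := f z₀ with hMdef
  have hM0 : 0 ≤ M := hpos z₀
  have hMseg : ∀ z ∈ segment ℝ a b, f z ≤ M := fun z hz => hz₀max hz
  set R₀ := max ‖a‖ ‖b‖ with hR₀def
  have hR₀0 : (0:ℝ) ≤ R₀ := le_trans (norm_nonneg a) (le_max_left _ _)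
  have hsegball : segment ℝ a b ⊆ closedBall (0:E) R₀ := by
    apply (convex_closedBall (0:E) R₀).segment_subset
    · rw [mem_closedBall_zero_iff]; exact le_max_left _ _
    · rw [mem_closedBall_zero_iff]; exact le_max_right _ _
  set R := R₀ + 4 * Real.sqrt M with hRdef
  have hR0 : 0 ≤ R := by
    have := Real.sqrt_nonneg M
    rw [hRdef]; linarith
  set X := closedBall (0:E) (R + 1) with hXdef
  have hXcp : IsCompact X := isCompact_closedBall _ _
  have hXne : X.Nonempty := ⟨0, by rw [hXdef, mem_closedBall_zero_iff]; simp; linarith⟩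
  -- Lipschitz bound
  have hgradc : Continuous (gradient f) := (contDiff_grad hf).continuous
  have hHc : Continuous fun y : E => fderiv ℝ (gradient f) y :=
    (contDiff_grad hf).continuous_fderiv one_ne_zero
  obtain ⟨y₀, hy₀X, hy₀max⟩ := hXcp.exists_isMaxOn hXne (hHc.norm.continuousOn)
  set L := ‖fderiv ℝ (gradient f) y₀‖ + 1 with hLdef
  have hL1 : 1 ≤ L := by have := norm_nonneg (fderiv ℝ (gradient f) y₀); rw [hLdef]; linarith
  have hLbound : ∀ y ∈ X, ‖fderiv ℝ (gradient f) y‖ ≤ L := by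
    intro y hy
    have := hy₀max hy
    rw [hLdef]
    simp only [Set.mem_setOf_eq] at this
    linarith
  have hLip : ∀ p q : E, p ∈ closedBall 0 (R + 1) → q ∈ closedBall 0 (R + 1) →
      ‖gradient f p - gradient f q‖ ≤ L * ‖p - q‖ := by
    intro p q hp hq
    exact Convex.norm_image_sub_le_of_norm_hasFDerivWithin_le
      (fun y hy => ((contDiff_grad hf).differentiable one_ne_zero y).hasFDerivAt.hasFDerivWithinAt)
      hLbound (convex_closedBall _ _) hq hp
  -- gradient bound
  obtain ⟨y₁, hy₁X, hy₁max⟩ := hXcp.exists_isMaxOn hXne (hgradc.norm.continuousOn)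
  set G := ‖gradient f y₁‖ + 1 with hGdef
  have hG1 : 1 ≤ G := by have := norm_nonneg (gradient f y₁); rw [hGdef]; linarith
  have hGb : ∀ q ∈ closedBall (0:E) (R + 1), ‖gradient f q‖ ≤ G := by
    intro q hq
    have := hy₁max hq
    rw [hGdef]
    simp only [Set.mem_setOf_eq] at this
    linarith
  -- the step size
  set t₀ := min (1/L) (1/G) with ht₀def
  have hL0 : (0:ℝ) < L := lt_of_lt_of_le one_pos hL1
  have hG0 : (0:ℝ) < G := lt_of_lt_of_le one_pos hG1
  have ht1 : 0 < t₀ := lt_min (by positivity) (by positivity)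
  have ht2 : t₀ ≤ 1/L := min_le_left _ _
  have ht3 : t₀ ≤ 1/G := min_le_right _ _
  have ht01 : t₀ ≤ 1 := le_trans ht2 (by rw [div_le_one hL0]; exact hL1)
  -- the discrete flow
  set T : E → E := fun q => q - t₀ • gradient f q with hTdef
  have hTc : Continuous T := continuous_id.sub (hgradc.const_smul t₀)
  have hTa : T a = a := by
    rw [hTdef]
    simp [grad_zero_at_min hpos haK]
  have hTb : T b = b := by
    rw [hTdef]
    simp [grad_zero_at_min hpos hbK]
  -- the path
  set σ : ℝ → E := fun s => a + s • (b - a) with hσdef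
  have hσc : Continuous σ := continuous_const.add (continuous_id.smul continuous_const)
  have hσseg : ∀ s ∈ Icc (0:ℝ) 1, σ s ∈ segment ℝ a b := by
    intro s hs
    rw [segment_eq_image']
    exact ⟨s, hs, rfl⟩
  -- main crossing construction
  have crossing : ∀ k : ℕ, ∃ z : E, (∀ w ∈ K, δ/2 ≤ dist z w) ∧ ‖z‖ ≤ R + 1 ∧
      f z ≤ (1 - t₀/2) ^ k * M := by
    intro k
    set γ : ℝ → E := fun s => T^[k] (σ s) with hγdef
    have hγc : Continuous γ := (hTc.iterate k).comp hσc
    have hγ0 : γ 0 = a := by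
      rw [hγdef]
      simp only [hσdef]
      rw [show a + (0:ℝ) • (b - a) = a by simp]
      exact Function.iterate_fixed hTa k
    have hγ1 : γ 1 = b := by
      rw [hγdef]
      simp only [hσdef]
      rw [show a + (1:ℝ) • (b - a) = b by simp]
      exact Function.iterate_fixed hTb k
    set h : ℝ → ℝ := fun s => infDist (γ s) A - infDist (γ s) B with hhdef
    have hhc : Continuous h :=
      ((continuous_infDist_pt A).comp hγc).sub ((continuous_infDist_pt B).comp hγc)
    have hh0 : h 0 ≤ -δ := by
      rw [hhdef]
      simp only [hγ0]
      have h1 : infDist a A = 0 := infDist_zero_of_mem haA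
      have h2 : δ ≤ infDist a B := by
        obtain ⟨q, hq, hdq⟩ := hBcp.exists_infDist_eq_dist ⟨b, hbB⟩ a
        rw [hdq]
        exact hsep a haA q hq
      simp only [h1]
      linarith
    have hh1 : δ ≤ h 1 := by
      rw [hhdef]
      simp only [hγ1]
      have h1 : infDist b B = 0 := infDist_zero_of_mem hbB
      have h2 : δ ≤ infDist b A := by
        obtain ⟨q, hq, hdq⟩ := hAcp.exists_infDist_eq_dist ⟨a, haA⟩ b
        rw [hdq, dist_comm]
        exact hsep q hq b hbB
      simp only [h1]
      linarith
    have hmem : (0:ℝ) ∈ Icc (h 0) (h 1) := ⟨by linarith, by linarith⟩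
    obtain ⟨s, hs, hhs⟩ := intermediate_value_Icc zero_le_one hhc.continuousOn hmem
    set z := γ s with hzdef
    have heq : infDist z A = infDist z B := by
      have : infDist (γ s) A - infDist (γ s) B = 0 := hhs
      rw [hzdef]; linarith
    -- iterate bounds at p = σ s
    have hp0 : ‖σ s‖ ≤ R₀ := by
      rw [← mem_closedBall_zero_iff]
      exact hsegball (hσseg s hs)
    have hfp : f (σ s) ≤ M := hMseg _ (hσseg s hs)
    have hit := descent_iterate hf hpos hPL hR₀0 hM0
      (by rw [hRdef] at hLip; exact hLip) (by rw [hRdef] at hGb; exact hGb)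
      hL1 hG1 ht1 ht2 ht3 hp0 hfp k
    obtain ⟨hit1, hit2⟩ := hit
    have hzT : z = (fun q => q - t₀ • gradient f q)^[k] (σ s) := by
      rw [hzdef, hγdef]
    refine ⟨z, fun w hw => hcross z heq w hw, ?_, ?_⟩
    · -- norm bound
      have h1 : ‖z - σ s‖ ≤ 4 * Real.sqrt (f (σ s)) := by
        rw [hzT]
        have := Real.sqrt_nonneg (f ((fun q => q - t₀ • gradient f q)^[k] (σ s)))
        linarith [hit1]
      have h2 : Real.sqrt (f (σ s)) ≤ Real.sqrt M := Real.sqrt_le_sqrt hfp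
      have hid : z = (z - σ s) + σ s := by abel
      calc ‖z‖ = ‖(z - σ s) + σ s‖ := by rw [← hid]
        _ ≤ ‖z - σ s‖ + ‖σ s‖ := norm_add_le _ _
        _ ≤ 4 * Real.sqrt M + R₀ := by linarith
        _ ≤ R + 1 := by rw [hRdef]; linarith
    · -- value bound
      rw [hzT]
      calc f ((fun q => q - t₀ • gradient f q)^[k] (σ s)) ≤ (1 - t₀/2) ^ k * f (σ s) := hit2
        _ ≤ (1 - t₀/2) ^ k * M := by
            apply mul_le_mul_of_nonneg_left hfp
            apply pow_nonneg
            linarith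
  -- the compact set C of far crossing points
  set C := {z : E | ‖z‖ ≤ R + 1 ∧ δ/2 ≤ infDist z K} with hCdef
  have hCcl : IsClosed C := by
    apply IsClosed.inter
    · exact isClosed_le continuous_norm continuous_const
    · exact isClosed_le continuous_const (continuous_infDist_pt K)
  have hCcp : IsCompact C := by
    apply (isCompact_closedBall (0:E) (R+1)).of_isClosed_subset hCcl
    intro z hz
    rw [mem_closedBall_zero_iff]
    exact hz.1
  have hKne : K.Nonempty := ⟨a, haA.1⟩
  have hinC : ∀ z : E, (∀ w ∈ K, δ/2 ≤ dist z w) → ‖z‖ ≤ R + 1 → z ∈ C := by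
    intro z hz hn
    refine ⟨hn, ?_⟩
    obtain ⟨w, hw, hdw⟩ := hcpt.exists_infDist_eq_dist hKne z
    rw [hdw]
    exact hz w hw
  have hCne : C.Nonempty := by
    obtain ⟨z, hz1, hz2, _⟩ := crossing 0
    exact ⟨z, hinC z hz1 hz2⟩
  obtain ⟨zc, hzcC, hzcmin⟩ := hCcp.exists_isMinOn hCne hf.continuous.continuousOn
  set m := f zc with hmdef
  have hm0 : 0 < m := by
    rcases lt_or_eq_of_le (hpos zc) with h | h
    · exact h
    · exfalso
      have hzcK : zc ∈ K := by rw [hKdef]; exact Set.mem_setOf_eq ▸ h.symm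
      have h1 : infDist zc K = 0 := infDist_zero_of_mem hzcK
      have h2 := hzcC.2
      rw [h1] at h2
      linarith
  -- choose k large
  have hrlt : 1 - t₀/2 < 1 := by linarith
  obtain ⟨k, hk⟩ := exists_pow_lt_of_lt_one (show (0:ℝ) < m / (M + 1) by positivity) hrlt
  have hkM : (1 - t₀/2) ^ k * M < m := by
    have h1 : (1 - t₀/2) ^ k * (M + 1) < m := by
      rw [← lt_div_iff₀ (by linarith : (0:ℝ) < M + 1)] at *
      exact hk
    have h2 : (1 - t₀/2) ^ k * M ≤ (1 - t₀/2) ^ k * (M + 1) := by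
      apply mul_le_mul_of_nonneg_left (by linarith)
      apply pow_nonneg; linarith
    linarith
  obtain ⟨z, hz1, hz2, hz3⟩ := crossing k
  have hzC : z ∈ C := hinC z hz1 hz2
  have := hzcmin hzC
  simp only [Set.mem_setOf_eq] at this
  linarith

end PLAux

/-- The Hessian of a `C²` function with `min f = 0` satisfying
`‖∇f‖² ≥ f` and compact argmin has constant rank on the set of minimizers. -/
theorem pl_hessian_constant_rank (n : ℕ) (f : EuclideanSpace ℝ (Fin n) → ℝ)
    (hf : ContDiff ℝ 2 f) (hpos : ∀ x, 0 ≤ f x) (hmin : ∃ x, f x = 0)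
    (hPL : ∀ x, ‖gradient f x‖ ^ 2 ≥ f x)
    (hcpt : IsCompact {x | f x = 0}) :
    ∀ x ∈ {x | f x = 0}, ∀ y ∈ {x | f x = 0},
      Module.finrank ℝ (LinearMap.range (fderiv ℝ (gradient f) x :
          EuclideanSpace ℝ (Fin n) →ₗ[ℝ] EuclideanSpace ℝ (Fin n))) =
      Module.finrank ℝ (LinearMap.range (fderiv ℝ (gradient f) y :
          EuclideanSpace ℝ (Fin n) →ₗ[ℝ] EuclideanSpace ℝ (Fin n))) := by
  intro x hx y hy
  set K := {x : EuclideanSpace ℝ (Fin n) | f x = 0} with hKdef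
  have hgrad : ContDiff ℝ 1 (gradient f) := contDiff_grad hf
  set r : EuclideanSpace ℝ (Fin n) → ℕ := fun z =>
    Module.finrank ℝ (LinearMap.range (fderiv ℝ (gradient f) z :
      EuclideanSpace ℝ (Fin n) →ₗ[ℝ] EuclideanSpace ℝ (Fin n))) with hrdef
  -- rank equality for close minimizers
  have hrank_eq : ∀ z ∈ K, ∀ w ∈ K,
      ‖fderiv ℝ (gradient f) z - fderiv ℝ (gradient f) w‖ ≤ 1/8 → r z = r w := by
    intro z hz w hw hclose
    have hmk : ∀ p : EuclideanSpace ℝ (Fin n), p ∈ K → f p = 0 := fun p hp => hp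
    have hprops : ∀ p : EuclideanSpace ℝ (Fin n), p ∈ K →
        ((fderiv ℝ (gradient f) p : EuclideanSpace ℝ (Fin n) →ₗ[ℝ]
          EuclideanSpace ℝ (Fin n)).IsSymmetric ∧
        (∀ v, 0 ≤ ⟪(fderiv ℝ (gradient f) p : EuclideanSpace ℝ (Fin n) →ₗ[ℝ]
          EuclideanSpace ℝ (Fin n)) v, v⟫) ∧
        (∀ v, ⟪(fderiv ℝ (gradient f) p : EuclideanSpace ℝ (Fin n) →ₗ[ℝ]
          EuclideanSpace ℝ (Fin n)) v, v⟫ ≤ 2 * ‖(fderiv ℝ (gradient f) p :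
            EuclideanSpace ℝ (Fin n) →ₗ[ℝ] EuclideanSpace ℝ (Fin n)) v‖ ^ 2)) := by
      intro p hp
      have hfp : f p = 0 := hp
      have hg0 : gradient f p = 0 := grad_zero_at_min hpos hfp
      refine ⟨fun u v => ?_, fun v => ?_, fun v => ?_⟩
      · simpa using hess_symm hf p u v
      · simpa using hess_psd hf hgrad hpos hfp hg0 v
      · simpa using hess_gap hf hgrad hPL hfp hg0 v
    obtain ⟨hsymz, hpsdz, hgapz⟩ := hprops z hz
    obtain ⟨hsymw, hpsdw, hgapw⟩ := hprops w hw
    have hclose1 : ∀ v, ‖(fderiv ℝ (gradient f) z : EuclideanSpace ℝ (Fin n) →ₗ[ℝ]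
        EuclideanSpace ℝ (Fin n)) v - (fderiv ℝ (gradient f) w : EuclideanSpace ℝ (Fin n) →ₗ[ℝ]
        EuclideanSpace ℝ (Fin n)) v‖ ≤ (1/8) * ‖v‖ := by
      intro v
      have h1 : (fderiv ℝ (gradient f) z) v - (fderiv ℝ (gradient f) w) v
          = (fderiv ℝ (gradient f) z - fderiv ℝ (gradient f) w) v := by
        rw [ContinuousLinearMap.sub_apply]
      show ‖(fderiv ℝ (gradient f) z) v - (fderiv ℝ (gradient f) w) v‖ ≤ (1/8) * ‖v‖
      rw [h1]
      calc ‖(fderiv ℝ (gradient f) z - fderiv ℝ (gradient f) w) v‖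
          ≤ ‖fderiv ℝ (gradient f) z - fderiv ℝ (gradient f) w‖ * ‖v‖ :=
            ContinuousLinearMap.le_opNorm _ _
        _ ≤ (1/8) * ‖v‖ := mul_le_mul_of_nonneg_right hclose (norm_nonneg v)
    have hclose2 : ∀ v, ‖(fderiv ℝ (gradient f) w : EuclideanSpace ℝ (Fin n) →ₗ[ℝ]
        EuclideanSpace ℝ (Fin n)) v - (fderiv ℝ (gradient f) z : EuclideanSpace ℝ (Fin n) →ₗ[ℝ]
        EuclideanSpace ℝ (Fin n)) v‖ ≤ (1/8) * ‖v‖ := by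
      intro v
      have := hclose1 v
      rw [← norm_neg]
      simpa [neg_sub] using this
    exact le_antisymm (rank_le_of_close hsymz hpsdz hgapz hclose1)
      (rank_le_of_close hsymw hpsdw hgapw hclose2)
  -- local constancy of rank on K
  have hHc : Continuous fun z : EuclideanSpace ℝ (Fin n) => fderiv ℝ (gradient f) z :=
    hgrad.continuous_fderiv one_ne_zero
  have hloc : ∀ z : EuclideanSpace ℝ (Fin n), z ∈ K →
      ∃ ε, 0 < ε ∧ ∀ w ∈ K, dist w z < ε → r w = r z := by
    intro z hz
    have hca : ContinuousAt (fun p : EuclideanSpace ℝ (Fin n) => fderiv ℝ (gradient f) p) z :=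
      hHc.continuousAt
    rw [Metric.continuousAt_iff] at hca
    obtain ⟨ε, hε, hprop⟩ := hca (1/8) (by norm_num)
    refine ⟨ε, hε, fun w hw hdw => ?_⟩
    have := hprop hdw
    rw [dist_eq_norm] at this
    exact hrank_eq w hw z hz (le_of_lt this)
  choose ε hεpos hεprop using hloc
  -- glue via preconnectedness
  by_contra hne
  have hpre := K_preconnected hf hpos hPL hcpt
  set ε' : EuclideanSpace ℝ (Fin n) → ℝ := fun z => if hz : z ∈ K then ε z hz else 1 with hε'def
  have hε'pos : ∀ z ∈ K, 0 < ε' z := by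
    intro z hz
    rw [hε'def]
    simp only [hz, dif_pos]
    exact hεpos z hz
  have hε'prop : ∀ z (hz : z ∈ K), ∀ w ∈ K, dist w z < ε' z → r w = r z := by
    intro z hz w hw hdw
    rw [hε'def] at hdw
    simp only [hz, dif_pos] at hdw
    exact hεprop z hz w hw hdw
  set U := ⋃ z ∈ {w : EuclideanSpace ℝ (Fin n) | w ∈ K ∧ r w = r x}, ball z (ε' z) with hUdef
  set V := ⋃ z ∈ {w : EuclideanSpace ℝ (Fin n) | w ∈ K ∧ r w ≠ r x}, ball z (ε' z) with hVdef
  have hUopen : IsOpen U := isOpen_biUnion fun z _ => isOpen_ball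
  have hVopen : IsOpen V := isOpen_biUnion fun z _ => isOpen_ball
  have hcover : K ⊆ U ∪ V := by
    intro z hz
    by_cases hrz : r z = r x
    · left
      exact Set.mem_biUnion ⟨hz, hrz⟩ (mem_ball_self (hε'pos z hz))
    · right
      exact Set.mem_biUnion ⟨hz, hrz⟩ (mem_ball_self (hε'pos z hz))
  have hKU : (K ∩ U).Nonempty := by
    refine ⟨x, hx, ?_⟩
    exact Set.mem_biUnion ⟨hx, rfl⟩ (mem_ball_self (hε'pos x hx))
  have hKV : (K ∩ V).Nonempty := by
    refine ⟨y, hy, ?_⟩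
    exact Set.mem_biUnion ⟨hy, fun hcontra => hne hcontra.symm⟩ (mem_ball_self (hε'pos y hy))
  obtain ⟨w, hwK, hwU, hwV⟩ := hpre U V hUopen hVopen hcover hKU hKV
  obtain ⟨z₁, hz₁, hwz₁⟩ := Set.mem_iUnion₂.mp hwU
  obtain ⟨z₂, hz₂, hwz₂⟩ := Set.mem_iUnion₂.mp hwV
  have h1 : r w = r z₁ := hε'prop z₁ hz₁.1 w hwK (mem_ball.mp hwz₁)
  have h2 : r w = r z₂ := hε'prop z₂ hz₂.1 w hwK (mem_ball.mp hwz₂)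
  exact hz₂.2 (by rw [← h2, h1, hz₁.2])
end

section
/- Let f : ℝⁿ → ℝ be a C² function with min f = 0 satisfying ‖∇f(x)‖² ≥ f(x) for all x ∈ ℝⁿ, let K = argmin(f), let x ∈ K, and let π be the orthogonal projection of ℝⁿ onto the kernel of the Hessian H(x) = ∇²f(x). Then there exists r > 0 such that the restriction of π to K ∩ B(x, r) is injective, where B(x, r) is the open Euclidean ball of radius r centered at x. -/
set_option maxHeartbeats 1000000

/-- Near a minimizer `x` of a `C²` function with `min f = 0`
satisfying `‖∇f‖² ≥ f`, the orthogonal projection onto `Ker(∇²f(x))` is injective on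
`argmin(f) ∩ B(x, r)` for some `r > 0`. -/
theorem pl_projection_injective_on_argmin (n : ℕ) (f : EuclideanSpace ℝ (Fin n) → ℝ)
    (hf : ContDiff ℝ 2 f) (hpos : ∀ x, 0 ≤ f x) (hmin : ∃ x, f x = 0)
    (hPL : ∀ x, ‖gradient f x‖ ^ 2 ≥ f x)
    (x : EuclideanSpace ℝ (Fin n)) (hx : f x = 0) :
    ∃ r > (0 : ℝ),
      Set.InjOn
        (fun y => (Submodule.orthogonalProjection
          (LinearMap.ker (fderiv ℝ (gradient f) x :
            EuclideanSpace ℝ (Fin n) →ₗ[ℝ] EuclideanSpace ℝ (Fin n))) y :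
          EuclideanSpace ℝ (Fin n)))
        ({y | f y = 0} ∩ Metric.ball x r) := by
  classical
  set g : EuclideanSpace ℝ (Fin n) → EuclideanSpace ℝ (Fin n) := gradient f with hgdef
  -- g is C¹
  have hg1 : ContDiff ℝ 1 g := by
    have h1 : ContDiff ℝ 1 (fderiv ℝ f) := hf.fderiv_right (by norm_num)
    have h2 : g = fun y => (InnerProductSpace.toDual ℝ _).symm (fderiv ℝ f y) := rfl
    rw [h2]
    exact (InnerProductSpace.toDual ℝ _).symm.contDiff.comp h1
  -- gradient vanishes on the argmin set
  have hgrad0 : ∀ y, f y = 0 → g y = 0 := by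
    intro y hy
    have hloc : IsLocalMin f y := by
      apply Filter.Eventually.of_forall
      intro w; rw [hy]; exact hpos w
    have hfd : fderiv ℝ f y = 0 := hloc.fderiv_eq_zero
    show (InnerProductSpace.toDual ℝ _).symm (fderiv ℝ f y) = 0
    rw [hfd]; simp
  set H : EuclideanSpace ℝ (Fin n) →L[ℝ] EuclideanSpace ℝ (Fin n) := fderiv ℝ g x with hHdef
  set K : Submodule ℝ (EuclideanSpace ℝ (Fin n)) :=
    LinearMap.ker (H : EuclideanSpace ℝ (Fin n) →ₗ[ℝ] EuclideanSpace ℝ (Fin n)) with hKdef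
  -- restriction of H to Kᗮ is injective, hence antilipschitz
  set L : (Kᗮ : Submodule ℝ (EuclideanSpace ℝ (Fin n))) →ₗ[ℝ] EuclideanSpace ℝ (Fin n) :=
    (H : EuclideanSpace ℝ (Fin n) →ₗ[ℝ] EuclideanSpace ℝ (Fin n)).comp Kᗮ.subtype with hLdef
  have hLker : LinearMap.ker L = ⊥ := by
    rw [LinearMap.ker_eq_bot']
    rintro ⟨v, hv⟩ hLv
    have hvK : v ∈ K := LinearMap.mem_ker.mpr (by simpa [hLdef] using hLv)
    have hv0 : v = 0 := by
      have h3 := (Submodule.mem_orthogonal K v).mp hv v hvK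
      exact inner_self_eq_zero.mp h3
    exact Subtype.ext hv0
  obtain ⟨c, hc0, hcanti⟩ := L.exists_antilipschitzWith hLker
  have hkey : ∀ v, v ∈ Kᗮ → ‖v‖ ≤ (c : ℝ) * ‖H v‖ := by
    intro v hv
    have h4 := hcanti.le_mul_dist ⟨v, hv⟩ 0
    simpa [dist_eq_norm, hLdef] using h4
  -- choose ε
  set ε : ℝ := ((c : ℝ) + 1)⁻¹ / 2 with hεdef
  have hcpos : (0 : ℝ) < (c : ℝ) := hc0
  have hε : 0 < ε := by positivity
  have hd : ((c : ℝ) + 1) * ((c : ℝ) + 1)⁻¹ = 1 := mul_inv_cancel₀ (by positivity)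
  have hcε : (c : ℝ) * ε < 1 := by
    rw [hεdef]
    nlinarith [inv_pos.mpr (show (0:ℝ) < (c:ℝ) + 1 by positivity)]
  -- continuity of fderiv g at x gives a ball where ‖fderiv g w - H‖ ≤ ε
  have hcont : ContinuousAt (fderiv ℝ g) x := (hg1.continuous_fderiv one_ne_zero).continuousAt
  obtain ⟨r, hr0, hrball⟩ := Metric.continuousAt_iff.mp hcont ε hε
  refine ⟨r, hr0, ?_⟩
  intro y hy z hz hyz
  simp only [Set.mem_inter_iff, Set.mem_setOf_eq] at hy hz
  -- projection equality gives y - z ∈ Kᗮ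
  have hproj : Submodule.orthogonalProjection K y = Submodule.orthogonalProjection K z :=
    Subtype.coe_injective hyz
  have hpv : Submodule.orthogonalProjection K (y - z) = 0 := by
    rw [map_sub, hproj, sub_self]
  have hvK : y - z ∈ Kᗮ := by
    have h1 : y - z - ((Submodule.orthogonalProjection K (y - z) : EuclideanSpace ℝ (Fin n))) ∈ Kᗮ :=
        Submodule.sub_starProjection_mem_orthogonal (K := K) (y - z)
    rwa [hpv, ZeroMemClass.coe_zero, sub_zero] at h1
  -- mean value estimate for φ w = g w - H w on the ball
  have hball : Convex ℝ (Metric.ball x r) := convex_ball x r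
  have hdg : Differentiable ℝ g := hg1.differentiable one_ne_zero
  have hmv : ‖(g y - H y) - (g z - H z)‖ ≤ ε * ‖y - z‖ := by
    refine hball.norm_image_sub_le_of_norm_hasFDerivWithin_le
      (f := fun w => g w - H w) (f' := fun w => fderiv ℝ g w - H)
      (fun w hw => ((hdg w).hasFDerivAt.sub H.hasFDerivAt).hasFDerivWithinAt)
      (fun w hw => ?_) hz.2 hy.2
    have hww : dist w x < r := Metric.mem_ball.mp hw
    have h6 := hrball hww
    rw [dist_eq_norm] at h6
    exact h6.le
  have hgy : g y = 0 := hgrad0 y hy.1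
  have hgz : g z = 0 := hgrad0 z hz.1
  have hHv : ‖H (y - z)‖ ≤ ε * ‖y - z‖ := by
    have h5 : (g y - H y) - (g z - H z) = -(H (y - z)) := by
      rw [hgy, hgz, map_sub]; abel
    rwa [h5, norm_neg] at hmv
  -- combine
  have hfin : ‖y - z‖ ≤ (c : ℝ) * ε * ‖y - z‖ := by
    calc ‖y - z‖ ≤ (c : ℝ) * ‖H (y - z)‖ := hkey _ hvK
    _ ≤ (c : ℝ) * (ε * ‖y - z‖) := mul_le_mul_of_nonneg_left hHv (le_of_lt hcpos)
    _ = (c : ℝ) * ε * ‖y - z‖ := by ring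
  have hnorm0 : ‖y - z‖ = 0 := by
    by_contra hne
    have hpos' : 0 < ‖y - z‖ := lt_of_le_of_ne (norm_nonneg _) (Ne.symm hne)
    nlinarith
  have hyz0 : y - z = 0 := norm_eq_zero.mp hnorm0
  exact sub_eq_zero.mp hyz0
end

section
/- Let f : ℝⁿ → ℝ be a C² function with min f = 0 satisfying ‖∇f(x)‖² ≥ f(x) for all x ∈ ℝⁿ, assume K = argmin(f) is compact, and suppose the Hessian H = ∇²f has rank m at every point of K. Then for every x ∈ K and every z ∈ K sufficiently close to x (say with ‖∇²f(z) − ∇²f(x)‖_op ≤ 1/4), the subspaces Ker(H(z))^⊥ and Ker(H(x)) are complementary: Ker(H(z))^⊥ ⊕ Ker(H(x)) = ℝⁿ, equivalently Ker(H(z))^⊥ ∩ Ker(H(x)) = {0}. -/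
open RealInnerProductSpace Filter Set Topology InnerProductSpace

lemma ker_perp_lower_bound {n : ℕ} (H : EuclideanSpace ℝ (Fin n) →L[ℝ] EuclideanSpace ℝ (Fin n))
    (hsymm : ∀ u v, ⟪H u, v⟫ = ⟪u, H v⟫)
    (hineq : ∀ u, (1/2) * ⟪H u, u⟫ ≤ ‖H u‖ ^ 2)
    (hpsd : ∀ u, 0 ≤ ⟪H u, u⟫) :
    ∀ u ∈ (LinearMap.ker (H : EuclideanSpace ℝ (Fin n) →ₗ[ℝ] EuclideanSpace ℝ (Fin n)))ᗮ,
      ‖u‖ ≤ 2 * ‖H u‖ := by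
  intro u hu
  have hT : (H : EuclideanSpace ℝ (Fin n) →ₗ[ℝ] EuclideanSpace ℝ (Fin n)).IsSymmetric := fun x y => hsymm x y
  have hn : Module.finrank ℝ (EuclideanSpace ℝ (Fin n)) = n := finrank_euclideanSpace_fin
  set b := hT.eigenvectorBasis hn with hb
  set μ := hT.eigenvalues hn with hμ
  have happ : ∀ i, H (b i) = μ i • b i := fun i => hT.apply_eigenvectorBasis hn i
  have hbn : ∀ i, ‖b i‖ = 1 := fun i => b.orthonormal.1 i
  have hkey : ∀ i, (1/4) * ⟪u, b i⟫ ^ 2 ≤ (μ i * ⟪u, b i⟫) ^ 2 := by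
    intro i
    rcases eq_or_ne (μ i) 0 with h0 | h0
    · have hbk : b i ∈ LinearMap.ker (H : EuclideanSpace ℝ (Fin n) →ₗ[ℝ] EuclideanSpace ℝ (Fin n)) := by
        simp [LinearMap.mem_ker, happ i, h0]
      have : ⟪b i, u⟫ = 0 := hu (b i) hbk
      rw [real_inner_comm] at this
      simp [this]
    · -- μ i ≥ 1/2
      have h1 : ⟪H (b i), b i⟫ = μ i := by
        rw [happ i, real_inner_smul_left, real_inner_self_eq_norm_sq, hbn i]; ring
      have h2 : ‖H (b i)‖ ^ 2 = μ i ^ 2 := by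
        rw [happ i, norm_smul, hbn i, mul_one, Real.norm_eq_abs, sq_abs]
      have h3 := hineq (b i)
      have h4 := hpsd (b i)
      rw [h1] at h3 h4
      rw [h2] at h3
      have h5 : (1:ℝ)/2 ≤ μ i := by
        rcases lt_or_eq_of_le h4 with h | h
        · nlinarith
        · exact absurd h.symm h0
      have h6 : (1:ℝ)/4 ≤ μ i ^ 2 := by nlinarith
      rw [mul_pow]
      exact mul_le_mul_of_nonneg_right h6 (sq_nonneg _)
  have hHu : ‖H u‖ ^ 2 = ∑ i, (μ i * ⟪u, b i⟫) ^ 2 := by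
    rw [← real_inner_self_eq_norm_sq, ← b.sum_inner_mul_inner (H u) (H u)]
    refine Finset.sum_congr rfl fun i _ => ?_
    have : ⟪H u, b i⟫ = μ i * ⟪u, b i⟫ := by
      rw [hsymm, happ i, real_inner_smul_right]
    have this2 : ⟪b i, H u⟫ = μ i * ⟪u, b i⟫ := by rw [real_inner_comm]; exact this
    rw [this, this2]; ring
  have hu2 : ‖u‖ ^ 2 = ∑ i, ⟪u, b i⟫ ^ 2 := by
    rw [← real_inner_self_eq_norm_sq, ← b.sum_inner_mul_inner u u]
    refine Finset.sum_congr rfl fun i _ => ?_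
    rw [real_inner_comm (b i) u]; ring
  have hsum : (1/4) * ‖u‖ ^ 2 ≤ ‖H u‖ ^ 2 := by
    rw [hHu, hu2, Finset.mul_sum]
    exact Finset.sum_le_sum fun i _ => hkey i
  nlinarith [norm_nonneg u, norm_nonneg (H u)]

open RealInnerProductSpace Filter Set Topology InnerProductSpace

section Analysis

variable {n : ℕ} {f : EuclideanSpace ℝ (Fin n) → ℝ}

lemma grad_basics (hf : ContDiff ℝ 2 f) :
    Differentiable ℝ f ∧ Differentiable ℝ (gradient f) ∧
      Continuous (fun y => fderiv ℝ (gradient f) y) := by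
  have hfd1 : ContDiff ℝ 1 (fderiv ℝ f) := hf.fderiv_right (by norm_num)
  have hg1 : ContDiff ℝ 1 (gradient f) :=
    ((toDual ℝ (EuclideanSpace ℝ (Fin n))).symm.contDiff).comp hfd1
  exact ⟨hf.differentiable two_ne_zero, hg1.differentiable one_ne_zero,
    hg1.continuous_fderiv one_ne_zero⟩

lemma grad_zero (hf : ContDiff ℝ 2 f) (hpos : ∀ x, 0 ≤ f x)
    {x : EuclideanSpace ℝ (Fin n)} (hx : f x = 0) : gradient f x = 0 := by
  have hlm : IsLocalMin f x := Filter.Eventually.of_forall fun y => by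
    rw [hx]; exact hpos y
  have h0 : fderiv ℝ f x = 0 := hlm.fderiv_eq_zero
  show (toDual ℝ (EuclideanSpace ℝ (Fin n))).symm (fderiv ℝ f x) = 0
  rw [h0]; simp

lemma inner_grad (y v : EuclideanSpace ℝ (Fin n)) :
    ⟪gradient f y, v⟫ = fderiv ℝ f y v :=
  toDual_symm_apply

lemma hessian_symm (hf : ContDiff ℝ 2 f) (x : EuclideanSpace ℝ (Fin n)) :
    ∀ u v, ⟪fderiv ℝ (gradient f) x u, v⟫ = ⟪u, fderiv ℝ (gradient f) x v⟫ := by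
  have hfd1 : ContDiff ℝ 1 (fderiv ℝ f) := hf.fderiv_right (by norm_num)
  have hdf : Differentiable ℝ f := hf.differentiable two_ne_zero
  obtain ⟨_, hdg, _⟩ := grad_basics hf
  have hsymm : ∀ a b, fderiv ℝ (fderiv ℝ f) x a b = fderiv ℝ (fderiv ℝ f) x b a :=
    second_derivative_symmetric (fun y => (hdf y).hasFDerivAt)
      ((hfd1.differentiable one_ne_zero x).hasFDerivAt)
  have key : ∀ a b, ⟪fderiv ℝ (gradient f) x a, b⟫ = fderiv ℝ (fderiv ℝ f) x a b := by
    intro a b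
    have h1 : HasFDerivAt (fun y => ⟪b, gradient f y⟫)
        ((innerSL ℝ b).comp (fderiv ℝ (gradient f) x)) x :=
      (innerSL ℝ b).hasFDerivAt.comp x (hdg x).hasFDerivAt
    have hFeq : (fun y => ⟪b, gradient f y⟫) =
        fun y => (ContinuousLinearMap.apply ℝ ℝ b) (fderiv ℝ f y) := by
      funext y
      rw [real_inner_comm, inner_grad]
      rfl
    rw [hFeq] at h1
    have h2 : HasFDerivAt (fun y => (ContinuousLinearMap.apply ℝ ℝ b) (fderiv ℝ f y))
        ((ContinuousLinearMap.apply ℝ ℝ b).comp (fderiv ℝ (fderiv ℝ f) x)) x :=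
      (ContinuousLinearMap.apply ℝ ℝ b).hasFDerivAt.comp x
        ((hfd1.differentiable one_ne_zero x).hasFDerivAt)
    have := h1.unique h2
    have happ := congrFun (congrArg (fun (L : _ →L[ℝ] ℝ) => (L : _ → ℝ)) this) a
    simp only [ContinuousLinearMap.coe_comp', Function.comp_apply, innerSL_apply_apply,
      ContinuousLinearMap.apply_apply] at happ
    rw [real_inner_comm] at happ
    exact happ
  intro u v
  rw [key, real_inner_comm, key, hsymm]



set_option maxHeartbeats 1000000 in
lemma hessian_psd_and_key (hf : ContDiff ℝ 2 f) (hpos : ∀ x, 0 ≤ f x)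
    (hPL : ∀ x, ‖gradient f x‖ ^ 2 ≥ f x)
    {x : EuclideanSpace ℝ (Fin n)} (hx : f x = 0) (u : EuclideanSpace ℝ (Fin n)) :
    0 ≤ ⟪fderiv ℝ (gradient f) x u, u⟫ ∧
      (1/2) * ⟪fderiv ℝ (gradient f) x u, u⟫ ≤ ‖fderiv ℝ (gradient f) x u‖ ^ 2 := by
  obtain ⟨hdf, hdg, hHcont⟩ := grad_basics hf
  have hgradzero : gradient f x = 0 := grad_zero hf hpos hx
  set c : ℝ → EuclideanSpace ℝ (Fin n) := fun t => x + t • u with hcdef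
  have hc : ∀ t, HasDerivAt c u t := by
    intro t
    simpa [hcdef] using ((hasDerivAt_id t).smul_const u).const_add x
  have hccont : Continuous c := by
    exact continuous_const.add (continuous_id.smul continuous_const)
  set g : ℝ → ℝ := fun t => f (c t) with hgdef
  set g1 : ℝ → ℝ := fun t => ⟪gradient f (c t), u⟫ with hg1def
  set g2 : ℝ → ℝ := fun t => ⟪fderiv ℝ (gradient f) (c t) u, u⟫ with hg2def
  have hg : ∀ t, HasDerivAt g (g1 t) t := by
    intro t
    have h1 := (hdf (c t)).hasFDerivAt.comp_hasDerivAt t (hc t)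
    have : g1 t = fderiv ℝ f (c t) u := inner_grad _ _
    rw [this]
    exact h1
  have hgrad_line : ∀ t, HasDerivAt (fun s => gradient f (c s))
      (fderiv ℝ (gradient f) (c t) u) t :=
    fun t => (hdg (c t)).hasFDerivAt.comp_hasDerivAt t (hc t)
  have hg1 : ∀ t, HasDerivAt g1 (g2 t) t := by
    intro t
    have := (hgrad_line t).inner ℝ (hasDerivAt_const t u)
    simpa [hg1def, hg2def] using this
  have hg2cont : Continuous g2 := by
    exact Continuous.inner ((hHcont.comp hccont).clm_apply continuous_const) continuous_const
  have hc0 : c 0 = x := by simp [hcdef]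
  have hg0 : g 0 = 0 := by rw [hgdef]; simp only [hc0]; exact hx
  have hg10 : g1 0 = 0 := by rw [hg1def]; simp only [hc0, hgradzero]; simp
  have hg20 : g2 0 = ⟪fderiv ℝ (gradient f) x u, u⟫ := by rw [hg2def]; simp only [hc0]
  have hgpos : ∀ t, 0 ≤ g t := fun t => hpos _
  have h2tendsto : Tendsto g2 (𝓝 0) (𝓝 ⟪fderiv ℝ (gradient f) x u, u⟫) := by
    rw [← hg20]
    exact hg2cont.continuousAt
  set a := ⟪fderiv ℝ (gradient f) x u, u⟫ with hadef
  -- MVT helper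
  have mvt : ∀ (F F' : ℝ → ℝ), (∀ s, HasDerivAt F (F' s) s) → ∀ t, 0 < t →
      ∃ ξ ∈ Ioo 0 t, F' ξ = (F t - F 0) / t := by
    intro F F' hF t ht
    have hcont : Continuous F := by
      rw [continuous_iff_continuousAt]; exact fun s => (hF s).continuousAt
    have := exists_hasDerivAt_eq_slope F F' ht hcont.continuousOn (fun s _ => hF s)
    simpa using this
  -- Claim A : 0 ≤ a
  have claimA : 0 ≤ a := by
    by_contra hA
    push_neg at hA
    have hev : ∀ᶠ s in 𝓝 (0:ℝ), g2 s < a / 2 :=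
      h2tendsto.eventually_lt_const (by linarith)
    obtain ⟨δ, hδ, hball⟩ := Metric.eventually_nhds_iff.mp hev
    have hg1neg : ∀ t, 0 < t → t < δ → g1 t < 0 := by
      intro t ht htδ
      obtain ⟨ξ, hξ, hsl⟩ := mvt g1 g2 hg1 t ht
      have hξd : g2 ξ < a / 2 := by
        apply hball
        rw [Real.dist_eq, sub_zero, abs_of_pos hξ.1]
        linarith [hξ.2]
      rw [hg10, sub_zero] at hsl
      have hdivneg : g1 t / t < 0 := by rw [← hsl]; linarith
      by_contra hge
      push_neg at hge
      exact absurd hdivneg (not_lt.mpr (div_nonneg hge ht.le))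
    obtain ⟨η, hη, hsl⟩ := mvt g g1 hg (δ/2) (by linarith)
    rw [hg0, sub_zero] at hsl
    have h1 : g1 η < 0 := hg1neg η hη.1 (by linarith [hη.2])
    have h2 : 0 ≤ g (δ/2) / (δ/2) := div_nonneg (hgpos _) (by linarith)
    rw [← hsl] at h2
    linarith
  refine ⟨claimA, ?_⟩
  -- Claim B
  by_contra hB
  push_neg at hB
  set c0 := ‖fderiv ℝ (gradient f) x u‖ with hc0def
  have hc0nn : 0 ≤ c0 := norm_nonneg _
  have ha : 0 < a := by nlinarith [sq_nonneg c0]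
  set δ0 : ℝ := (1/2) * a - c0 ^ 2 with hδ0def
  have hδ0 : 0 < δ0 := by rw [hδ0def]; linarith
  set ε : ℝ := min 1 (δ0 / (2 * c0 + 3)) with hεdef
  have hε : 0 < ε := lt_min one_pos (div_pos hδ0 (by linarith))
  have hε1 : ε ≤ 1 := min_le_left _ _
  have hε2 : ε * (2 * c0 + 3) ≤ δ0 := by
    have := min_le_right (1:ℝ) (δ0 / (2 * c0 + 3))
    calc ε * (2 * c0 + 3) ≤ (δ0 / (2 * c0 + 3)) * (2 * c0 + 3) := by
          apply mul_le_mul_of_nonneg_right this (by linarith)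
      _ = δ0 := by field_simp
  -- lower bound on g
  have hev2 : ∀ᶠ s in 𝓝 (0:ℝ), a - ε < g2 s :=
    h2tendsto.eventually_const_lt (by linarith)
  obtain ⟨δ1, hδ1, hb2⟩ := Metric.eventually_nhds_iff.mp hev2
  have hglb : ∀ t, 0 < t → t < δ1 → (a - ε) * t ^ 2 / 2 ≤ g t := by
    intro t ht htδ
    have h1 : ∀ s, 0 < s → s < δ1 → (a - ε) * s ≤ g1 s := by
      intro s hs hsδ
      obtain ⟨ξ, hξ, hsl⟩ := mvt g1 g2 hg1 s hs
      have hξd : a - ε < g2 ξ := by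
        apply hb2
        rw [Real.dist_eq, sub_zero, abs_of_pos hξ.1]
        linarith [hξ.2]
      rw [hg10, sub_zero] at hsl
      rw [hsl] at hξd
      exact ((lt_div_iff₀ hs).mp hξd).le
    set Fq : ℝ → ℝ := fun s => g s - (a - ε) * s ^ 2 / 2 with hFqdef
    set Fq' : ℝ → ℝ := fun s => g1 s - (a - ε) * s with hFq'def
    have hFq : ∀ s, HasDerivAt Fq (Fq' s) s := by
      intro s
      have hq : HasDerivAt (fun s : ℝ => (a - ε) * s ^ 2 / 2) ((a - ε) * s) s := by
        have := ((hasDerivAt_pow 2 s).const_mul (a - ε)).div_const 2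
        exact this.congr_deriv (by push_cast; ring)
      exact (hg s).sub hq
    obtain ⟨η, hη, hsl⟩ := mvt Fq Fq' hFq t ht
    have hFq0 : Fq 0 = 0 := by simp [hFqdef, hg0]
    rw [hFq0, sub_zero] at hsl
    have hη1 : 0 ≤ Fq' η := by
      have := h1 η hη.1 (by linarith [hη.2])
      simp only [hFq'def]
      linarith
    rw [hsl] at hη1
    have h0 : 0 ≤ Fq t := by
      have := mul_nonneg hη1 ht.le
      rwa [div_mul_cancel₀ _ (ne_of_gt ht)] at this
    simpa [hFqdef, sub_nonneg] using h0
  -- upper bound on gradient norm along the line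
  have hDat0 : HasDerivAt (fun s => gradient f (c s)) (fderiv ℝ (gradient f) x u) 0 := by
    have := hgrad_line 0
    rwa [hc0] at this
  have hslope := hasDerivAt_iff_tendsto_slope.mp hDat0
  have hnt : Tendsto (fun s => ‖slope (fun s => gradient f (c s)) 0 s‖) (𝓝[≠] 0) (𝓝 c0) :=
    (continuous_norm.tendsto _).comp hslope
  have hev1 : ∀ᶠ s in 𝓝[≠] (0:ℝ), ‖slope (fun s => gradient f (c s)) 0 s‖ < c0 + ε :=
    hnt.eventually_lt_const (by linarith)
  have hev1' : ∀ᶠ s in 𝓝[>] (0:ℝ), ‖slope (fun s => gradient f (c s)) 0 s‖ < c0 + ε :=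
    hev1.filter_mono (nhdsWithin_mono 0 (fun s hs => ne_of_gt hs))
  have hev3 : ∀ᶠ s in 𝓝[>] (0:ℝ), s < δ1 :=
    eventually_of_mem (Ioo_mem_nhdsGT_of_mem ⟨le_refl 0, hδ1⟩) (fun s hs => hs.2)
  have hev4 : ∀ᶠ s in 𝓝[>] (0:ℝ), 0 < s :=
    eventually_mem_nhdsWithin
  obtain ⟨t, ⟨hts, ht3⟩, ht4⟩ := ((hev1'.and hev3).and hev4).exists
  have hsv : slope (fun s => gradient f (c s)) 0 t = t⁻¹ • gradient f (c t) := by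
    rw [slope_def_module]
    simp [hc0, hgradzero]
  rw [hsv] at hts
  have hnormb : ‖gradient f (c t)‖ ≤ t * (c0 + ε) := by
    rw [norm_smul, norm_inv, Real.norm_eq_abs, abs_of_pos ht4] at hts
    calc ‖gradient f (c t)‖ = t * (t⁻¹ * ‖gradient f (c t)‖) := by
          field_simp
      _ ≤ t * (c0 + ε) := by
          apply mul_le_mul_of_nonneg_left hts.le ht4.le
  have hPLt : g t ≤ ‖gradient f (c t)‖ ^ 2 := hPL (c t)
  have hlow := hglb t ht4 ht3
  have hup : ‖gradient f (c t)‖ ^ 2 ≤ (t * (c0 + ε)) ^ 2 := by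
    apply sq_le_sq' (by linarith [norm_nonneg (gradient f (c t))]) hnormb
  have ht2 : (0:ℝ) < t ^ 2 := by positivity
  have hchain : (a - ε)/2 * t ^ 2 ≤ (c0 + ε) ^ 2 * t ^ 2 := by
    calc (a - ε)/2 * t ^ 2 = (a - ε) * t ^ 2 / 2 := by ring
      _ ≤ g t := hlow
      _ ≤ ‖gradient f (c t)‖ ^ 2 := hPLt
      _ ≤ (t * (c0 + ε)) ^ 2 := hup
      _ = (c0 + ε) ^ 2 * t ^ 2 := by ring
  have hdiv : (a - ε)/2 ≤ (c0 + ε) ^ 2 := (mul_le_mul_iff_of_pos_right ht2).mp hchain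
  have hεε : ε * ε ≤ ε := by nlinarith
  have hsq : (c0 + ε) ^ 2 ≤ c0 ^ 2 + ε * (2 * c0 + 1) := by nlinarith [hεε]
  have he1 : ε * (2 * c0 + 3) = 2 * (ε * c0) + 3 * ε := by ring
  have he2 : ε * (2 * c0 + 1) = 2 * (ε * c0) + ε := by ring
  clear_value ε δ0 c0 a
  have hfin : (3/2 : ℝ) * ε ≤ 0 := by linarith [hdiv, hsq, hε2, hε, he1, he2, hδ0def]
  linarith

end Analysis


set_option maxHeartbeats 1000000 in
/-- For a `C²` function with `min f = 0` satisfying `‖∇f‖² ≥ f`,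
compact argmin `K`, and Hessian of constant rank `m` on `K`: for `x, z ∈ K` with
`‖∇²f(z) − ∇²f(x)‖_op ≤ 1/4`, the subspaces `Ker(H(z))ᗮ` and `Ker(H(x))` are
complementary. -/
theorem pl_hessian_kernels_complementary (n : ℕ) (f : EuclideanSpace ℝ (Fin n) → ℝ)
    (hf : ContDiff ℝ 2 f) (hpos : ∀ x, 0 ≤ f x) (hmin : ∃ x, f x = 0)
    (hPL : ∀ x, ‖gradient f x‖ ^ 2 ≥ f x)
    (hcpt : IsCompact {x | f x = 0}) (m : ℕ)
    (hrank : ∀ z ∈ {x | f x = 0},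
      Module.finrank ℝ (LinearMap.range (fderiv ℝ (gradient f) z :
        EuclideanSpace ℝ (Fin n) →ₗ[ℝ] EuclideanSpace ℝ (Fin n))) = m) :
    ∀ x ∈ {x | f x = 0}, ∀ z ∈ {x | f x = 0},
      ‖fderiv ℝ (gradient f) z - fderiv ℝ (gradient f) x‖ ≤ 1 / 4 →
      (LinearMap.ker (fderiv ℝ (gradient f) z :
          EuclideanSpace ℝ (Fin n) →ₗ[ℝ] EuclideanSpace ℝ (Fin n)))ᗮ ⊓
        LinearMap.ker (fderiv ℝ (gradient f) x :
          EuclideanSpace ℝ (Fin n) →ₗ[ℝ] EuclideanSpace ℝ (Fin n)) = ⊥ ∧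
      (LinearMap.ker (fderiv ℝ (gradient f) z :
          EuclideanSpace ℝ (Fin n) →ₗ[ℝ] EuclideanSpace ℝ (Fin n)))ᗮ ⊔
        LinearMap.ker (fderiv ℝ (gradient f) x :
          EuclideanSpace ℝ (Fin n) →ₗ[ℝ] EuclideanSpace ℝ (Fin n)) = ⊤ := by
  intro x hx z hz hclose
  simp only [Set.mem_setOf_eq] at hx hz
  have hzbound := ker_perp_lower_bound (fderiv ℝ (gradient f) z)
    (hessian_symm hf z) (fun u => (hessian_psd_and_key hf hpos hPL hz u).2)
    (fun u => (hessian_psd_and_key hf hpos hPL hz u).1)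
  have hinf : (LinearMap.ker (fderiv ℝ (gradient f) z :
        EuclideanSpace ℝ (Fin n) →ₗ[ℝ] EuclideanSpace ℝ (Fin n)))ᗮ ⊓
      LinearMap.ker (fderiv ℝ (gradient f) x :
        EuclideanSpace ℝ (Fin n) →ₗ[ℝ] EuclideanSpace ℝ (Fin n)) = ⊥ := by
    rw [Submodule.eq_bot_iff]
    intro u hu
    obtain ⟨hu1, hu2⟩ := Submodule.mem_inf.mp hu
    have hxu : fderiv ℝ (gradient f) x u = 0 := hu2
    have h1 : ‖u‖ ≤ 2 * ‖fderiv ℝ (gradient f) z u‖ := hzbound u hu1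
    have h2 : fderiv ℝ (gradient f) z u =
        (fderiv ℝ (gradient f) z - fderiv ℝ (gradient f) x) u := by
      rw [ContinuousLinearMap.sub_apply, hxu, sub_zero]
    have h3 : ‖(fderiv ℝ (gradient f) z - fderiv ℝ (gradient f) x) u‖ ≤ (1/4) * ‖u‖ :=
      le_trans ((fderiv ℝ (gradient f) z - fderiv ℝ (gradient f) x).le_opNorm u)
        (mul_le_mul_of_nonneg_right hclose (norm_nonneg u))
    rw [h2] at h1
    have hzero : ‖u‖ = 0 := le_antisymm (by linarith) (norm_nonneg u)
    exact norm_eq_zero.mp hzero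
  refine ⟨hinf, ?_⟩
  have hEn : Module.finrank ℝ (EuclideanSpace ℝ (Fin n)) = n := finrank_euclideanSpace_fin
  have hrx := hrank x hx
  have hrz := hrank z hz
  have rnz := LinearMap.finrank_range_add_finrank_ker
    (fderiv ℝ (gradient f) z : EuclideanSpace ℝ (Fin n) →ₗ[ℝ] EuclideanSpace ℝ (Fin n))
  have rnx := LinearMap.finrank_range_add_finrank_ker
    (fderiv ℝ (gradient f) x : EuclideanSpace ℝ (Fin n) →ₗ[ℝ] EuclideanSpace ℝ (Fin n))
  have horth := Submodule.finrank_add_finrank_orthogonal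
    (K := LinearMap.ker (fderiv ℝ (gradient f) z :
      EuclideanSpace ℝ (Fin n) →ₗ[ℝ] EuclideanSpace ℝ (Fin n)))
  have hsup := Submodule.finrank_sup_add_finrank_inf_eq
    (LinearMap.ker (fderiv ℝ (gradient f) z :
      EuclideanSpace ℝ (Fin n) →ₗ[ℝ] EuclideanSpace ℝ (Fin n)))ᗮ
    (LinearMap.ker (fderiv ℝ (gradient f) x :
      EuclideanSpace ℝ (Fin n) →ₗ[ℝ] EuclideanSpace ℝ (Fin n)))
  rw [hinf, finrank_bot] at hsup
  apply Submodule.eq_top_of_finrank_eq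
  rw [hEn] at rnz rnx horth ⊢
  rw [hrx] at rnx
  rw [hrz] at rnz
  omega
end

section
/- Let F be a nonempty closed subset of ℝⁿ such that d_F : x ↦ (1/2)·dist(x, F)² is differentiable with locally Lipschitz gradient, so that the projection proj_F(x) onto F is unique for every x and ∇d_F(x) = x − proj_F(x). Let φ(t, x) be the flow of −∇d_F. Then for all t ≥ 0 and x ∈ ℝⁿ: φ(t, x) = proj_F(x) + e^{−t}·(x − proj_F(x)) and proj_F(φ(t, x)) = proj_F(x). -/
open Filter

/-- If `d_F = (1/2)·dist(·, F)²` is differentiable with locally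
Lipschitz gradient (so that the nearest-point projection `proj_F` is single-valued and
`∇d_F(x) = x − proj_F(x)`), then the flow of `−∇d_F` is
`φ(t,x) = proj_F(x) + e^{−t}(x − proj_F(x))`, and `proj_F(φ(t,x)) = proj_F(x)`. -/
theorem flow_of_neg_grad_sq_dist (n : ℕ) (F : Set (EuclideanSpace ℝ (Fin n)))
    (hne : F.Nonempty) (hcl : IsClosed F)
    (dF : EuclideanSpace ℝ (Fin n) → ℝ)
    (hdF : dF = fun x => (1 / 2) * Metric.infDist x F ^ 2)
    (hdiff : Differentiable ℝ dF)
    (hlip : ∀ K : Set (EuclideanSpace ℝ (Fin n)), IsCompact K →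
      ∃ L : NNReal, LipschitzOnWith L (gradient dF) K)
    (proj : EuclideanSpace ℝ (Fin n) → EuclideanSpace ℝ (Fin n))
    (hprojF : ∀ x, proj x ∈ F)
    (hprojdist : ∀ x, dist x (proj x) = Metric.infDist x F)
    (hprojuniq : ∀ x y, y ∈ F → dist x y = Metric.infDist x F → y = proj x)
    (hgrad : ∀ x, gradient dF x = x - proj x)
    (φ : ℝ → EuclideanSpace ℝ (Fin n) → EuclideanSpace ℝ (Fin n))
    (hφ0 : ∀ x, φ 0 x = x)
    (hφ : ∀ x, ∀ t : ℝ, 0 ≤ t → HasDerivAt (fun s => φ s x) (-gradient dF (φ t x)) t) :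
    ∀ t : ℝ, 0 ≤ t → ∀ x,
      φ t x = proj x + Real.exp (-t) • (x - proj x) ∧ proj (φ t x) = proj x := by
  -- Key lemma: the projection of a point on the segment [proj x, x] is proj x.
  have key : ∀ (x : EuclideanSpace ℝ (Fin n)) (s : ℝ), 0 < s → s ≤ 1 →
      proj (proj x + s • (x - proj x)) = proj x := by
    intro x s hs0 hs1
    set p := proj x with hp
    set y := p + s • (x - p) with hy
    have h1 : dist y p = s * dist x p := by
      rw [dist_eq_norm, dist_eq_norm, hy, add_sub_cancel_left, norm_smul]
      simp [abs_of_pos hs0]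
    have h2 : dist x y = (1 - s) * dist x p := by
      have : x - y = (1 - s) • (x - p) := by
        rw [hy, sub_smul, one_smul]
        abel
      rw [dist_eq_norm, dist_eq_norm, this, norm_smul]
      simp [abs_of_nonneg (by linarith : (0:ℝ) ≤ 1 - s)]
    have hbound : ∀ z ∈ F, dist y p ≤ dist y z := by
      intro z hz
      have t1 : dist x z ≤ dist x y + dist y z := dist_triangle x y z
      have t2 : dist x p ≤ dist x z := by
        rw [hprojdist x]
        exact Metric.infDist_le_dist_of_mem hz
      nlinarith [dist_nonneg (x := x) (y := p)]
    have h3 : dist y p = Metric.infDist y F := by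
      refine le_antisymm ?_ (Metric.infDist_le_dist_of_mem (hprojF x))
      by_contra h
      push_neg at h
      obtain ⟨z, hz, hlt⟩ := (Metric.infDist_lt_iff hne).mp h
      exact absurd (hbound z hz) (not_le.mpr hlt)
    exact (hprojuniq y p (hprojF x) h3).symm
  intro t ht x
  set p := proj x with hp
  set ψ : ℝ → EuclideanSpace ℝ (Fin n) := fun s => p + Real.exp (-s) • (x - p) with hψ
  have hψ' : ∀ s : ℝ, 0 ≤ s → HasDerivAt ψ (-gradient dF (ψ s)) s := by
    intro s hs
    have hd : HasDerivAt (fun u : ℝ => Real.exp (-u)) (-Real.exp (-s)) s := by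
      have := (Real.hasDerivAt_exp (-s)).comp s ((hasDerivAt_id s).neg)
      simpa [Function.comp_def] using this
    have : HasDerivAt ψ ((-Real.exp (-s)) • (x - p)) s := by
      simpa [hψ] using ((hd.smul_const (x - p)).const_add p)
    convert this using 1
    have hproj : proj (ψ s) = p := key x (Real.exp (-s)) (Real.exp_pos _)
      (Real.exp_le_one_iff.mpr (by linarith))
    rw [hgrad, hψ, hproj]
    simp [neg_smul]
  have hψcont : ContinuousOn ψ (Set.Icc 0 t) := by
    exact (continuous_const.add ((Real.continuous_exp.comp continuous_neg).smul
      continuous_const)).continuousOn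
  have hφcont : ContinuousOn (fun s => φ s x) (Set.Icc 0 t) :=
    fun s hs => ((hφ x s hs.1).continuousAt).continuousWithinAt
  -- compact set containing both trajectories
  set K : Set (EuclideanSpace ℝ (Fin n)) :=
    (fun s => φ s x) '' Set.Icc 0 t ∪ ψ '' Set.Icc 0 t with hK
  have hKc : IsCompact K :=
    (isCompact_Icc.image_of_continuousOn hφcont).union
      (isCompact_Icc.image_of_continuousOn hψcont)
  obtain ⟨L, hL⟩ := hlip K hKc
  have hLneg : ∀ s : ℝ, LipschitzOnWith L ((fun y => -gradient dF y)) K := by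
    intro s
    have : LipschitzOnWith (1 * L) (Neg.neg ∘ gradient dF) K :=
      LipschitzWith.id.neg.comp_lipschitzOnWith hL
    simpa [Function.comp_def] using this
  have heq : φ t x = ψ t := by
    have := ODE_solution_unique_of_mem_Icc_right
      (v := fun _ y => -gradient dF y) (s := fun _ => K)
      (fun _ _ => hLneg 0)
      hφcont
      (fun s hs => ((hφ x s hs.1).hasDerivWithinAt))
      (fun s hs => Or.inl ⟨s, ⟨hs.1, hs.2.le⟩, rfl⟩)
      hψcont
      (fun s hs => ((hψ' s hs.1).hasDerivWithinAt))
      (fun s hs => Or.inr ⟨s, ⟨hs.1, hs.2.le⟩, rfl⟩)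
      (by simp [hφ0, hψ])
    exact this ⟨ht, le_refl t⟩
  refine ⟨heq, ?_⟩
  rw [heq]
  exact key x (Real.exp (-t)) (Real.exp_pos _) (Real.exp_le_one_iff.mpr (by linarith))
end

section
/- Let F be a nonempty closed subset of ℝⁿ such that d_F : x ↦ (1/2)·dist(x, F)² is differentiable with locally Lipschitz gradient, so that the projection proj_F(x) onto F is unique for every x. Then for every x ∈ ℝⁿ, writing x_∞ = proj_F(x), one has proj_F(x_∞ + s·(x − x_∞)) = x_∞ for all s ≥ 0; consequently ⟨x − x_∞, y − x_∞⟩ ≤ 0 for every y ∈ F, i.e. every point x ∉ F is separated from F by an affine hyperplane through x_∞. -/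
open scoped RealInnerProductSpace
open Set Metric

private theorem aux_grad (n : ℕ) (F : Set (EuclideanSpace ℝ (Fin n)))
    (dF : EuclideanSpace ℝ (Fin n) → ℝ)
    (hdF : dF = fun x => (1 / 2) * Metric.infDist x F ^ 2)
    (hdiff : Differentiable ℝ dF)
    (proj : EuclideanSpace ℝ (Fin n) → EuclideanSpace ℝ (Fin n))
    (hprojF : ∀ x, proj x ∈ F)
    (hprojdist : ∀ x, dist x (proj x) = Metric.infDist x F) :
    ∀ x, gradient dF x = x - proj x := by
  intro x
  set p := proj x with hp
  have h1 : ∀ y, dF y ≤ (1 / 2) * ‖y - p‖ ^ 2 := by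
    intro y
    have h2 : Metric.infDist y F ≤ dist y p := Metric.infDist_le_dist_of_mem (hprojF x)
    have h3 : (0:ℝ) ≤ Metric.infDist y F := Metric.infDist_nonneg
    rw [hdF]
    simp only [dist_eq_norm] at h2
    nlinarith
  have h2 : dF x = (1 / 2) * ‖x - p‖ ^ 2 := by
    rw [hdF]; simp only [← hprojdist x, dist_eq_norm]; rfl
  -- the auxiliary function with a local min at x
  set g : EuclideanSpace ℝ (Fin n) → ℝ := fun y => (1 / 2) * ‖y - p‖ ^ 2 - dF y with hg
  have hmin : IsLocalMin g x := by
    apply Filter.Eventually.of_forall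
    intro y
    simp only [hg]
    have := h1 y
    linarith [h1 y, h2.ge, h2.le]
  have hdiffx : DifferentiableAt ℝ dF x := hdiff x
  · have hq : HasFDerivAt (fun y : EuclideanSpace ℝ (Fin n) => (1 / 2 : ℝ) * ‖y - p‖ ^ 2)
        ((1/2 : ℝ) • (2 • (innerSL ℝ (x - p)))) x := by
      have h0 : HasFDerivAt (fun y : EuclideanSpace ℝ (Fin n) => y - p)
          (ContinuousLinearMap.id ℝ _) x := (hasFDerivAt_id x).sub_const p
      have := h0.norm_sq
      simpa using this.const_mul (1/2 : ℝ)
    have hgd : HasFDerivAt g ((1/2 : ℝ) • (2 • (innerSL ℝ (x - p))) - fderiv ℝ dF x) x :=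
      hq.sub hdiffx.hasFDerivAt
    have hz := hmin.hasFDerivAt_eq_zero hgd
    have hfd : fderiv ℝ dF x = (1/2 : ℝ) • (2 • (innerSL ℝ (x - p))) := by
      rw [sub_eq_zero] at hz; exact hz.symm
    rw [gradient, hfd]
    refine ((InnerProductSpace.toDual ℝ _).symm_apply_eq).mpr ?_
    ext w
    simp [InnerProductSpace.toDual_apply_apply, real_inner_smul_left]

private theorem aux_sqeq {a b : ℝ} (ha : 0 ≤ a) (hb : 0 ≤ b) (h : a ^ 2 = b ^ 2) : a = b := by
  nlinarith [sq_nonneg (a - b), sq_nonneg (a + b)]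

private theorem aux_cont (n : ℕ) (dF : EuclideanSpace ℝ (Fin n) → ℝ)
    (hlip : ∀ K : Set (EuclideanSpace ℝ (Fin n)), IsCompact K →
      ∃ L : NNReal, LipschitzOnWith L (gradient dF) K) :
    Continuous (gradient dF) := by
  rw [continuous_iff_continuousAt]
  intro z
  obtain ⟨L, hL⟩ := hlip (Metric.closedBall z 1) (isCompact_closedBall z 1)
  exact hL.continuousOn.continuousAt (Metric.closedBall_mem_nhds z one_pos)

private theorem aux_step (n : ℕ) (F : Set (EuclideanSpace ℝ (Fin n)))
    (hne : F.Nonempty)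
    (dF : EuclideanSpace ℝ (Fin n) → ℝ)
    (hdF : dF = fun x => (1 / 2) * Metric.infDist x F ^ 2)
    (hdiff : Differentiable ℝ dF)
    (hlip : ∀ K : Set (EuclideanSpace ℝ (Fin n)), IsCompact K →
      ∃ L : NNReal, LipschitzOnWith L (gradient dF) K)
    (proj : EuclideanSpace ℝ (Fin n) → EuclideanSpace ℝ (Fin n))
    (hprojF : ∀ x, proj x ∈ F)
    (hprojdist : ∀ x, dist x (proj x) = Metric.infDist x F)
    (hprojuniq : ∀ x y, y ∈ F → dist x y = Metric.infDist x F → y = proj x)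
    (z₀ : EuclideanSpace ℝ (Fin n)) :
    ∃ τ : ℝ, 0 < τ ∧ ∀ t ∈ Set.Icc (0:ℝ) τ,
      proj (proj z₀ + Real.exp t • (z₀ - proj z₀)) = proj z₀ := by
  have hgrad := aux_grad n F dF hdF hdiff proj hprojF hprojdist
  set p₀ := proj z₀ with hp₀
  set C : ℝ := Metric.infDist z₀ F + 1 with hC
  have hC1 : (1:ℝ) ≤ C := by
    have := Metric.infDist_nonneg (s := F) (x := z₀); linarith
  have hC0 : (0:ℝ) < C := by linarith
  -- bound on the vector field on the unit ball around z₀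
  have hbound : ∀ w ∈ Metric.closedBall z₀ 1, ‖gradient dF w‖ ≤ C := by
    intro w hw
    rw [hgrad w, ← dist_eq_norm, hprojdist w, hC]
    have h1 : Metric.infDist w F ≤ Metric.infDist z₀ F + dist w z₀ :=
      Metric.infDist_le_infDist_add_dist
    have h2 : dist w z₀ ≤ 1 := Metric.mem_closedBall.mp hw
    linarith
  obtain ⟨L, hL⟩ := hlip (Metric.closedBall z₀ 1) (isCompact_closedBall z₀ 1)
  set τ : ℝ := 1 / C with hτ
  have hτ0 : 0 < τ := by positivity
  have hpl : IsPicardLindelof (fun _ y => gradient dF y) (tmin := 0) (tmax := τ)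
      ⟨0, Set.left_mem_Icc.mpr hτ0.le⟩ z₀ 1 0 ⟨C, hC0.le⟩ L :=
    { lipschitzOnWith := fun t _ => hL
      continuousOn := fun x _ => continuousOn_const
      norm_le := fun t _ x hx => hbound x hx
      mul_max_le := by
        show C * max (τ - 0) (0 - 0) ≤ ((1:NNReal):ℝ) - ((0:NNReal):ℝ)
        rw [sub_zero, sub_self, max_eq_left hτ0.le, hτ, NNReal.coe_one, NNReal.coe_zero, sub_zero]
        rw [mul_one_div, div_self hC0.ne']
    }
  obtain ⟨y, hy0', hyd⟩ := hpl.exists_eq_forall_mem_Icc_hasDerivWithinAt₀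
  have hy0 : y 0 = z₀ := hy0'
  -- basic formula for dF
  have hdF2 : ∀ w, dF w = (1/2) * ‖w - proj w‖ ^ 2 := by
    intro w; rw [hdF]; simp only [← hprojdist w, dist_eq_norm]
  -- derivative of dF along the solution
  have hφd : ∀ t ∈ Set.Icc (0:ℝ) τ,
      HasDerivWithinAt (fun t => dF (y t)) (2 * dF (y t)) (Set.Icc 0 τ) t := by
    intro t ht
    have hgr : HasGradientAt dF (gradient dF (y t)) (y t) := (hdiff (y t)).hasGradientAt
    have hf := hgr.hasFDerivAt.comp_hasDerivWithinAt t (hyd t ht)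
    have hval : ((InnerProductSpace.toDual ℝ (EuclideanSpace ℝ (Fin n))) (gradient dF (y t)))
        (gradient dF (y t)) = 2 * dF (y t) := by
      rw [InnerProductSpace.toDual_apply_apply, real_inner_self_eq_norm_sq, hgrad (y t), hdF2 (y t)]
      ring
    exact hval ▸ hf
  -- exponential growth of dF along the solution
  have hφeq : ∀ t ∈ Set.Icc (0:ℝ) τ, dF (y t) = dF z₀ * Real.exp (2*t) := by
    set ψ := fun t => dF (y t) * Real.exp (-(2*t)) with hψ
    have hψd : ∀ t ∈ Set.Icc (0:ℝ) τ, HasDerivWithinAt ψ 0 (Set.Icc 0 τ) t := by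
      intro t ht
      have hex : HasDerivAt (fun t : ℝ => Real.exp (-(2*t))) (Real.exp (-(2*t)) * (-2)) t := by
        have h1 : HasDerivAt (fun t : ℝ => -(2*t)) (-2) t := by
          have := hasDerivAt_mul_const (x := t) (-2:ℝ)
          rw [show (fun t : ℝ => -(2*t)) = fun x => x * -2 from funext fun u => by ring]; exact this
        simpa using h1.exp
      have := (hφd t ht).mul hex.hasDerivWithinAt
      refine this.congr_deriv ?_
      ring
    have hcst := constant_of_has_deriv_right_zero (a := 0) (b := τ)
      (f := ψ) (fun t ht => (hψd t ht).continuousWithinAt)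
      (fun t ht => (hψd t (Set.Ico_subset_Icc_self ht)).mono_of_mem_nhdsWithin
        (Icc_mem_nhdsGE_of_mem ht))
    intro t ht
    have h1 := hcst t ht
    have h2 : ψ 0 = dF z₀ := by simp [hψ, hy0]
    rw [h2] at h1
    have h3 : Real.exp (-(2*t)) * Real.exp (2*t) = 1 := by
      rw [← Real.exp_add]; ring_nf; exact Real.exp_zero
    have h4 := congrArg (· * Real.exp (2*t)) h1
    simp only [hψ] at h4
    calc dF (y t) = dF (y t) * (Real.exp (-(2*t)) * Real.exp (2*t)) := by rw [h3]; ring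
      _ = dF z₀ * Real.exp (2*t) := by rw [← mul_assoc]; exact h4
  set c2 : ℝ := ‖z₀ - p₀‖ ^ 2 with hc2
  have hc2' : 2 * dF z₀ = c2 := by rw [hdF2 z₀]; ring
  -- derivative of r t = ‖y t - p₀‖²
  set r : ℝ → ℝ := fun t => ‖y t - p₀‖ ^ 2 with hr
  have hrd : ∀ t ∈ Set.Icc (0:ℝ) τ,
      HasDerivWithinAt r (2 * ⟪y t - p₀, gradient dF (y t)⟫) (Set.Icc 0 τ) t := by
    intro t ht
    have hout : HasFDerivAt (fun w : EuclideanSpace ℝ (Fin n) => ‖w - p₀‖ ^ 2)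
        (2 • (innerSL ℝ (y t - p₀)).comp (ContinuousLinearMap.id ℝ _)) (y t) :=
      ((hasFDerivAt_id (y t)).sub_const p₀).norm_sq
    have := hout.comp_hasDerivWithinAt t (hyd t ht)
    have hval : (2 • (innerSL ℝ (y t - p₀)).comp
        (ContinuousLinearMap.id ℝ (EuclideanSpace ℝ (Fin n)))) (gradient dF (y t))
        = 2 * ⟪y t - p₀, gradient dF (y t)⟫ := by
      simp only [ContinuousLinearMap.smul_apply, ContinuousLinearMap.coe_comp',
        Function.comp_apply, ContinuousLinearMap.coe_id', id_eq, innerSL_apply_apply, smul_eq_mul,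
        nsmul_eq_mul, Nat.cast_ofNat]
    exact hval ▸ this
  -- the comparison function D
  have hexp2 : ∀ t : ℝ, HasDerivAt (fun t : ℝ => Real.exp (2*t)) (Real.exp (2*t) * 2) t := by
    intro t
    have h1 : HasDerivAt (fun t : ℝ => 2*t) (2:ℝ) t := by
      simpa using (hasDerivAt_id t).const_mul (2:ℝ)
    simpa using h1.exp
  have hexpneg : ∀ t : ℝ, HasDerivAt (fun t : ℝ => Real.exp (-t)) (Real.exp (-t) * (-1)) t := by
    intro t
    simpa using (hasDerivAt_neg t).exp
  set D : ℝ → ℝ := fun t => (r t - c2 * Real.exp (2*t)) * Real.exp (-t) with hD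
  set D' : ℝ → ℝ := fun t => ((2 * ⟪y t - p₀, gradient dF (y t)⟫) - c2 * (Real.exp (2*t) * 2))
      * Real.exp (-t) + (r t - c2 * Real.exp (2*t)) * (Real.exp (-t) * (-1)) with hD'
  have hDd : ∀ t ∈ Set.Icc (0:ℝ) τ, HasDerivWithinAt D (D' t) (Set.Icc 0 τ) t := by
    intro t ht
    exact ((hrd t ht).sub (((hexp2 t).hasDerivWithinAt).const_mul c2)).mul
      ((hexpneg t).hasDerivWithinAt)
  have hD'le : ∀ t ∈ Set.Icc (0:ℝ) τ, D' t ≤ 0 := by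
    intro t ht
    have hb : ‖gradient dF (y t)‖ ^ 2 = c2 * Real.exp (2*t) := by
      have h3 := hdF2 (y t)
      have h2 := hφeq t ht
      calc ‖gradient dF (y t)‖ ^ 2 = ‖y t - proj (y t)‖ ^ 2 := by rw [hgrad (y t)]
        _ = 2 * dF (y t) := by linarith
        _ = 2 * (dF z₀ * Real.exp (2*t)) := by rw [h2]
        _ = c2 * Real.exp (2*t) := by rw [← hc2']; ring
    have hrt : r t = ‖y t - p₀‖ ^ 2 := rfl
    have hin : 2 * ⟪y t - p₀, gradient dF (y t)⟫ ≤ r t + c2 * Real.exp (2*t) := by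
      have h1 := real_inner_le_norm (y t - p₀) (gradient dF (y t))
      nlinarith [sq_nonneg (‖y t - p₀‖ - ‖gradient dF (y t)‖)]
    have he := Real.exp_pos (-t)
    show ((2 * ⟪y t - p₀, gradient dF (y t)⟫) - c2 * (Real.exp (2*t) * 2))
      * Real.exp (-t) + (r t - c2 * Real.exp (2*t)) * (Real.exp (-t) * (-1)) ≤ 0
    have hkey := mul_le_mul_of_nonneg_right
      (by linarith : 2 * ⟪y t - p₀, gradient dF (y t)⟫ - r t - c2 * Real.exp (2*t) ≤ 0) he.le
    nlinarith [hkey]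
  have hanti : AntitoneOn D (Set.Icc (0:ℝ) τ) :=
    antitoneOn_of_hasDerivWithinAt_nonpos (convex_Icc 0 τ)
      (fun t ht => (hDd t ht).continuousWithinAt)
      (fun t ht => ((hDd t (interior_subset ht)).mono interior_subset))
      (fun t ht => hD'le t (interior_subset ht))
  have hrlow : ∀ t ∈ Set.Icc (0:ℝ) τ, c2 * Real.exp (2*t) ≤ r t := by
    intro t ht
    have h1 : Metric.infDist (y t) F ≤ dist (y t) p₀ := Metric.infDist_le_dist_of_mem (hprojF z₀)
    have h2 : (0:ℝ) ≤ Metric.infDist (y t) F := Metric.infDist_nonneg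
    have h3 : dF (y t) = (1/2) * Metric.infDist (y t) F ^ 2 := by rw [hdF]
    have h4 := hφeq t ht
    have h5 : r t = dist (y t) p₀ ^ 2 := by rw [hr, dist_eq_norm]
    have e1 : 2 * dF (y t) = c2 * Real.exp (2*t) := by rw [h4, ← hc2']; ring
    have e2 : 2 * dF (y t) = Metric.infDist (y t) F ^ 2 := by rw [h3]; ring
    nlinarith [pow_le_pow_left₀ h2 h1 2]
  have hproj_t : ∀ t ∈ Set.Icc (0:ℝ) τ, proj (y t) = p₀ := by
    intro t ht
    have hr0 : r 0 = c2 := by show ‖y 0 - p₀‖ ^ 2 = c2; rw [hy0]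
    have hD0 : D 0 = 0 := by
      show (r 0 - c2 * Real.exp (2*0)) * Real.exp (-0) = 0
      rw [hr0]; norm_num
    have hle : (r t - c2 * Real.exp (2*t)) * Real.exp (-t) ≤ 0 := by
      have := hanti (Set.left_mem_Icc.mpr hτ0.le) ht ht.1
      rw [hD0] at this
      exact this
    have he := Real.exp_pos (-t)
    have hlow := hrlow t ht
    have hreq : r t = c2 * Real.exp (2*t) := by
      have h7 : r t - c2 * Real.exp (2*t) ≤ 0 := by
        by_contra h
        push_neg at h
        nlinarith [mul_pos h he]
      linarith
    have hdist : dist (y t) p₀ = Metric.infDist (y t) F := by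
      have h1 : Metric.infDist (y t) F ≤ dist (y t) p₀ := Metric.infDist_le_dist_of_mem (hprojF z₀)
      have h2 : (0:ℝ) ≤ Metric.infDist (y t) F := Metric.infDist_nonneg
      have h3 : dF (y t) = (1/2) * Metric.infDist (y t) F ^ 2 := by rw [hdF]
      have h4 := hφeq t ht
      have h5 : r t = dist (y t) p₀ ^ 2 := by rw [hr, dist_eq_norm]
      have e1 : 2 * dF (y t) = c2 * Real.exp (2*t) := by rw [h4, ← hc2']; ring
      have e2 : 2 * dF (y t) = Metric.infDist (y t) F ^ 2 := by rw [h3]; ring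
      have hd2 : dist (y t) p₀ ^ 2 = Metric.infDist (y t) F ^ 2 := by linarith
      exact aux_sqeq dist_nonneg h2 hd2
    exact (hprojuniq (y t) p₀ (hprojF z₀) hdist).symm
  -- identify the solution as the straight ray
  have hyeq : ∀ t ∈ Set.Icc (0:ℝ) τ, y t = p₀ + Real.exp t • (z₀ - p₀) := by
    set u : ℝ → EuclideanSpace ℝ (Fin n) := fun t => Real.exp (-t) • (y t - p₀) with hu
    have hud : ∀ t ∈ Set.Icc (0:ℝ) τ, HasDerivWithinAt u 0 (Set.Icc 0 τ) t := by
      intro t ht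
      have h1 : HasDerivWithinAt (fun t => y t - p₀) (gradient dF (y t)) (Set.Icc 0 τ) t :=
        (hyd t ht).sub_const p₀
      have := ((hexpneg t).hasDerivWithinAt).smul h1
      refine this.congr_deriv ?_
      rw [hgrad (y t), hproj_t t ht]
      module
    have hcst := constant_of_has_deriv_right_zero (a := 0) (b := τ)
      (f := u) (fun t ht => (hud t ht).continuousWithinAt)
      (fun t ht => (hud t (Set.Ico_subset_Icc_self ht)).mono_of_mem_nhdsWithin
        (Icc_mem_nhdsGE_of_mem ht))
    intro t ht
    have h1 := hcst t ht
    have h2 : u 0 = z₀ - p₀ := by simp [hu, hy0]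
    rw [h2, hu] at h1
    have h3 := congrArg (Real.exp t • ·) h1
    simp only [smul_smul, ← Real.exp_add] at h3
    simp only [add_neg_cancel, Real.exp_zero, one_smul] at h3
    rw [← h3]
    abel
  exact ⟨τ, hτ0, fun t ht => by rw [← hyeq t ht]; exact hproj_t t ht⟩

set_option maxHeartbeats 1000000 in
/-- If `d_F = (1/2)·dist(·, F)²` is differentiable with locally
Lipschitz gradient (so that the nearest-point projection `proj_F` is single-valued),
then for every `x`, with `x_∞ = proj_F(x)`, one has `proj_F(x_∞ + s(x − x_∞)) = x_∞`
for all `s ≥ 0`, and consequently `⟨x − x_∞, y − x_∞⟩ ≤ 0` for every `y ∈ F`. -/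
theorem proj_along_ray_and_separation (n : ℕ) (F : Set (EuclideanSpace ℝ (Fin n)))
    (hne : F.Nonempty) (hcl : IsClosed F)
    (dF : EuclideanSpace ℝ (Fin n) → ℝ)
    (hdF : dF = fun x => (1 / 2) * Metric.infDist x F ^ 2)
    (hdiff : Differentiable ℝ dF)
    (hlip : ∀ K : Set (EuclideanSpace ℝ (Fin n)), IsCompact K →
      ∃ L : NNReal, LipschitzOnWith L (gradient dF) K)
    (proj : EuclideanSpace ℝ (Fin n) → EuclideanSpace ℝ (Fin n))
    (hprojF : ∀ x, proj x ∈ F)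
    (hprojdist : ∀ x, dist x (proj x) = Metric.infDist x F)
    (hprojuniq : ∀ x y, y ∈ F → dist x y = Metric.infDist x F → y = proj x) :
    ∀ x, (∀ s : ℝ, 0 ≤ s → proj (proj x + s • (x - proj x)) = proj x) ∧
      ∀ y ∈ F, ⟪x - proj x, y - proj x⟫ ≤ 0 := by
  have hgc := aux_cont n dF hlip
  have hgrad := aux_grad n F dF hdF hdiff proj hprojF hprojdist
  have pcont : Continuous proj := by
    have hpe : proj = fun z => z - gradient dF z := by
      funext z; rw [hgrad z]; abel
    rw [hpe]
    exact continuous_id.sub hgc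
  intro x
  set p := proj x with hp
  set v : EuclideanSpace ℝ (Fin n) := x - p with hv
  -- the segment case 0 ≤ s ≤ 1
  have hseg : ∀ s : ℝ, 0 ≤ s → s ≤ 1 → proj (p + s • v) = p := by
    intro s hs0 hs1
    have hdxp : dist x p = Metric.infDist x F := hprojdist x
    have hnv : dist x p = ‖v‖ := by rw [dist_eq_norm, hv]
    have hd1 : dist (p + s • v) p = s * ‖v‖ := by
      rw [dist_eq_norm, show p + s • v - p = s • v by abel, norm_smul]
      simp [abs_of_nonneg hs0]
    have hlow : ∀ w ∈ F, s * ‖v‖ ≤ dist (p + s • v) w := by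
      intro w hw
      have h1 : ‖v‖ ≤ dist x w := by
        rw [← hnv, hdxp]; exact Metric.infDist_le_dist_of_mem hw
      have h2 : dist x (p + s • v) = (1 - s) * ‖v‖ := by
        rw [dist_eq_norm, show x - (p + s • v) = (1 - s) • v by rw [hv]; module, norm_smul]
        simp [abs_of_nonneg (by linarith : (0:ℝ) ≤ 1 - s)]
      have h3 := dist_triangle x (p + s • v) w
      linarith
    have hinf : Metric.infDist (p + s • v) F = s * ‖v‖ := by
      refine le_antisymm ?_ ?_
      · rw [← hd1]; exact Metric.infDist_le_dist_of_mem (hprojF x)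
      · rw [Metric.infDist_eq_iInf]
        have := hne.to_subtype
        exact le_ciInf fun w => hlow w w.2
    exact (hprojuniq _ p (hprojF x) (by rw [hd1, hinf])).symm
  have hray : ∀ s : ℝ, 0 ≤ s → proj (p + s • v) = p := by
    intro s hs0
    rcases le_or_gt s 1 with hs1 | hs1
    · exact hseg s hs0 hs1
    · set A : Set ℝ := {σ | σ ∈ Set.Icc (1:ℝ) s ∧ proj (p + σ • v) = p} with hA
      have hA1 : (1:ℝ) ∈ A := ⟨⟨le_refl 1, hs1.le⟩, by
        rw [show p + (1:ℝ) • v = x by rw [one_smul, hv]; abel]⟩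
      have hAclosed : IsClosed A := by
        have : A = Set.Icc 1 s ∩ (fun σ : ℝ => proj (p + σ • v)) ⁻¹' {p} := by
          ext σ; simp [hA]
        rw [this]
        refine isClosed_Icc.inter (IsClosed.preimage ?_ isClosed_singleton)
        exact pcont.comp (continuous_const.add (continuous_id.smul continuous_const))
      have hAbdd : BddAbove A := ⟨s, fun σ hσ => hσ.1.2⟩
      have hAne : A.Nonempty := ⟨1, hA1⟩
      have hTA : sSup A ∈ A := hAclosed.csSup_mem hAne hAbdd
      set T := sSup A with hT
      have hT1 : 1 ≤ T := le_csSup hAbdd hA1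
      have hTs : T ≤ s := hTA.1.2
      rcases eq_or_lt_of_le hTs with heq | hlt
      · rw [← heq]; exact hTA.2
      · exfalso
        obtain ⟨τ, hτ0, hstep⟩ :=
          aux_step n F hne dF hdF hdiff hlip proj hprojF hprojdist hprojuniq (p + T • v)
        have hpT : proj (p + T • v) = p := hTA.2
        have hT0 : (0:ℝ) < T := by linarith
        have hst : 1 < s / T := (one_lt_div hT0).mpr hlt
        have hlog : 0 < Real.log (s / T) := Real.log_pos hst
        set t₁ : ℝ := min τ (Real.log (s / T)) with ht₁
        have ht₁0 : 0 < t₁ := lt_min hτ0 hlog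
        have hkey := hstep t₁ ⟨ht₁0.le, min_le_left _ _⟩
        rw [hpT, show p + T • v - p = T • v by abel, smul_smul] at hkey
        have hexp1 : 1 < Real.exp t₁ := Real.one_lt_exp_iff.mpr ht₁0
        have hgt : T < Real.exp t₁ * T := by nlinarith
        have hle : Real.exp t₁ * T ≤ s := by
          have h1 : Real.exp t₁ ≤ s / T := by
            calc Real.exp t₁ ≤ Real.exp (Real.log (s / T)) :=
                  Real.exp_le_exp.mpr (min_le_right _ _)
              _ = s / T := Real.exp_log (by positivity)
          calc Real.exp t₁ * T ≤ (s / T) * T := by nlinarith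
            _ = s := by field_simp
        have hmem : Real.exp t₁ * T ∈ A := ⟨⟨by nlinarith, hle⟩, hkey⟩
        exact absurd (le_csSup hAbdd hmem) (not_le.mpr hgt)
  refine ⟨hray, ?_⟩
  intro y hy
  by_contra hcon
  push_neg at hcon
  set ε : ℝ := ⟪v, y - p⟫ with hε
  have hε0 : 0 < ε := hcon
  set s₀ : ℝ := (‖p - y‖ ^ 2 + 1) / (2 * ε) with hs₀
  have hs₀0 : 0 < s₀ := by positivity
  have hp₀ := hray s₀ hs₀0.le
  have hd1 : dist (p + s₀ • v) p = Metric.infDist (p + s₀ • v) F := by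
    have := hprojdist (p + s₀ • v)
    rwa [hp₀] at this
  have hd2 : dist (p + s₀ • v) p ≤ dist (p + s₀ • v) y := by
    rw [hd1]; exact Metric.infDist_le_dist_of_mem hy
  have hsq : dist (p + s₀ • v) p ^ 2 ≤ dist (p + s₀ • v) y ^ 2 :=
    pow_le_pow_left₀ dist_nonneg hd2 2
  have he1 : dist (p + s₀ • v) p ^ 2 = ‖s₀ • v‖ ^ 2 := by
    rw [dist_eq_norm, show p + s₀ • v - p = s₀ • v by abel]
  have he2 : dist (p + s₀ • v) y ^ 2 = ‖s₀ • v‖ ^ 2 + 2 * (s₀ * ⟪v, p - y⟫) + ‖p - y‖ ^ 2 := by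
    rw [dist_eq_norm, show p + s₀ • v - y = s₀ • v + (p - y) by abel, norm_add_sq_real,
      real_inner_smul_left]
  have hip : ⟪v, p - y⟫ = -ε := by
    rw [hε, show p - y = -(y - p) by abel, inner_neg_right]
  rw [he1, he2, hip] at hsq
  have : 2 * ε * s₀ = ‖p - y‖ ^ 2 + 1 := by
    rw [hs₀]; field_simp
  nlinarith
end
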